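/- arXiv:1310.5429 — 2 statements merged into one kernel-verified Lean document; each statement's English description precedes it below -/
import Mathlib

section
/- Let X be a Banach space, ξ ≥ 1 a countable ordinal and (e_n)_n an element of SM_ξ^w(X). Then for every regular thin family ℱ with o(ℱ) ≥ ξ and every infinite subset M of ℕ there exist an infinite subset L of M and an ℱ-sequence (x_s)_{s∈ℱ} in X such that the ℱ-subsequence (x_s)_{s∈ℱ↾L} is subordinated, weakly null, and generates (e_n)_n as an ℱ-spreading model with respect to some null sequence of positive reals. -/
open Set Filter Topology

/-- `nth s i` is the `i`-th least element of the finite set `s`, 1-indexed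
(junk value `0` if `i = 0` or `i > |s|`). -/
noncomputable def nth (s : Finset ℕ) (i : ℕ) : ℕ :=
  (s.sort (· ≤ ·)).getD (i - 1) 0

/-- Characteristic function of a finite subset of ℕ. -/
def charFun (s : Finset ℕ) : ℕ → Bool := fun n => decide (n ∈ s)

/-- The topology on finite subsets of ℕ induced from the product topology on `{0,1}^ℕ`
via characteristic functions. -/
instance : TopologicalSpace (Finset ℕ) :=
  TopologicalSpace.induced charFun inferInstance

/-- A family of finite sets is compact if the corresponding set of characteristic
functions is compact in `{0,1}^ℕ`. -/
def CompactFam (F : Set (Finset ℕ)) : Prop := IsCompact (charFun '' F)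

/-- Hereditary family: closed under subsets. -/
def Hereditary (F : Set (Finset ℕ)) : Prop := ∀ s ∈ F, ∀ t, t ⊆ s → t ∈ F

/-- Spreading family. -/
def Spreading (F : Set (Finset ℕ)) : Prop :=
  ∀ s ∈ F, ∀ t : Finset ℕ, t.card = s.card →
    (∀ i, 1 ≤ i → i ≤ s.card → nth s i ≤ nth t i) → t ∈ F

/-- Regular family: compact, hereditary and spreading. -/
def RegularFam (F : Set (Finset ℕ)) : Prop := CompactFam F ∧ Hereditary F ∧ Spreading F

/-- `s` is an initial segment of `t` (possibly `s = t`). -/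
def IsInitialSegment (s t : Finset ℕ) : Prop :=
  s ⊆ t ∧ ∀ a ∈ s, ∀ b ∈ t, b ∉ s → a < b

/-- Thin family: no element is a proper initial segment of another. -/
def ThinFam (F : Set (Finset ℕ)) : Prop :=
  ∀ s ∈ F, ∀ t ∈ F, IsInitialSegment s t → s = t

/-- Regular thin family: the set of maximal elements (under inclusion) of some
regular family. -/
def RegularThin (F : Set (Finset ℕ)) : Prop :=
  ∃ R : Set (Finset ℕ), RegularFam R ∧ F = {s ∈ R | ∀ t ∈ R, s ⊆ t → s = t}

/-- The closure `ℱ̂` of a family: all subsets of its elements. -/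
def closureFam (F : Set (Finset ℕ)) : Set (Finset ℕ) := {s | ∃ t ∈ F, s ⊆ t}

/-- Restriction `ℱ↾L` of a family to the range of `L : ℕ → ℕ`. -/
def restrict (F : Set (Finset ℕ)) (L : ℕ → ℕ) : Set (Finset ℕ) :=
  {s ∈ F | ↑s ⊆ Set.range L}

/-- The order `o(ℱ)` of a regular thin family: the rank of `ℱ̂` partially ordered by
reverse inclusion; equivalently, the rank of `∅` for the relation in which the
predecessors of `t` are its strict supersets in `ℱ̂`.  (Junk value `0` if the relation
is not well-founded or `∅ ∉ ℱ̂`.) -/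
noncomputable def famOrder (F : Set (Finset ℕ)) : Ordinal := by
  classical
  exact if h : WellFounded (fun s t : closureFam F => (t : Finset ℕ) ⊂ (s : Finset ℕ)) then
    (if he : (∅ : Finset ℕ) ∈ closureFam F then (h.apply (⟨∅, he⟩ : closureFam F)).rank else 0)
  else 0

/-- Plegma family of length `l` (given as the first `l` terms of `s`). -/
def IsPlegma (l : ℕ) (s : ℕ → Finset ℕ) : Prop :=
  (∀ i < l, (s i).Nonempty) ∧
  (∀ i j, i < j → j < l → ∀ k, 1 ≤ k → k ≤ min (s i).card (s j).card →
      nth (s i) k < nth (s j) k) ∧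
  (∀ i < l, ∀ j < l, ∀ k, 1 ≤ k → k ≤ min (s i).card ((s j).card - 1) →
      nth (s i) k < nth (s j) (k + 1))

/-- The finitely supported vector `∑_{j<l} a_j e_j` in `c00 = ℕ →₀ ℝ`. -/
noncomputable def comb (a : ℕ → ℝ) (l : ℕ) : ℕ →₀ ℝ :=
  ∑ j ∈ Finset.range l, Finsupp.single j (a j)

variable {X : Type*} [NormedAddCommGroup X] [NormedSpace ℝ X]

/-- The `ℱ`-subsequence `(x_s)_{s ∈ ℱ↾M}` generates the sequence represented by the
seminorm `ρ` on `c00` as an `ℱ`-spreading model, with respect to `(δ_n)`.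
Here `M : ℕ → ℕ` is the (0-indexed) increasing enumeration of an infinite set. -/
def Generates (F : Set (Finset ℕ)) (M : ℕ → ℕ) (x : Finset ℕ → X) (δ : ℕ → ℝ)
    (ρ : Seminorm ℝ (ℕ →₀ ℝ)) : Prop :=
  ∀ k l : ℕ, 1 ≤ k → k ≤ l → ∀ a : ℕ → ℝ, (∀ j, |a j| ≤ 1) →
    ∀ s : ℕ → Finset ℕ, (∀ j < k, s j ∈ restrict F M) → IsPlegma k s →
      M l ≤ nth (s 0) 1 →
      |‖∑ j ∈ Finset.range k, a j • x (s j)‖ - ρ (comb a k)| ≤ δ l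

/-- Joint `ℱ`-model generated by a `k`-tuple `(x^0, …, x^{k-1})` of `ℱ`-sequences;
`x^{i_k(j)}` (1-indexed) corresponds to `x (j % k)` (0-indexed). -/
def JointGenerates (F : Set (Finset ℕ)) (k : ℕ) (x : ℕ → Finset ℕ → X) (M : ℕ → ℕ)
    (δ : ℕ → ℝ) (ρ : Seminorm ℝ (ℕ →₀ ℝ)) : Prop :=
  ∀ m n : ℕ, 1 ≤ m → m ≤ n → ∀ a : ℕ → ℝ, (∀ j, |a j| ≤ 1) →
    ∀ s : ℕ → Finset ℕ, (∀ j < m, s j ∈ restrict F M) → IsPlegma m s →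
      M n ≤ nth (s 0) 1 →
      |‖∑ j ∈ Finset.range m, a j • x (j % k) (s j)‖ - ρ (comb a m)| ≤ δ n

/-- The `ℱ`-subsequence `(x_s)_{s∈ℱ↾L}` is subordinated: `x` extends to a map on
`ℱ̂↾L` that is continuous into `X` with its weak topology. -/
def Subordinated (F : Set (Finset ℕ)) (L : ℕ → ℕ) (x : Finset ℕ → X) : Prop :=
  ∃ φ : Finset ℕ → X,
    Continuous (fun t : {t // t ∈ closureFam F ∧ ↑t ⊆ Set.range L} =>
      (φ (t : Finset ℕ) : WeakSpace ℝ X)) ∧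
    ∀ s ∈ restrict F L, φ s = x s

/-- The `ℱ`-subsequence `(x_s)_{s∈ℱ↾L}` is weakly null. -/
def WeaklyNull (F : Set (Finset ℕ)) (L : ℕ → ℕ) (x : Finset ℕ → X) : Prop :=
  ∀ f : X →L[ℝ] ℝ, ∀ ε : ℝ, 0 < ε → ∃ n₀ : ℕ,
    ∀ s ∈ restrict F L, n₀ ≤ nth s 1 → |f (x s)| < ε

/-- `(δ_n)` is a null sequence of positive reals. -/
def NullPos (δ : ℕ → ℝ) : Prop :=
  (∀ n, 0 < δ n) ∧ Tendsto δ atTop (𝓝 0)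

/-- `SM_ξ^w(X)`: `ρ` represents a `ξ`-order spreading model of `X` generated by a
subordinated weakly null `ℱ`-subsequence, for some regular thin `ℱ` of order `ξ`. -/
def SMw (ξ : Ordinal) (X : Type*) [NormedAddCommGroup X] [NormedSpace ℝ X]
    (ρ : Seminorm ℝ (ℕ →₀ ℝ)) : Prop :=
  ∃ F : Set (Finset ℕ), RegularThin F ∧ famOrder F = ξ ∧
    ∃ M : ℕ → ℕ, StrictMono M ∧ ∃ x : Finset ℕ → X, ∃ δ : ℕ → ℝ, NullPos δ ∧
      Subordinated F M x ∧ WeaklyNull F M x ∧ Generates F M x δ ρ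

/-- `ρ₁` is `C`-dominated by `ρ₂`. -/
def DominatedBy (C : ℝ) (ρ₁ ρ₂ : Seminorm ℝ (ℕ →₀ ℝ)) : Prop :=
  ∀ v : ℕ →₀ ℝ, ρ₁ v ≤ C * ρ₂ v

/-- Domination `ρ₁ ⪯ ρ₂`. -/
def Dom (ρ₁ ρ₂ : Seminorm ℝ (ℕ →₀ ℝ)) : Prop := ∃ C : ℝ, 0 < C ∧ DominatedBy C ρ₁ ρ₂

/-- Equivalence `ρ₁ ∼ ρ₂`. -/
def EquivSeq (ρ₁ ρ₂ : Seminorm ℝ (ℕ →₀ ℝ)) : Prop := Dom ρ₁ ρ₂ ∧ Dom ρ₂ ρ₁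

/-- Strict domination `ρ₁ ≺ ρ₂`. -/
def SDom (ρ₁ ρ₂ : Seminorm ℝ (ℕ →₀ ℝ)) : Prop := Dom ρ₁ ρ₂ ∧ ¬ EquivSeq ρ₁ ρ₂

/-- The image family `L(ℱ) = {L(s) : s ∈ ℱ}`. -/
def mapFam (L : ℕ → ℕ) (F : Set (Finset ℕ)) : Set (Finset ℕ) := (fun s => s.image L) '' F

/-- `ℋ₁ ⊑ ℋ₂`: every element of `ℋ₁` is an initial segment of an element of `ℋ₂`,
and every element of `ℋ₂` has an initial segment in `ℋ₁`. -/
def Sqsubseteq (H1 H2 : Set (Finset ℕ)) : Prop :=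
  (∀ s ∈ H1, ∃ t ∈ H2, IsInitialSegment s t) ∧ (∀ t ∈ H2, ∃ s ∈ H1, IsInitialSegment s t)

/-- The regular thin family of singletons of ℕ (of order 1). -/
def singFam : Set (Finset ℕ) := {s : Finset ℕ | s.card = 1}

/-- The set `[ℕ]^∞` of infinite subsets of ℕ. -/
def NatInf : Type := {S : Set ℕ // S.Infinite}

/-- `[ℕ]^∞` is topologized as a subspace of `{0,1}^ℕ` via characteristic functions. -/
noncomputable instance : TopologicalSpace NatInf :=
  TopologicalSpace.induced
    (fun S : NatInf => fun n : ℕ => @decide (n ∈ S.1) (Classical.dec _)) inferInstance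

/-- The (0-indexed) increasing enumeration of an infinite subset of ℕ. -/
noncomputable def enumInf (S : NatInf) (j : ℕ) : ℕ := Nat.nth (· ∈ S.1) j


set_option linter.deprecated false
set_option maxHeartbeats 1000000

namespace SMwork

lemma setOf_mem_finite (s : Finset ℕ) : (Set.ofPred (· ∈ s)).Finite := s.finite_toSet

lemma toFinset_setOf_mem (s : Finset ℕ) : (setOf_mem_finite s).toFinset = s := by
  ext x; simp [setOf_mem_finite]

lemma card_setOf_mem (s : Finset ℕ) : (setOf_mem_finite s).toFinset.card = s.card := by
  rw [toFinset_setOf_mem]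

lemma nth_eq_natNth (s : Finset ℕ) (i : ℕ) : nth s (i + 1) = Nat.nth (· ∈ s) i := by
  rw [Nat.nth_eq_getD_sort (setOf_mem_finite s), toFinset_setOf_mem]
  rfl

/-- `Nat.count (· ∈ s) n` counts elements of `s` below `n`. -/
lemma count_mem_eq (s : Finset ℕ) (n : ℕ) :
    Nat.count (· ∈ s) n = (s.filter (· < n)).card := by
  classical
  rw [Nat.count_eq_card_filter_range]
  congr 1
  ext x
  simp [and_comm]

lemma count_mono_subset {s t : Finset ℕ} (h : s ⊆ t) (n : ℕ) :
    Nat.count (· ∈ s) n ≤ Nat.count (· ∈ t) n := by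
  classical
  rw [count_mem_eq, count_mem_eq]
  exact Finset.card_le_card (fun x hx => by
    simp only [Finset.mem_filter] at hx ⊢
    exact ⟨h hx.1, hx.2⟩)

lemma nth_mem {s : Finset ℕ} {i : ℕ} (h1 : 1 ≤ i) (h2 : i ≤ s.card) : nth s i ∈ s := by
  obtain ⟨j, rfl⟩ : ∃ j, i = j + 1 := ⟨i - 1, by omega⟩
  rw [nth_eq_natNth]
  have hlt : j < (setOf_mem_finite s).toFinset.card := by rw [card_setOf_mem]; omega
  exact Nat.nth_mem_of_lt_card _ hlt

lemma nth_lt_nth {s : Finset ℕ} {i j : ℕ} (h1 : 1 ≤ i) (hij : i < j) (hj : j ≤ s.card) :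
    nth s i < nth s j := by
  obtain ⟨a, rfl⟩ : ∃ a, i = a + 1 := ⟨i - 1, by omega⟩
  obtain ⟨b, rfl⟩ : ∃ b, j = b + 1 := ⟨j - 1, by omega⟩
  rw [nth_eq_natNth, nth_eq_natNth]
  have hlt : b < (setOf_mem_finite s).toFinset.card := by rw [card_setOf_mem]; omega
  exact Nat.nth_lt_nth_of_lt_card (setOf_mem_finite s) (by omega) hlt

lemma nth_count' {s : Finset ℕ} {a : ℕ} (ha : a ∈ s) :
    Nat.nth (· ∈ s) (Nat.count (· ∈ s) a) = a := Nat.nth_count ha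

/-- Packing: the `i`-th least element of a superset is at most that of a subset. -/
lemma nth_le_of_subset {s t : Finset ℕ} (h : s ⊆ t) {i : ℕ} (h1 : 1 ≤ i) (h2 : i ≤ s.card) :
    nth t i ≤ nth s i := by
  classical
  obtain ⟨j, rfl⟩ : ∃ j, i = j + 1 := ⟨i - 1, by omega⟩
  rw [nth_eq_natNth, nth_eq_natNth]
  set a := Nat.nth (· ∈ s) j with ha
  have hmem : a ∈ s := by
    rw [ha]; rw [← nth_eq_natNth]; exact nth_mem h1 (by omega)
  have hcs : Nat.count (· ∈ s) a = j :=
    Nat.count_nth_of_lt_card_finite (setOf_mem_finite s) (by rw [card_setOf_mem]; omega)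
  have hct : j ≤ Nat.count (· ∈ t) a := by
    rw [← hcs]; exact count_mono_subset h a
  have hlt : Nat.count (· ∈ t) a < t.card := by
    have := Nat.count_lt_card (setOf_mem_finite t) (h hmem)
    rwa [card_setOf_mem] at this
  calc Nat.nth (· ∈ t) j ≤ Nat.nth (· ∈ t) (Nat.count (· ∈ t) a) :=
        Nat.nth_le_nth_of_lt_card (setOf_mem_finite t) hct (by rw [card_setOf_mem]; exact hlt)
    _ = a := Nat.nth_count (h hmem)

/-- `nth` of an image under a strictly monotone map. -/
lemma nth_image {f : ℕ → ℕ} (hf : StrictMono f) (s : Finset ℕ) {i : ℕ}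
    (h1 : 1 ≤ i) (h2 : i ≤ s.card) : nth (s.image f) i = f (nth s i) := by
  classical
  obtain ⟨j, rfl⟩ : ∃ j, i = j + 1 := ⟨i - 1, by omega⟩
  rw [nth_eq_natNth, nth_eq_natNth]
  set b := Nat.nth (· ∈ s) j with hb
  have hmem : b ∈ s := by rw [hb, ← nth_eq_natNth]; exact nth_mem h1 (by omega)
  have hcs : Nat.count (· ∈ s) b = j :=
    Nat.count_nth_of_lt_card_finite (setOf_mem_finite s) (by rw [card_setOf_mem]; omega)
  have hcimg : Nat.count (· ∈ s.image f) (f b) = j := by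
    rw [count_mem_eq]
    have : (s.image f).filter (· < f b) = (s.filter (· < b)).image f := by
      ext x
      simp only [Finset.mem_filter, Finset.mem_image]
      constructor
      · rintro ⟨⟨a, has, rfl⟩, hlt⟩
        exact ⟨a, ⟨has, hf.lt_iff_lt.mp hlt⟩, rfl⟩
      · rintro ⟨a, ⟨has, hlt⟩, rfl⟩
        exact ⟨⟨a, has, rfl⟩, hf hlt⟩
    rw [this, Finset.card_image_of_injective _ hf.injective, ← count_mem_eq, hcs]
  have : Nat.nth (· ∈ s.image f) (Nat.count (· ∈ s.image f) (f b)) = f b :=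
    Nat.nth_count (by exact Finset.mem_image_of_mem f hmem)
  rw [hcimg] at this
  exact this

/-- `nth` agreement on a "downward-closed" (initial) subset. -/
lemma nth_initial {q s : Finset ℕ} (hqs : q ⊆ s)
    (hinit : ∀ a ∈ q, ∀ b ∈ s, b ≤ a → b ∈ q) {i : ℕ} (h1 : 1 ≤ i) (h2 : i ≤ q.card) :
    nth s i = nth q i := by
  classical
  obtain ⟨j, rfl⟩ : ∃ j, i = j + 1 := ⟨i - 1, by omega⟩
  rw [nth_eq_natNth, nth_eq_natNth]
  set a := Nat.nth (· ∈ q) j with ha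
  have hmem : a ∈ q := by rw [ha, ← nth_eq_natNth]; exact nth_mem h1 (by omega)
  have hcq : Nat.count (· ∈ q) a = j :=
    Nat.count_nth_of_lt_card_finite (setOf_mem_finite q) (by rw [card_setOf_mem]; omega)
  have hcs : Nat.count (· ∈ s) a = j := by
    rw [count_mem_eq] at hcq ⊢
    rw [← hcq]
    congr 1
    ext x
    simp only [Finset.mem_filter]
    exact ⟨fun ⟨hx, hlt⟩ => ⟨hinit a hmem x hx (le_of_lt hlt), hlt⟩,
      fun ⟨hx, hlt⟩ => ⟨hqs hx, hlt⟩⟩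
  rw [← hcs]
  exact Nat.nth_count (hqs hmem)

/-- `nth s 1` is a lower bound. -/
lemma nth_one_le {s : Finset ℕ} {a : ℕ} (ha : a ∈ s) : nth s 1 ≤ a := by
  rw [show (1:ℕ) = 0 + 1 from rfl, nth_eq_natNth]
  have h0 : 0 < (setOf_mem_finite s).toFinset.card := by
    rw [card_setOf_mem]; exact Finset.card_pos.mpr ⟨a, ha⟩
  have := Nat.isLeast_nth_of_lt_card (p := (· ∈ s)) (setOf_mem_finite s) h0
  exact this.2 (by simpa using ha)

/-- top insertion: nth of `insert m u` at `u.card + 1` is `m`, when `m` is above all of `u`. -/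
lemma nth_insert_top {u : Finset ℕ} {m : ℕ} (hm : ∀ a ∈ u, a < m) :
    nth (insert m u) (u.card + 1) = m := by
  classical
  have hnot : m ∉ u := fun h => lt_irrefl m (hm m h)
  rw [nth_eq_natNth]
  have hcount : Nat.count (· ∈ insert m u) m = u.card := by
    rw [count_mem_eq]
    have : (insert m u).filter (· < m) = u := by
      ext x
      simp only [Finset.mem_filter, Finset.mem_insert]
      constructor
      · rintro ⟨rfl | hx, hlt⟩
        · omega
        · exact hx
      · intro hx; exact ⟨Or.inr hx, hm x hx⟩
    rw [this]
  rw [← hcount]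
  exact Nat.nth_count (Finset.mem_insert_self m u)

lemma nth_insert_of_le {u : Finset ℕ} {m : ℕ} (hm : ∀ a ∈ u, a < m) {i : ℕ}
    (h1 : 1 ≤ i) (h2 : i ≤ u.card) : nth (insert m u) i = nth u i := by
  classical
  exact nth_initial (Finset.subset_insert m u)
    (fun a hau b hb hba => by
      rcases Finset.mem_insert.mp hb with rfl | hbu
      · exact absurd (lt_of_lt_of_le (hm a hau) hba) (lt_irrefl _)
      · exact hbu) h1 h2

end SMwork

namespace SMwork2

open SMwork
open scoped Classical

/-- No infinite strictly increasing chain in a compact family. -/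
lemma no_chain {R : Set (Finset ℕ)} (hR : CompactFam R) (f : ℕ → Finset ℕ)
    (hf : ∀ n, f n ∈ R) (hc : ∀ n, f n ⊂ f (n + 1)) : False := by
  classical
  have hmono : ∀ {m n}, m ≤ n → f m ⊆ f n := by
    intro m n hmn
    induction n with
    | zero => cases Nat.le_zero.mp hmn; exact subset_rfl
    | succ k ih =>
      rcases Nat.lt_or_ge m (k+1) with h | h
      · exact (ih (by omega)).trans (hc k).subset
      · have : m = k + 1 := by omega
        subst this; exact subset_rfl
  set A : Set ℕ := {m | ∃ n, m ∈ f n} with hA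
  set ℓ : ℕ → Bool := fun m => decide (m ∈ A) with hℓ
  have htend : Tendsto (fun n => charFun (f n)) atTop (𝓝 ℓ) := by
    rw [tendsto_pi_nhds]
    intro m
    by_cases hm : m ∈ A
    · obtain ⟨n₀, hn₀⟩ := id hm
      have heq : ∀ n, n₀ ≤ n → charFun (f n) m = ℓ m := by
        intro n hn
        simp only [charFun, hℓ]
        rw [decide_eq_true (hmono hn hn₀), decide_eq_true hm]
      exact tendsto_const_nhds.congr'
        (eventually_atTop.mpr ⟨n₀, fun n hn => (heq n hn).symm⟩)
    · have heq : ∀ n, charFun (f n) m = ℓ m := by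
        intro n
        simp only [charFun, hℓ]
        rw [decide_eq_false (fun h => hm ⟨n, h⟩), decide_eq_false hm]
      exact Tendsto.congr (fun n => (heq n).symm) tendsto_const_nhds
  have hclosed : IsClosed (charFun '' R) := hR.isClosed
  have hmem : ℓ ∈ charFun '' R :=
    hclosed.mem_of_tendsto htend (Eventually.of_forall (fun n => ⟨f n, hf n, rfl⟩))
  obtain ⟨t, _, ht⟩ := hmem
  have hsub : ∀ n, f n ⊆ t := by
    intro n x hx
    have hx2 : ℓ x = true := by rw [hℓ]; exact decide_eq_true ⟨n, hx⟩
    rw [← ht] at hx2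
    simpa [charFun] using hx2
  have hcard : ∀ n, n ≤ (f n).card := by
    intro n
    induction n with
    | zero => omega
    | succ k ih => have := Finset.card_lt_card (hc k); omega
  have h1 := hcard (t.card + 1)
  have h2 := Finset.card_le_card (hsub (t.card + 1))
  omega

/-- Every element of a compact family is contained in a maximal element. -/
lemma exists_maximal {R : Set (Finset ℕ)} (hR : CompactFam R) {r : Finset ℕ} (hr : r ∈ R) :
    ∃ t, t ∈ R ∧ r ⊆ t ∧ ∀ u ∈ R, t ⊆ u → t = u := by
  by_contra hcon
  push_neg at hcon
  have step : ∀ t : {t // t ∈ R ∧ r ⊆ t}, ∃ u : {t // t ∈ R ∧ r ⊆ t}, t.1 ⊂ u.1 := by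
    rintro ⟨t, htR, hrt⟩
    obtain ⟨u, huR, htu, hne⟩ := hcon t htR hrt
    exact ⟨⟨u, huR, hrt.trans htu⟩, ssubset_of_ne_of_subset (by simpa using hne) htu⟩
  choose next hnext using step
  let g : ℕ → {t // t ∈ R ∧ r ⊆ t} := fun n => Nat.rec ⟨r, hr, subset_rfl⟩ (fun _ t => next t) n
  exact no_chain hR (fun n => (g n).1) (fun n => (g n).2.1) (fun n => hnext (g n))

/-- The closure of the set of maximal elements of a compact hereditary family is the family. -/
lemma closure_max_eq {R : Set (Finset ℕ)} (hcomp : CompactFam R)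
    (hher : Hereditary R) :
    closureFam {s ∈ R | ∀ t ∈ R, s ⊆ t → s = t} = R := by
  ext u
  constructor
  · rintro ⟨t, ⟨htR, _⟩, hut⟩
    exact hher t htR u hut
  · intro huR
    obtain ⟨t, htR, hut, hmax⟩ := exists_maximal hcomp huR
    exact ⟨t, ⟨htR, hmax⟩, hut⟩

section Rank

variable {C : Set (Finset ℕ)}

/-- The strict-superset relation on a family. -/
def srel (C : Set (Finset ℕ)) : C → C → Prop :=
  fun s t => (t : Finset ℕ) ⊂ (s : Finset ℕ)

variable (hwf : WellFounded (srel C))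

/-- rank of an element of the family. -/
noncomputable def rnk (u : C) : Ordinal := (hwf.apply u).rank

lemma rnk_lt {u v : C} (h : (u : Finset ℕ) ⊂ (v : Finset ℕ)) : rnk hwf v < rnk hwf u :=
  Acc.rank_lt_of_rel (hwf.apply u) (h : srel C v u)

lemma rnk_le {u v : C} (h : (u : Finset ℕ) ⊆ (v : Finset ℕ)) : rnk hwf v ≤ rnk hwf u := by
  rcases eq_or_ne (u : Finset ℕ) (v : Finset ℕ) with he | hne
  · have : u = v := Subtype.ext he
    rw [this]
  · exact le_of_lt (rnk_lt hwf (ssubset_of_ne_of_subset hne h))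

lemma succ_rnk_le {u v : C} (h : (u : Finset ℕ) ⊂ (v : Finset ℕ)) :
    rnk hwf v + 1 ≤ rnk hwf u := by
  rw [Ordinal.add_one_eq_succ, Order.succ_le_iff]
  exact rnk_lt hwf h

lemma exists_of_rank_succ {u : C} {β : Ordinal} (h : β + 1 ≤ rnk hwf u) :
    ∃ v : C, (u : Finset ℕ) ⊂ (v : Finset ℕ) ∧ β ≤ rnk hwf v := by
  by_contra hcon
  push_neg at hcon
  have hle : rnk hwf u ≤ β := by
    show (hwf.apply u).rank ≤ β
    rw [Acc.rank_eq]
    apply Ordinal.iSup_le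
    rintro ⟨b, hb⟩
    rw [Order.succ_le_iff]
    exact hcon b hb
  rw [Ordinal.add_one_eq_succ, Order.succ_le_iff] at h
  exact absurd (lt_of_lt_of_le h hle) (lt_irrefl _)

/-- nth of a union with a finset of strictly larger elements. -/
lemma nth_union_high_low {v e : Finset ℕ} (hlt : ∀ a ∈ v, ∀ b ∈ e, a < b) :
    ∀ i, 1 ≤ i → i ≤ v.card → nth (v ∪ e) i = nth v i := by
  intro i h1 h2
  exact nth_initial (Finset.subset_union_left)
    (fun a ha b hb hba => by
      rcases Finset.mem_union.mp hb with h | h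
      · exact h
      · exact absurd (lt_of_lt_of_le (hlt a ha b h) hba) (lt_irrefl _)) h1 h2

lemma nth_union_high_top {v e : Finset ℕ} (hlt : ∀ a ∈ v, ∀ b ∈ e, a < b) :
    ∀ j, 1 ≤ j → j ≤ e.card → nth (v ∪ e) (v.card + j) = nth e j := by
  classical
  intro j h1 h2
  obtain ⟨j', rfl⟩ : ∃ j', j = j' + 1 := ⟨j - 1, by omega⟩
  have hbmem : nth e (j' + 1) ∈ e := nth_mem h1 h2
  set a := nth e (j' + 1) with hadef
  have hcount : Nat.count (· ∈ v ∪ e) a = v.card + j' := by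
    rw [count_mem_eq]
    have hfe : (v ∪ e).filter (· < a) = v ∪ (e.filter (· < a)) := by
      ext x
      simp only [Finset.mem_filter, Finset.mem_union]
      constructor
      · rintro ⟨h | h, hlt'⟩
        · exact Or.inl h
        · exact Or.inr ⟨h, hlt'⟩
      · rintro (h | ⟨h, hlt'⟩)
        · exact ⟨Or.inl h, hlt x h _ hbmem⟩
        · exact ⟨Or.inr h, hlt'⟩
    have hdisj : Disjoint v (e.filter (· < a)) := by
      rw [Finset.disjoint_left]
      intro x hxv hxe
      have := hlt x hxv x (Finset.mem_of_mem_filter x hxe)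
      exact absurd this (lt_irrefl _)
    rw [hfe, Finset.card_union_of_disjoint hdisj]
    congr 1
    have hcnt := Nat.count_nth_of_lt_card_finite (p := (· ∈ e)) (setOf_mem_finite e)
      (n := j') (by rw [card_setOf_mem]; omega)
    rw [count_mem_eq] at hcnt
    have ha2 : Nat.nth (· ∈ e) j' = a := by rw [hadef, nth_eq_natNth]
    rwa [ha2] at hcnt
  have hmem2 : a ∈ v ∪ e := Finset.mem_union_right v hbmem
  have := Nat.nth_count (p := (· ∈ v ∪ e)) hmem2
  rw [hcount] at this
  have hgoal : nth (v ∪ e) (v.card + (j' + 1)) = Nat.nth (· ∈ v ∪ e) (v.card + j') := by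
    rw [show v.card + (j' + 1) = (v.card + j') + 1 by omega, nth_eq_natNth]
  rw [hgoal, this]

/-- Lemma A: rank is monotone under pointwise domination (spreading). -/
lemma rnk_mono_dominate (hher : Hereditary C) (hspr : Spreading C) :
    ∀ u : C, ∀ v : C, (v : Finset ℕ).card = (u : Finset ℕ).card →
      (∀ i, 1 ≤ i → i ≤ (u : Finset ℕ).card → nth u i ≤ nth v i) →
      rnk hwf u ≤ rnk hwf v := by
  intro u
  induction u using hwf.induction with
  | _ u IH =>
  intro v hcard hdom
  show (hwf.apply u).rank ≤ (hwf.apply v).rank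
  rw [Acc.rank_eq (hwf.apply u)]
  apply Ordinal.iSup_le
  rintro ⟨⟨w, hwC⟩, hrel⟩
  have huw : (u : Finset ℕ) ⊂ w := hrel
  -- construct w' := v ∪ e with e fresh high elements
  classical
  set d := w.card - (u : Finset ℕ).card with hd
  have hdpos : 1 ≤ d := by
    have h1 := Finset.card_lt_card huw
    omega
  set N := (w ∪ (v : Finset ℕ)).sup id + 1 with hN
  have hNw : ∀ a ∈ w, a < N := fun a ha => by
    have : a ≤ (w ∪ (v : Finset ℕ)).sup id :=
      Finset.le_sup (f := id) (Finset.mem_union_left _ ha)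
    omega
  have hNv : ∀ a ∈ (v : Finset ℕ), a < N := fun a ha => by
    have : a ≤ (w ∪ (v : Finset ℕ)).sup id :=
      Finset.le_sup (f := id) (Finset.mem_union_right _ ha)
    omega
  set e := (Finset.range d).image (fun i => N + i) with he
  have hecard : e.card = d := by
    rw [he, Finset.card_image_of_injective _ (fun a b hab => by omega), Finset.card_range]
  have hve : ∀ a ∈ (v : Finset ℕ), ∀ b ∈ e, a < b := by
    intro a ha b hb
    rw [he] at hb
    obtain ⟨i, _, rfl⟩ := Finset.mem_image.mp hb
    have := hNv a ha
    omega
  set w' := (v : Finset ℕ) ∪ e with hw'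
  have hdisj : Disjoint (v : Finset ℕ) e := by
    rw [Finset.disjoint_left]
    intro x hxv hxe
    exact absurd (hve x hxv x hxe) (lt_irrefl _)
  have hw'card : w'.card = w.card := by
    rw [hw', Finset.card_union_of_disjoint hdisj, hecard, hcard, hd]
    have := Finset.card_le_card huw.subset
    omega
  -- w' dominates w
  have hvcard : (v : Finset ℕ).card = (u : Finset ℕ).card := hcard
  have hdomw : ∀ i, 1 ≤ i → i ≤ w.card → nth w i ≤ nth w' i := by
    intro i h1 h2
    rcases le_or_gt i (u : Finset ℕ).card with hle | hgt
    · have e1 : nth w' i = nth v i := nth_union_high_low hve i h1 (by omega)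
      have e2 : nth u i ≤ nth v i := hdom i h1 hle
      have e3 : nth w i ≤ nth u i := nth_le_of_subset huw.subset h1 hle
      omega
    · have hj1 : 1 ≤ i - (v : Finset ℕ).card := by omega
      have hj2 : i - (v : Finset ℕ).card ≤ e.card := by
        rw [hecard]
        have := Finset.card_le_card huw.subset
        omega
      have e1 : nth w' i = nth e (i - (v : Finset ℕ).card) := by
        have := nth_union_high_top hve (i - (v : Finset ℕ).card) hj1 hj2
        rwa [show (v : Finset ℕ).card + (i - (v : Finset ℕ).card) = i by omega] at this
      have e2 : N ≤ nth e (i - (v : Finset ℕ).card) := by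
        have hm := nth_mem (s := e) hj1 hj2
        have hm' : nth e (i - (v : Finset ℕ).card) ∈
            (Finset.range d).image (fun i => N + i) := by rw [← he]; exact hm
        obtain ⟨i', _, hi'⟩ := Finset.mem_image.mp hm'
        omega
      have e3 : nth w i < N := hNw _ (nth_mem h1 h2)
      omega
  have hw'C : w' ∈ C := hspr w hwC w' hw'card hdomw
  have hvw' : (v : Finset ℕ) ⊂ w' := by
    rw [hw']
    refine Finset.ssubset_iff_of_subset Finset.subset_union_left |>.mpr ?_
    refine ⟨N, Finset.mem_union_right _ ?_, fun hNv' => absurd (hNv N hNv') (lt_irrefl _)⟩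
    rw [he]
    exact Finset.mem_image.mpr ⟨0, Finset.mem_range.mpr (by omega), by omega⟩
  have hIH : (hwf.apply (⟨w, hwC⟩ : C)).rank ≤ (hwf.apply (⟨w', hw'C⟩ : C)).rank :=
    IH ⟨w, hwC⟩ hrel ⟨w', hw'C⟩ hw'card hdomw
  have hlt2 : (hwf.apply (⟨w', hw'C⟩ : C)).rank < (hwf.apply v).rank := rnk_lt hwf (u := v) hvw'
  rw [Order.succ_le_iff]
  exact lt_of_le_of_lt hIH hlt2

/-- Lemma B: pushing up rank through insertion of one large element. -/
lemma rnk_insert_of_succ_le (hher : Hereditary C) (hspr : Spreading C)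
    {u : C} {β : Ordinal} (h : β + 1 ≤ rnk hwf u) :
    ∃ m₀, ∀ m, m₀ ≤ m → (∀ a ∈ (u : Finset ℕ), a < m) ∧
      ∃ hmem : insert m (u : Finset ℕ) ∈ C,
        β ≤ rnk hwf (⟨insert m (u : Finset ℕ), hmem⟩ : C) := by
  classical
  obtain ⟨v, huv, hv⟩ := exists_of_rank_succ hwf h
  have hne : ((v : Finset ℕ) \ (u : Finset ℕ)).Nonempty := by
    rw [Finset.sdiff_nonempty]
    exact fun hsub => huv.not_subset hsub
  set e₁ := ((v : Finset ℕ) \ (u : Finset ℕ)).min' hne with he₁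
  have he₁v : e₁ ∈ (v : Finset ℕ) := (Finset.mem_sdiff.mp (Finset.min'_mem _ hne)).1
  have he₁u : e₁ ∉ (u : Finset ℕ) := (Finset.mem_sdiff.mp (Finset.min'_mem _ hne)).2
  set w : Finset ℕ := insert e₁ (u : Finset ℕ) with hw
  have hwv : w ⊆ (v : Finset ℕ) := by
    rw [hw]
    exact Finset.insert_subset he₁v huv.subset
  have hwC : w ∈ C := hher v v.2 w hwv
  have hrw : β ≤ rnk hwf (⟨w, hwC⟩ : C) :=
    le_trans hv (rnk_le hwf (u := ⟨w, hwC⟩) (v := v) hwv)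
  set B := (u : Finset ℕ).sup id with hB
  refine ⟨max (e₁ + 1) (B + 1), fun m hm => ?_⟩
  have hmu : ∀ a ∈ (u : Finset ℕ), a < m := by
    intro a ha
    have : a ≤ B := Finset.le_sup (f := id) ha
    omega
  have hmnotin : m ∉ (u : Finset ℕ) := fun hmem => absurd (hmu m hmem) (lt_irrefl _)
  have hcard : (insert m (u : Finset ℕ)).card = w.card := by
    rw [hw, Finset.card_insert_of_notMem hmnotin, Finset.card_insert_of_notMem he₁u]
  have hwelt : ∀ a ∈ w, a ≤ max e₁ B := by
    intro a ha
    rw [hw] at ha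
    rcases Finset.mem_insert.mp ha with rfl | hau
    · exact le_max_left _ _
    · exact le_trans (Finset.le_sup (f := id) hau) (le_max_right _ _)
  have hdom : ∀ i, 1 ≤ i → i ≤ w.card → nth w i ≤ nth (insert m (u : Finset ℕ)) i := by
    intro i h1 h2
    have hwcard : w.card = (u : Finset ℕ).card + 1 := by
      rw [hw, Finset.card_insert_of_notMem he₁u]
    rcases le_or_gt i (u : Finset ℕ).card with hle | hgt
    · have e2 : nth (insert m (u : Finset ℕ)) i = nth u i := nth_insert_of_le hmu h1 hle
      have e3 : nth w i ≤ nth u i :=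
        nth_le_of_subset (Finset.subset_insert e₁ (u : Finset ℕ)) h1 hle
      omega
    · have hi : i = (u : Finset ℕ).card + 1 := by omega
      have e2 : nth (insert m (u : Finset ℕ)) i = m := by rw [hi]; exact nth_insert_top hmu
      have e3 : nth w i ≤ max e₁ B := hwelt _ (nth_mem h1 h2)
      omega
  have hmemC : insert m (u : Finset ℕ) ∈ C := hspr w hwC _ hcard hdom
  refine ⟨hmu, hmemC, ?_⟩
  exact le_trans hrw (rnk_mono_dominate hwf hher hspr ⟨w, hwC⟩ (⟨insert m (u : Finset ℕ), hmemC⟩ : C) hcard hdom)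

end Rank

section Thresholds

variable {C : Set (Finset ℕ)}

/-- total rank. -/
noncomputable def rnkT (C : Set (Finset ℕ)) (hwf : WellFounded (srel C)) (u : Finset ℕ) :
    Ordinal := if h : u ∈ C then rnk hwf ⟨u, h⟩ else 0

lemma rnkT_eq (hwf : WellFounded (srel C)) {u : Finset ℕ} (h : u ∈ C) :
    rnkT C hwf u = rnk hwf ⟨u, h⟩ := dif_pos h

lemma exists_insert_all (hwf : WellFounded (srel C)) (hher : Hereditary C)
    (hspr : Spreading C) {w : Finset ℕ}
    (hw : w ∈ C) (hnm : ∃ v ∈ C, w ⊂ v) : ∃ m₀, ∀ m, m₀ ≤ m → insert m w ∈ C := by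
  obtain ⟨v, hvC, hwv⟩ := hnm
  have h1 : (0 : Ordinal) + 1 ≤ rnk hwf ⟨w, hw⟩ := by
    have h2 := succ_rnk_le hwf (u := ⟨w, hw⟩) (v := ⟨v, hvC⟩) hwv
    calc (0 : Ordinal) + 1 ≤ rnk hwf ⟨v, hvC⟩ + 1 := by
          exact add_le_add_left zero_le 1
      _ ≤ rnk hwf ⟨w, hw⟩ := h2
  obtain ⟨m₀, hm₀⟩ := rnk_insert_of_succ_le hwf hher hspr h1
  exact ⟨m₀, fun m hm => (hm₀ m hm).2.1⟩

/-- Threshold guaranteeing insertion stays in the family. -/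
noncomputable def needIns (hwf : WellFounded (srel C)) (hher : Hereditary C)
    (hspr : Spreading C) (w : Finset ℕ) : ℕ :=
  if h : w ∈ C ∧ ∃ v ∈ C, w ⊂ v then
    Classical.choose (exists_insert_all hwf hher hspr h.1 h.2) else 0

lemma needIns_spec (hwf : WellFounded (srel C)) (hher : Hereditary C) (hspr : Spreading C)
    {w : Finset ℕ} (hw : w ∈ C) (hnm : ∃ v ∈ C, w ⊂ v) :
    ∀ m, needIns hwf hher hspr w ≤ m → insert m w ∈ C := by
  intro m hm
  rw [needIns, dif_pos ⟨hw, hnm⟩] at hm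
  exact Classical.choose_spec (exists_insert_all hwf hher hspr hw hnm) m hm

/-- Threshold guaranteeing insertion keeps rank at least `β`. -/
noncomputable def thrIns (hwf : WellFounded (srel C)) (hher : Hereditary C)
    (hspr : Spreading C) (u : Finset ℕ) (β : Ordinal) : ℕ :=
  if h : ∃ hu : u ∈ C, β + 1 ≤ rnk hwf ⟨u, hu⟩ then
    Classical.choose (rnk_insert_of_succ_le hwf hher hspr h.choose_spec) else 0

lemma thrIns_spec (hwf : WellFounded (srel C)) (hher : Hereditary C) (hspr : Spreading C)
    {u : Finset ℕ} {β : Ordinal}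
    (hu : u ∈ C) (hβ : β + 1 ≤ rnk hwf ⟨u, hu⟩) :
    ∀ m, thrIns hwf hher hspr u β ≤ m → (∀ a ∈ u, a < m) ∧
      ∃ hm : insert m u ∈ C, β ≤ rnk hwf ⟨insert m u, hm⟩ := by
  intro m hm
  have h : ∃ hu : u ∈ C, β + 1 ≤ rnk hwf ⟨u, hu⟩ := ⟨hu, hβ⟩
  rw [thrIns, dif_pos h] at hm
  exact Classical.choose_spec (rnk_insert_of_succ_le hwf hher hspr h.choose_spec) m hm

end Thresholds

section Fusion

variable {Cf CG : Set (Finset ℕ)}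
variable (hwfF : WellFounded (srel Cf)) (hwfG : WellFounded (srel CG))
variable (hherF : Hereditary Cf) (hsprF : Spreading Cf)
variable (hherG : Hereditary CG) (hsprG : Spreading CG)
variable (M M' : ℕ → ℕ)

lemma exTheta (hherG : Hereditary CG) (hsprG : Spreading CG) (hM' : StrictMono M')
    (prev : Finset ℕ) (π : ℕ) :
    ∃ θ, θ ∈ Set.range M' ∧ M' π ≤ θ ∧ (∀ a ∈ prev, a < θ) ∧
      ∀ w ∈ prev.powerset, needIns hwfG hherG hsprG w ≤ θ := by
  classical
  set B := max (max π (prev.sup id + 1)) (prev.powerset.sup (needIns hwfG hherG hsprG)) with hB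
  refine ⟨M' B, ⟨B, rfl⟩, ?_, ?_, ?_⟩
  · exact hM'.monotone (by omega)
  · intro a ha
    have h1 : a ≤ prev.sup id := Finset.le_sup (f := id) ha
    have h2 : B ≤ M' B := hM'.le_apply
    omega
  · intro w hw
    have h1 : needIns hwfG hherG hsprG w ≤ prev.powerset.sup (needIns hwfG hherG hsprG) :=
      Finset.le_sup hw
    have h2 : B ≤ M' B := hM'.le_apply
    omega

/-- The Θ-side fusion sequence: value and set of previous values. -/
noncomputable def thetaS (hherG : Hereditary CG) (hsprG : Spreading CG) (hM' : StrictMono M') :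
    ℕ → ℕ × Finset ℕ
  | 0 => ((exTheta hwfG M' hherG hsprG hM' ∅ 0).choose, ∅)
  | (π+1) =>
    let p := thetaS hherG hsprG hM' π
    ((exTheta hwfG M' hherG hsprG hM' (insert p.1 p.2) (π+1)).choose, insert p.1 p.2)

variable (hM : StrictMono M) (hM' : StrictMono M')

/-- Θ itself. -/
noncomputable def theta (π : ℕ) : ℕ := (thetaS hwfG M' hherG hsprG hM' π).1

lemma thetaS_snd_eq :
    ∀ π, (thetaS hwfG M' hherG hsprG hM' π).2 =
      (Finset.range π).image (theta hwfG hherG hsprG M' hM') := by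
  intro π
  induction π with
  | zero => simp [thetaS]
  | succ k ih =>
    show insert _ _ = _
    rw [ih, Finset.range_add_one, Finset.image_insert]
    rfl

lemma theta_spec (π : ℕ) :
    theta hwfG hherG hsprG M' hM' π ∈ Set.range M' ∧
    M' π ≤ theta hwfG hherG hsprG M' hM' π ∧
    (∀ a ∈ (Finset.range π).image (theta hwfG hherG hsprG M' hM'), a < theta hwfG hherG hsprG M' hM' π) ∧
    ∀ w ∈ ((Finset.range π).image (theta hwfG hherG hsprG M' hM')).powerset,
      needIns hwfG hherG hsprG w ≤ theta hwfG hherG hsprG M' hM' π := by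
  have h := thetaS_snd_eq hwfG hherG hsprG M' hM'
  cases π with
  | zero =>
    have := (exTheta hwfG M' hherG hsprG hM' ∅ 0).choose_spec
    simpa [theta, thetaS] using this
  | succ k =>
    have hs := (exTheta hwfG M' hherG hsprG hM'
      (insert (thetaS hwfG M' hherG hsprG hM' k).1 (thetaS hwfG M' hherG hsprG hM' k).2)
      (k+1)).choose_spec
    have he : insert (thetaS hwfG M' hherG hsprG hM' k).1 (thetaS hwfG M' hherG hsprG hM' k).2
        = (Finset.range (k+1)).image (theta hwfG hherG hsprG M' hM') := by
      rw [h k, Finset.range_add_one, Finset.image_insert]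
      rfl
    have ht : theta hwfG hherG hsprG M' hM' (k+1) = (exTheta hwfG M' hherG hsprG hM'
      (insert (thetaS hwfG M' hherG hsprG hM' k).1 (thetaS hwfG M' hherG hsprG hM' k).2)
      (k+1)).choose := rfl
    rw [ht, ← he]
    exact hs

lemma theta_strictMono : StrictMono (theta hwfG hherG hsprG M' hM') := by
  apply strictMono_nat_of_lt_succ
  intro n
  have := (theta_spec hwfG hherG hsprG M' hM' (n+1)).2.2.1
  exact this _ (Finset.mem_image.mpr ⟨n, Finset.mem_range.mpr (by omega), rfl⟩)

end Fusion

section SigmaFusion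

variable {Cf CG : Set (Finset ℕ)}
variable (hwfF : WellFounded (srel Cf)) (hwfG : WellFounded (srel CG))
variable (hherF : Hereditary Cf) (hsprF : Spreading Cf)
variable (hherG : Hereditary CG) (hsprG : Spreading CG)
variable (M M' : ℕ → ℕ) (hM' : StrictMono M')

lemma exSigma (π : ℕ) (prevσ : ℕ) (pf : ℕ → ℕ) :
    ∃ s : ℕ, prevσ < s ∧ ∀ q' ∈ (Finset.range π).powerset,
      thrIns hwfF hherF hsprF (q'.image pf)
        (rnkT CG hwfG (insert (theta hwfG hherG hsprG M' hM' π)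
          (q'.image (theta hwfG hherG hsprG M' hM')))) ≤ s := by
  classical
  set T := (Finset.range π).powerset.sup (fun q' => thrIns hwfF hherF hsprF (q'.image pf)
        (rnkT CG hwfG (insert (theta hwfG hherG hsprG M' hM' π)
          (q'.image (theta hwfG hherG hsprG M' hM'))))) with hT
  refine ⟨max (prevσ + 1) T, by omega, ?_⟩
  intro q' hq'
  have h1 : thrIns hwfF hherF hsprF (q'.image pf)
      (rnkT CG hwfG (insert (theta hwfG hherG hsprG M' hM' π)
        (q'.image (theta hwfG hherG hsprG M' hM')))) ≤ T :=
    Finset.le_sup (f := fun q' => thrIns hwfF hherF hsprF (q'.image pf)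
      (rnkT CG hwfG (insert (theta hwfG hherG hsprG M' hM' π)
        (q'.image (theta hwfG hherG hsprG M' hM'))))) hq'
  omega

/-- The σ-side fusion: value and prefix of `L`-values. -/
noncomputable def sigmaS : ℕ → ℕ × (ℕ → ℕ)
  | 0 => ((exSigma hwfF hwfG hherF hsprF hherG hsprG M' hM' 0 0 (fun _ => 0)).choose,
          fun _ => 0)
  | (π+1) =>
    let p := sigmaS π
    ((exSigma hwfF hwfG hherF hsprF hherG hsprG M' hM' (π+1) p.1
        (Function.update p.2 π (M p.1))).choose,
      Function.update p.2 π (M p.1))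

/-- σ and L. -/
noncomputable def sigma (π : ℕ) : ℕ :=
  (sigmaS hwfF hwfG hherF hsprF hherG hsprG M M' hM' π).1

noncomputable def Lfun (π : ℕ) : ℕ :=
  M (sigma hwfF hwfG hherF hsprF hherG hsprG M M' hM' π)

lemma sigmaS_prefix :
    ∀ π j, j < π → (sigmaS hwfF hwfG hherF hsprF hherG hsprG M M' hM' π).2 j =
      Lfun hwfF hwfG hherF hsprF hherG hsprG M M' hM' j := by
  intro π
  induction π with
  | zero => intro j hj; omega
  | succ k ih =>
    intro j hj
    show Function.update (sigmaS hwfF hwfG hherF hsprF hherG hsprG M M' hM' k).2 k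
        (M (sigmaS hwfF hwfG hherF hsprF hherG hsprG M M' hM' k).1) j = _
    rcases eq_or_ne j k with rfl | hne
    · rw [Function.update_self]
      rfl
    · rw [Function.update_of_ne hne]
      exact ih j (by omega)

lemma sigma_strictMono : StrictMono (sigma hwfF hwfG hherF hsprF hherG hsprG M M' hM') := by
  apply strictMono_nat_of_lt_succ
  intro n
  exact (exSigma hwfF hwfG hherF hsprF hherG hsprG M' hM' (n+1)
    (sigmaS hwfF hwfG hherF hsprF hherG hsprG M M' hM' n).1
    (Function.update (sigmaS hwfF hwfG hherF hsprF hherG hsprG M M' hM' n).2 n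
      (M (sigmaS hwfF hwfG hherF hsprF hherG hsprG M M' hM' n).1))).choose_spec.1

lemma Lfun_strictMono (hM : StrictMono M) :
    StrictMono (Lfun hwfF hwfG hherF hsprF hherG hsprG M M' hM') :=
  fun _ _ h => hM (sigma_strictMono hwfF hwfG hherF hsprF hherG hsprG M M' hM' h)

lemma sigma_spec (hM : StrictMono M) (π : ℕ) :
    ∀ q' ∈ (Finset.range π).powerset,
      thrIns hwfF hherF hsprF (q'.image (Lfun hwfF hwfG hherF hsprF hherG hsprG M M' hM'))
        (rnkT CG hwfG (insert (theta hwfG hherG hsprG M' hM' π)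
          (q'.image (theta hwfG hherG hsprG M' hM')))) ≤
        Lfun hwfF hwfG hherF hsprF hherG hsprG M M' hM' π := by
  intro q' hq'
  have hlt : ∀ j ∈ q', j < π := fun j hj =>
    Finset.mem_range.mp (Finset.mem_powerset.mp hq' hj)
  cases π with
  | zero =>
    have : q' = ∅ := by
      rw [Finset.eq_empty_iff_forall_notMem]
      intro j hj
      exact absurd (hlt j hj) (by omega)
    subst this
    have hs := (exSigma hwfF hwfG hherF hsprF hherG hsprG M' hM' 0 0
      (fun _ => 0)).choose_spec.2 ∅ (by simp)
    have hL0 : Lfun hwfF hwfG hherF hsprF hherG hsprG M M' hM' 0 =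
        M (exSigma hwfF hwfG hherF hsprF hherG hsprG M' hM' 0 0 (fun _ => 0)).choose := rfl
    have hMle : (exSigma hwfF hwfG hherF hsprF hherG hsprG M' hM' 0 0 (fun _ => 0)).choose ≤
        M (exSigma hwfF hwfG hherF hsprF hherG hsprG M' hM' 0 0 (fun _ => 0)).choose :=
      hM.le_apply
    rw [hL0]
    simp only [Finset.image_empty] at hs ⊢
    omega
  | succ k =>
    set p := sigmaS hwfF hwfG hherF hsprF hherG hsprG M M' hM' k with hp
    have hs := (exSigma hwfF hwfG hherF hsprF hherG hsprG M' hM' (k+1) p.1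
      (Function.update p.2 k (M p.1))).choose_spec.2 q' hq'
    have himg : q'.image (Function.update p.2 k (M p.1)) =
        q'.image (Lfun hwfF hwfG hherF hsprF hherG hsprG M M' hM') := by
      apply Finset.image_congr
      intro j hj
      have hjk : j < k + 1 := hlt j hj
      have := sigmaS_prefix hwfF hwfG hherF hsprF hherG hsprG M M' hM' (k+1) j hjk
      exact this
    rw [himg] at hs
    have hLk : Lfun hwfF hwfG hherF hsprF hherG hsprG M M' hM' (k+1) =
        M (exSigma hwfF hwfG hherF hsprF hherG hsprG M' hM' (k+1) p.1
          (Function.update p.2 k (M p.1))).choose := rfl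
    have hMle : (exSigma hwfF hwfG hherF hsprF hherG hsprG M' hM' (k+1) p.1
          (Function.update p.2 k (M p.1))).choose ≤
        M (exSigma hwfF hwfG hherF hsprF hherG hsprG M' hM' (k+1) p.1
          (Function.update p.2 k (M p.1))).choose := hM.le_apply
    rw [hLk]
    omega

/-- No-stall property of Θ. -/
lemma fusion_nostall (π : ℕ) (w : Finset ℕ)
    (hsub : w ⊆ (Finset.range π).image (theta hwfG hherG hsprG M' hM'))
    (hwC : w ∈ CG) (hnm : ∃ v ∈ CG, w ⊂ v) :
    insert (theta hwfG hherG hsprG M' hM' π) w ∈ CG := by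
  have hneed := (theta_spec hwfG hherG hsprG M' hM' π).2.2.2 w (Finset.mem_powerset.mpr hsub)
  exact needIns_spec hwfG hherG hsprG hwC hnm _ hneed

/-- The key step: transferring rank domination through one insertion. -/
lemma fusion_step (hM : StrictMono M) (π : ℕ) (q' : Finset ℕ) (hq' : ∀ j ∈ q', j < π)
    (hu : q'.image (Lfun hwfF hwfG hherF hsprF hherG hsprG M M' hM') ∈ Cf)
    (hwi : insert (theta hwfG hherG hsprG M' hM' π)
      (q'.image (theta hwfG hherG hsprG M' hM')) ∈ CG)
    (hle : rnkT CG hwfG (q'.image (theta hwfG hherG hsprG M' hM')) ≤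
      rnkT Cf hwfF (q'.image (Lfun hwfF hwfG hherF hsprF hherG hsprG M M' hM'))) :
    ∃ hui : insert (Lfun hwfF hwfG hherF hsprF hherG hsprG M M' hM' π)
        (q'.image (Lfun hwfF hwfG hherF hsprF hherG hsprG M M' hM')) ∈ Cf,
      rnkT CG hwfG (insert (theta hwfG hherG hsprG M' hM' π)
          (q'.image (theta hwfG hherG hsprG M' hM'))) ≤
        rnkT Cf hwfF (insert (Lfun hwfF hwfG hherF hsprF hherG hsprG M M' hM' π)
          (q'.image (Lfun hwfF hwfG hherF hsprF hherG hsprG M M' hM'))) := by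
  set θf := theta hwfG hherG hsprG M' hM' with hθf
  set Lf := Lfun hwfF hwfG hherF hsprF hherG hsprG M M' hM' with hLf
  have hwmem : q'.image θf ∈ CG := hherG _ hwi _ (Finset.subset_insert _ _)
  have hssub : q'.image θf ⊂ insert (θf π) (q'.image θf) := by
    refine Finset.ssubset_insert ?_
    intro hmem
    obtain ⟨j, hj, hje⟩ := Finset.mem_image.mp hmem
    have := theta_strictMono hwfG hherG hsprG M' hM' (hq' j hj)
    rw [← hθf] at this
    omega
  set β := rnkT CG hwfG (insert (θf π) (q'.image θf)) with hβ
  have hβ1 : β + 1 ≤ rnk hwfF ⟨q'.image Lf, hu⟩ := by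
    have h1 : β + 1 ≤ rnkT CG hwfG (q'.image θf) := by
      rw [hβ, rnkT_eq hwfG hwmem, rnkT_eq hwfG hwi]
      exact succ_rnk_le hwfG hssub
    have h2 := hle
    rw [rnkT_eq hwfF hu] at h2
    exact le_trans h1 h2
  have hthr := sigma_spec hwfF hwfG hherF hsprF hherG hsprG M M' hM' hM π q'
    (Finset.mem_powerset.mpr (fun j hj => Finset.mem_range.mpr (hq' j hj)))
  have := thrIns_spec hwfF hherF hsprF hu hβ1 (Lf π) hthr
  obtain ⟨hlt, hmem, hrk⟩ := this
  refine ⟨hmem, ?_⟩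
  rw [rnkT_eq hwfF hmem]
  exact hrk

/-- The key induction: rank domination for all `Θ`-images in `CG`. -/
lemma key_induction (hM : StrictMono M) (hemptyF : ∅ ∈ Cf)
    (base : rnkT CG hwfG ∅ ≤ rnkT Cf hwfF ∅) :
    ∀ n (q : Finset ℕ), q.card = n →
      q.image (theta hwfG hherG hsprG M' hM') ∈ CG →
      ∃ hu : q.image (Lfun hwfF hwfG hherF hsprF hherG hsprG M M' hM') ∈ Cf,
        rnkT CG hwfG (q.image (theta hwfG hherG hsprG M' hM')) ≤
          rnkT Cf hwfF (q.image (Lfun hwfF hwfG hherF hsprF hherG hsprG M M' hM')) := by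
  set θf := theta hwfG hherG hsprG M' hM' with hθf
  set Lf := Lfun hwfF hwfG hherF hsprF hherG hsprG M M' hM' with hLf
  intro n
  induction n with
  | zero =>
    intro q hq _
    rw [Finset.card_eq_zero] at hq
    subst hq
    simpa using ⟨hemptyF, base⟩
  | succ k ih =>
    intro q hq hqCG
    have hne : q.Nonempty := by
      rw [← Finset.card_pos]; omega
    set π := q.max' hne with hπ
    set q' := q.erase π with hq'
    have hqeq : q = insert π q' := by
      rw [hq', Finset.insert_erase (Finset.max'_mem q hne)]
    have hq'lt : ∀ j ∈ q', j < π := by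
      intro j hj
      have h1 := Finset.le_max' q j (Finset.mem_of_mem_erase hj)
      have h2 := Finset.ne_of_mem_erase hj
      omega
    have hcard' : q'.card = k := by
      rw [hq', Finset.card_erase_of_mem (Finset.max'_mem q hne)]
      omega
    have himg : q.image θf = insert (θf π) (q'.image θf) := by
      rw [hqeq, Finset.image_insert]
    have himgL : q.image Lf = insert (Lf π) (q'.image Lf) := by
      rw [hqeq, Finset.image_insert]
    rw [himg] at hqCG
    have hq'CG : q'.image θf ∈ CG := hherG _ hqCG _ (Finset.subset_insert _ _)
    obtain ⟨hu', hle'⟩ := ih q' hcard' hq'CG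
    obtain ⟨hui, hle⟩ := fusion_step hwfF hwfG hherF hsprF hherG hsprG M M' hM' hM
      π q' hq'lt hu' hqCG hle'
    rw [himg, himgL]
    exact ⟨hui, hle⟩

end SigmaFusion

section Greedy

/-- maximal member of a family. -/
def MaxIn (C : Set (Finset ℕ)) (u : Finset ℕ) : Prop :=
  u ∈ C ∧ ∀ v ∈ C, u ⊆ v → u = v

/-- positions of a finset w.r.t. a strictly monotone enumeration. -/
noncomputable def posL (Lf : ℕ → ℕ) (t : Finset ℕ) : Finset ℕ :=
  (Finset.range (t.sup id + 1)).filter (fun j => Lf j ∈ t)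

lemma mem_posL {Lf : ℕ → ℕ} (hL : StrictMono Lf) {t : Finset ℕ} {j : ℕ} :
    j ∈ posL Lf t ↔ Lf j ∈ t := by
  rw [posL, Finset.mem_filter, Finset.mem_range]
  constructor
  · exact fun h => h.2
  · intro h
    refine ⟨?_, h⟩
    have h1 : j ≤ Lf j := hL.le_apply
    have h2 : Lf j ≤ t.sup id := Finset.le_sup (f := id) h
    omega

lemma posL_image {Lf : ℕ → ℕ} (hL : StrictMono Lf) {t : Finset ℕ}
    (ht : ↑t ⊆ Set.range Lf) : (posL Lf t).image Lf = t := by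
  ext a
  simp only [Finset.mem_image]
  constructor
  · rintro ⟨j, hj, rfl⟩
    exact (mem_posL hL).mp hj
  · intro ha
    obtain ⟨j, rfl⟩ := ht ha
    exact ⟨j, (mem_posL hL).mpr ha, rfl⟩

lemma posL_card {Lf : ℕ → ℕ} (hL : StrictMono Lf) {t : Finset ℕ}
    (ht : ↑t ⊆ Set.range Lf) : (posL Lf t).card = t.card := by
  rw [← Finset.card_image_of_injective (posL Lf t) hL.injective, posL_image hL ht]

/-- greedy selection of positions whose Θ-image initial segments stay in `CG`. -/
noncomputable def qsel (CG : Set (Finset ℕ)) (θf Lf : ℕ → ℕ) (t : Finset ℕ) : Finset ℕ :=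
  (posL Lf t).filter (fun j => ((posL Lf t).filter (· ≤ j)).image θf ∈ CG)

/-- the greedy image. -/
noncomputable def psiF (CG : Set (Finset ℕ)) (θf Lf : ℕ → ℕ) (t : Finset ℕ) : Finset ℕ :=
  (qsel CG θf Lf t).image θf

lemma qsel_subset {CG θf Lf t} : qsel CG θf Lf t ⊆ posL Lf t := Finset.filter_subset _ _

lemma mem_qsel {CG : Set (Finset ℕ)} {θf Lf : ℕ → ℕ} {t : Finset ℕ} {j : ℕ} :
    j ∈ qsel CG θf Lf t ↔
      j ∈ posL Lf t ∧ ((posL Lf t).filter (· ≤ j)).image θf ∈ CG := Finset.mem_filter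

lemma qsel_downward {CG : Set (Finset ℕ)} (hherG : Hereditary CG) {θf Lf : ℕ → ℕ}
    {t : Finset ℕ} {j j' : ℕ} (hj : j ∈ qsel CG θf Lf t) (hj' : j' ∈ posL Lf t)
    (hle : j' ≤ j) : j' ∈ qsel CG θf Lf t := by
  rw [qsel, Finset.mem_filter] at hj ⊢
  refine ⟨hj', ?_⟩
  refine hherG _ hj.2 _ (Finset.image_subset_image ?_)
  intro a ha
  rw [Finset.mem_filter] at ha ⊢
  exact ⟨ha.1, le_trans ha.2 hle⟩

lemma qsel_eq_filter_le_max {CG : Set (Finset ℕ)} (hherG : Hereditary CG) {θf Lf : ℕ → ℕ}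
    {t : Finset ℕ} (hne : (qsel CG θf Lf t).Nonempty) :
    qsel CG θf Lf t = (posL Lf t).filter (· ≤ (qsel CG θf Lf t).max' hne) := by
  ext j
  rw [Finset.mem_filter]
  constructor
  · intro hj
    exact ⟨qsel_subset hj, Finset.le_max' _ j hj⟩
  · rintro ⟨hj, hle⟩
    exact qsel_downward hherG (Finset.max'_mem _ hne) hj hle

lemma psiF_mem {CG : Set (Finset ℕ)} (hherG : Hereditary CG) (hemptyG : ∅ ∈ CG)
    (θf Lf : ℕ → ℕ) (t : Finset ℕ) : psiF CG θf Lf t ∈ CG := by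
  rcases Finset.eq_empty_or_nonempty (qsel CG θf Lf t) with he | hne
  · rw [psiF, he, Finset.image_empty]
    exact hemptyG
  · rw [psiF, qsel_eq_filter_le_max hherG hne]
    exact (mem_qsel.mp (Finset.max'_mem _ hne)).2

end Greedy

section PsiMax

variable {Cf CG : Set (Finset ℕ)}

lemma psiF_def (CG : Set (Finset ℕ)) (θf Lf : ℕ → ℕ) (t : Finset ℕ) :
    psiF CG θf Lf t = (qsel CG θf Lf t).image θf := rfl

lemma psi_max (hwfF : WellFounded (srel Cf)) (hwfG : WellFounded (srel CG))
    (hherG : Hereditary CG)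
    (θf Lf : ℕ → ℕ) (hθ : StrictMono θf) (hL : StrictMono Lf)
    (hemptyG : ∅ ∈ CG)
    (hnostall : ∀ π w, w ⊆ (Finset.range π).image θf → w ∈ CG →
      (∃ v ∈ CG, w ⊂ v) → insert (θf π) w ∈ CG)
    (hkey : ∀ q : Finset ℕ, q.image θf ∈ CG →
      ∃ hu : q.image Lf ∈ Cf, rnkT CG hwfG (q.image θf) ≤ rnkT Cf hwfF (q.image Lf))
    (s : Finset ℕ) (hs : MaxIn Cf s) (hsub : ↑s ⊆ Set.range Lf) :
    MaxIn CG (psiF CG θf Lf s) := by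
  refine ⟨psiF_mem hherG hemptyG _ _ _, ?_⟩
  intro v hv hsubv
  by_contra hne
  have hpv : psiF CG θf Lf s ⊂ v := ssubset_of_ne_of_subset hne hsubv
  rcases eq_or_ne (qsel CG θf Lf s) (posL Lf s) with hqp | hqp
  · -- greedy consumed all of s
    have hpCG : (posL Lf s).image θf ∈ CG := by
      have := psiF_mem hherG hemptyG θf Lf s
      rw [psiF_def, hqp] at this
      exact this
    obtain ⟨huCf, hle⟩ := hkey (posL Lf s) hpCG
    have himg : (posL Lf s).image Lf = s := posL_image hL hsub
    rw [himg] at huCf hle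
    have h1 : (0 : Ordinal) + 1 ≤ rnkT CG hwfG ((posL Lf s).image θf) := by
      rw [rnkT_eq hwfG hpCG]
      have hps : (posL Lf s).image θf ⊂ v := by
        rw [← hqp, ← psiF_def]
        exact hpv
      have h2 := succ_rnk_le hwfG (u := ⟨(posL Lf s).image θf, hpCG⟩) (v := ⟨v, hv⟩) hps
      calc (0 : Ordinal) + 1 ≤ rnk hwfG ⟨v, hv⟩ + 1 := add_le_add_left zero_le 1
        _ ≤ _ := h2
    have h2 : (0 : Ordinal) + 1 ≤ rnk hwfF ⟨s, huCf⟩ := by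
      rw [rnkT_eq hwfF huCf] at hle
      exact le_trans h1 hle
    obtain ⟨v', hsv', _⟩ := exists_of_rank_succ hwfF h2
    exact hsv'.ne (hs.2 v' v'.2 hsv'.subset)
  · -- greedy stalled strictly inside s : contradiction with no-stall
    have hqsub : qsel CG θf Lf s ⊆ posL Lf s := qsel_subset
    have hdiff : (posL Lf s \ qsel CG θf Lf s).Nonempty := by
      rw [Finset.sdiff_nonempty]
      intro hc
      exact hqp (Finset.Subset.antisymm hqsub hc)
    set j₀ := (posL Lf s \ qsel CG θf Lf s).min' hdiff with hj₀
    have hj₀mem := Finset.min'_mem _ hdiff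
    rw [Finset.mem_sdiff] at hj₀mem
    obtain ⟨hj₀p, hj₀q⟩ := hj₀mem
    have hqlt : ∀ j ∈ qsel CG θf Lf s, j < j₀ := by
      intro j hj
      by_contra hge
      exact hj₀q (qsel_downward hherG hj hj₀p (by omega))
    have hfil : (posL Lf s).filter (· ≤ j₀) = insert j₀ (qsel CG θf Lf s) := by
      ext j
      rw [Finset.mem_filter, Finset.mem_insert]
      constructor
      · rintro ⟨hjp, hjle⟩
        rcases eq_or_ne j j₀ with rfl | hne'
        · exact Or.inl rfl
        · refine Or.inr ?_
          by_contra hjq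
          have : j₀ ≤ j := Finset.min'_le _ j (Finset.mem_sdiff.mpr ⟨hjp, hjq⟩)
          omega
      · rintro (rfl | hjq)
        · exact ⟨hj₀p, le_refl _⟩
        · exact ⟨hqsub hjq, le_of_lt (hqlt j hjq)⟩
    have hnost := hnostall j₀ ((qsel CG θf Lf s).image θf)
      (by
        intro a ha
        obtain ⟨j, hj, rfl⟩ := Finset.mem_image.mp ha
        exact Finset.mem_image.mpr ⟨j, Finset.mem_range.mpr (hqlt j hj), rfl⟩)
      (by rw [← psiF_def]; exact psiF_mem hherG hemptyG _ _ _)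
      ⟨v, hv, by rw [← psiF_def]; exact hpv⟩
    refine hj₀q (mem_qsel.mpr ⟨hj₀p, ?_⟩)
    rw [hfil, Finset.image_insert]
    exact hnost

/-- the minimum position always survives greedy selection. -/
lemma qsel_min_mem (hherG : Hereditary CG)
    (θf Lf : ℕ → ℕ)
    (hemptyG : ∅ ∈ CG) (hGne : ∃ v ∈ CG, (∅ : Finset ℕ) ⊂ v)
    (hnostall : ∀ π w, w ⊆ (Finset.range π).image θf → w ∈ CG →
      (∃ v ∈ CG, w ⊂ v) → insert (θf π) w ∈ CG)
    (t : Finset ℕ) (hne : (posL Lf t).Nonempty) :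
    (posL Lf t).min' hne ∈ qsel CG θf Lf t := by
  set j₁ := (posL Lf t).min' hne with hj₁
  refine mem_qsel.mpr ⟨Finset.min'_mem _ hne, ?_⟩
  have hfil : (posL Lf t).filter (· ≤ j₁) = {j₁} := by
    ext j
    rw [Finset.mem_filter, Finset.mem_singleton]
    constructor
    · rintro ⟨hjp, hjle⟩
      have := Finset.min'_le _ j hjp
      omega
    · rintro rfl
      exact ⟨Finset.min'_mem _ hne, le_refl _⟩
  rw [hfil, Finset.image_singleton]
  have := hnostall j₁ ∅ (by simp) hemptyG hGne
  simpa using this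

end PsiMax

section Bridges

variable {CG : Set (Finset ℕ)} {θf Lf : ℕ → ℕ}

lemma nth_via_posL (hL : StrictMono Lf) {t : Finset ℕ} (ht : ↑t ⊆ Set.range Lf)
    {i : ℕ} (h1 : 1 ≤ i) (h2 : i ≤ t.card) :
    nth t i = Lf (nth (posL Lf t) i) := by
  conv_lhs => rw [← posL_image hL ht]
  exact nth_image hL _ h1 (by rw [posL_card hL ht]; exact h2)

lemma nth_qsel_eq (hherG : Hereditary CG) {t : Finset ℕ}
    {i : ℕ} (h1 : 1 ≤ i) (h2 : i ≤ (qsel CG θf Lf t).card) :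
    nth (posL Lf t) i = nth (qsel CG θf Lf t) i :=
  nth_initial qsel_subset
    (fun a ha b hb hba => qsel_downward hherG ha hb hba) h1 h2

lemma nth_psiF (hθ : StrictMono θf) {t : Finset ℕ}
    {i : ℕ} (h1 : 1 ≤ i) (h2 : i ≤ (qsel CG θf Lf t).card) :
    nth (psiF CG θf Lf t) i = θf (nth (qsel CG θf Lf t) i) :=
  nth_image hθ _ h1 h2

lemma psiF_card {t : Finset ℕ} (hθ : StrictMono θf) :
    (psiF CG θf Lf t).card = (qsel CG θf Lf t).card :=
  Finset.card_image_of_injective _ hθ.injective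

lemma qsel_card_le (hL : StrictMono Lf) {t : Finset ℕ} (ht : ↑t ⊆ Set.range Lf) :
    (qsel CG θf Lf t).card ≤ t.card := by
  rw [← posL_card hL ht]
  exact Finset.card_le_card qsel_subset

/-- transfer of plegma tuples through the greedy map. -/
lemma plegma_transfer (hherG : Hereditary CG) (hθ : StrictMono θf) (hL : StrictMono Lf)
    (hemptyG : ∅ ∈ CG) (hGne : ∃ v ∈ CG, (∅ : Finset ℕ) ⊂ v)
    (hnostall : ∀ π w, w ⊆ (Finset.range π).image θf → w ∈ CG →
      (∃ v ∈ CG, w ⊂ v) → insert (θf π) w ∈ CG)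
    (k : ℕ) (s : ℕ → Finset ℕ) (hsub : ∀ j < k, ↑(s j) ⊆ Set.range Lf)
    (hpleg : IsPlegma k s) :
    IsPlegma k (fun j => psiF CG θf Lf (s j)) := by
  obtain ⟨hne, hcol, hdiag⟩ := hpleg
  have hqne : ∀ j < k, (qsel CG θf Lf (s j)).Nonempty := by
    intro j hj
    have hpne : (posL Lf (s j)).Nonempty := by
      rw [← Finset.card_pos, posL_card hL (hsub j hj), Finset.card_pos]
      exact hne j hj
    exact ⟨_, qsel_min_mem hherG θf Lf hemptyG hGne hnostall (s j) hpne⟩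
  have hcards : ∀ j < k, (psiF CG θf Lf (s j)).card ≤ (s j).card := by
    intro j hj
    rw [psiF_card hθ]
    exact qsel_card_le hL (hsub j hj)
  have hnth : ∀ j < k, ∀ i, 1 ≤ i → i ≤ (psiF CG θf Lf (s j)).card →
      nth (psiF CG θf Lf (s j)) i = θf (nth (posL Lf (s j)) i) := by
    intro j hj i h1 h2
    rw [psiF_card hθ] at h2
    rw [nth_psiF hθ h1 h2, nth_qsel_eq hherG h1 h2]
  have hposnth : ∀ j < k, ∀ i, 1 ≤ i → i ≤ (psiF CG θf Lf (s j)).card →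
      nth (s j) i = Lf (nth (posL Lf (s j)) i) := by
    intro j hj i h1 h2
    exact nth_via_posL hL (hsub j hj) h1 (le_trans h2 (hcards j hj))
  refine ⟨?_, ?_, ?_⟩
  · intro i hi
    exact Finset.Nonempty.image (hqne i hi) θf
  · intro i j hij hj r h1 h2
    have hi : i < k := lt_trans hij hj
    simp only [le_min_iff] at h2
    show nth (psiF CG θf Lf (s i)) r < nth (psiF CG θf Lf (s j)) r
    have e1 := hnth i hi r h1 h2.1
    have e2 := hnth j hj r h1 h2.2
    rw [e1, e2]
    apply hθ
    have o1 := hposnth i hi r h1 h2.1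
    have o2 := hposnth j hj r h1 h2.2
    have := hcol i j hij hj r h1 (le_min (le_trans h2.1 (hcards i hi))
      (le_trans h2.2 (hcards j hj)))
    rw [o1, o2] at this
    exact hL.lt_iff_lt.mp this
  · intro i hi j hj r h1 h2
    simp only [le_min_iff] at h2
    show nth (psiF CG θf Lf (s i)) r < nth (psiF CG θf Lf (s j)) (r + 1)
    have hr2 : r + 1 ≤ (psiF CG θf Lf (s j)).card := by omega
    have e1 := hnth i hi r h1 h2.1
    have e2 := hnth j hj (r+1) (by omega) hr2
    rw [e1, e2]
    apply hθ
    have o1 := hposnth i hi r h1 h2.1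
    have o2 := hposnth j hj (r+1) (by omega) hr2
    have := hdiag i hi j hj r h1 (le_min (le_trans h2.1 (hcards i hi))
      (by have := le_trans hr2 (hcards j hj); omega))
    rw [o1, o2] at this
    exact hL.lt_iff_lt.mp this

end Bridges

section FamFacts

lemma hered_closureFam (F : Set (Finset ℕ)) : Hereditary (closureFam F) := by
  rintro s ⟨t, htF, hst⟩ u hus
  exact ⟨t, htF, hus.trans hst⟩

lemma regularThin_closure {F : Set (Finset ℕ)} (hF : RegularThin F) :
    Spreading (closureFam F) ∧ CompactFam (closureFam F) ∧
      (∀ u, u ∈ closureFam F → (u ∈ F ↔ MaxIn (closureFam F) u)) := by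
  obtain ⟨R, ⟨hcomp, hher, hspr⟩, hFeq⟩ := hF
  have hclo : closureFam F = R := by
    rw [hFeq]
    exact closure_max_eq hcomp hher
  refine ⟨by rw [hclo]; exact hspr, by rw [hclo]; exact hcomp, ?_⟩
  intro u hu
  constructor
  · intro huF
    refine ⟨hu, ?_⟩
    intro v hv hsubv
    rw [hclo] at hv
    rw [hFeq] at huF
    exact huF.2 v hv hsubv
  · rintro ⟨_, hmax⟩
    obtain ⟨t, htF, hut⟩ := hu
    have : u = t := hmax t ⟨t, htF, subset_rfl⟩ hut
    rw [this]
    exact htF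

lemma famOrder_spec {F : Set (Finset ℕ)} (h : famOrder F ≠ 0) :
    ∃ (hwf : WellFounded (srel (closureFam F))) (he : (∅ : Finset ℕ) ∈ closureFam F),
      famOrder F = rnkT (closureFam F) hwf ∅ := by
  by_cases h1 : WellFounded (fun s t : closureFam F => (t : Finset ℕ) ⊂ (s : Finset ℕ))
  · by_cases h2 : (∅ : Finset ℕ) ∈ closureFam F
    · refine ⟨h1, h2, ?_⟩
      rw [rnkT_eq h1 h2]
      show famOrder F = rnk h1 ⟨∅, h2⟩
      rw [famOrder, dif_pos h1, dif_pos h2]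
      rfl
    · exact absurd (by rw [famOrder, dif_pos h1, dif_neg h2]) h
  · exact absurd (by rw [famOrder, dif_neg h1]) h

end FamFacts

section Continuity

/-- A finitely-determined map between finset spaces is continuous (on a subtype). -/
lemma continuous_of_local (P : Finset ℕ → Prop) (g : Finset ℕ → Finset ℕ)
    (hloc : ∀ n : ℕ, ∃ B : ℕ, ∀ t t' : Finset ℕ,
      (∀ i, i ≤ B → (i ∈ t ↔ i ∈ t')) → (n ∈ g t ↔ n ∈ g t')) :
    Continuous (fun tt : {t : Finset ℕ // P t} => g tt.1) := by
  apply continuous_induced_rng.mpr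
  apply continuous_pi
  intro n
  obtain ⟨B, hB⟩ := hloc n
  classical
  have hproj : Continuous (fun (tt : {t : Finset ℕ // P t}) (i : Fin (B+1)) =>
      charFun tt.1 i.1) := by
    apply continuous_pi
    intro i
    have h1 : Continuous (fun tt : {t : Finset ℕ // P t} => (tt.1 : Finset ℕ)) :=
      continuous_subtype_val
    have h2 : Continuous (charFun : Finset ℕ → (ℕ → Bool)) := continuous_induced_dom
    have h3 : Continuous (fun f : ℕ → Bool => f i.1) := continuous_apply _
    exact h3.comp (h2.comp h1)
  have heq : (fun tt : {t : Finset ℕ // P t} => (charFun ∘ g ∘ Subtype.val) tt n) =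
      (fun v : Fin (B+1) → Bool =>
        charFun (g ((Finset.range (B+1)).filter
          (fun i => ∀ h : i < B + 1, v ⟨i, h⟩ = true))) n) ∘
      (fun (tt : {t : Finset ℕ // P t}) (i : Fin (B+1)) => charFun tt.1 i.1) := by
    funext tt
    show charFun (g tt.1) n = charFun (g _) n
    simp only [charFun]
    apply decide_eq_decide.mpr
    apply hB
    intro i hi
    refine Iff.trans ?_ Finset.mem_filter.symm
    rw [Finset.mem_range]
    constructor
    · intro hit
      refine ⟨by omega, fun h => ?_⟩
      show charFun tt.1 i = true
      simp [charFun, hit]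
    · rintro ⟨h1, h2⟩
      have h3 : charFun tt.1 i = true := h2 (by omega)
      simpa [charFun] using h3
  show Continuous (fun tt : {t : Finset ℕ // P t} => (charFun ∘ g ∘ Subtype.val) tt n)
  rw [heq]
  exact (continuous_of_discreteTopology).comp hproj

/-- locality of the greedy map. -/
lemma psi_local (CG : Set (Finset ℕ)) (θf Lf : ℕ → ℕ) (hθ : StrictMono θf)
    (hL : StrictMono Lf) :
    ∀ n : ℕ, ∃ B : ℕ, ∀ t t' : Finset ℕ,
      (∀ i, i ≤ B → (i ∈ t ↔ i ∈ t')) →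
      (n ∈ psiF CG θf Lf t ↔ n ∈ psiF CG θf Lf t') := by
  intro n
  refine ⟨Lf n, ?_⟩
  intro t t' hagree
  have hj : ∀ j, θf j = n → (j ∈ qsel CG θf Lf t ↔ j ∈ qsel CG θf Lf t') := by
    intro j hjn
    have hjle : j ≤ n := by
      have h0 : j ≤ θf j := hθ.le_apply
      omega
    have hpos : ∀ j', j' ≤ j → (j' ∈ posL Lf t ↔ j' ∈ posL Lf t') := by
      intro j' hj'
      rw [mem_posL hL, mem_posL hL]
      exact hagree (Lf j') (hL.monotone (le_trans hj' hjle))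
    have hfil : (posL Lf t).filter (· ≤ j) = (posL Lf t').filter (· ≤ j) := by
      ext j'
      rw [Finset.mem_filter, Finset.mem_filter]
      constructor
      · rintro ⟨h1, h2⟩
        exact ⟨(hpos j' h2).mp h1, h2⟩
      · rintro ⟨h1, h2⟩
        exact ⟨(hpos j' h2).mpr h1, h2⟩
    rw [mem_qsel, mem_qsel, hfil, hpos j (le_refl j)]
  constructor
  · intro hmem
    obtain ⟨j, hjq, hje⟩ := Finset.mem_image.mp hmem
    exact Finset.mem_image.mpr ⟨j, (hj j hje).mp hjq, hje⟩
  · intro hmem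
    obtain ⟨j, hjq, hje⟩ := Finset.mem_image.mp hmem
    exact Finset.mem_image.mpr ⟨j, (hj j hje).mpr hjq, hje⟩

end Continuity







end SMwork2


/-- Corollary 8. -/
theorem statement2 {X : Type*} [NormedAddCommGroup X] [NormedSpace ℝ X] [CompleteSpace X]
    (ξ : Ordinal) (hξ1 : 1 ≤ ξ) (hξc : ξ < (Cardinal.aleph 1).ord)
    (ρ : Seminorm ℝ (ℕ →₀ ℝ)) (hρ : SMw ξ X ρ)
    (F : Set (Finset ℕ)) (hF : RegularThin F) (hord : ξ ≤ famOrder F)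
    (M : ℕ → ℕ) (hM : StrictMono M) :
    ∃ L : ℕ → ℕ, StrictMono L ∧ Set.range L ⊆ Set.range M ∧
      ∃ x : Finset ℕ → X, ∃ δ : ℕ → ℝ, NullPos δ ∧
        Subordinated F L x ∧ WeaklyNull F L x ∧ Generates F L x δ ρ := by
  classical
  open SMwork SMwork2 in
  obtain ⟨G', hG', hordG', M', hM', x', δ', hδ', hSub', hWN', hGen'⟩ := hρ
  obtain ⟨φ', hφcont, hφagree⟩ := hSub'
  have hξ0 : ξ ≠ 0 := by
    intro h
    rw [h] at hξ1
    exact absurd (nonpos_iff_eq_zero.mp hξ1) one_ne_zero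
  have hFne : famOrder F ≠ 0 := by
    intro h
    rw [h] at hord
    exact hξ0 (nonpos_iff_eq_zero.mp hord)
  have hGne0 : famOrder G' ≠ 0 := by rw [hordG']; exact hξ0
  obtain ⟨hwfF, heF, hFeq⟩ := famOrder_spec hFne
  obtain ⟨hwfG, heG, hGeq⟩ := famOrder_spec hGne0
  obtain ⟨hsprF, hcompF, hmaxF⟩ := regularThin_closure hF
  obtain ⟨hsprG, hcompG, hmaxG⟩ := regularThin_closure hG'
  have hherF := hered_closureFam F
  have hherG := hered_closureFam G'
  have base : rnkT (closureFam G') hwfG ∅ ≤ rnkT (closureFam F) hwfF ∅ := by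
    rw [← hGeq, ← hFeq, hordG']
    exact hord
  set θf : ℕ → ℕ := theta hwfG hherG hsprG M' hM' with hθfdef
  set Lf : ℕ → ℕ := Lfun hwfF hwfG hherF hsprF hherG hsprG M M' hM' with hLfdef
  have hθmono : StrictMono θf := theta_strictMono hwfG hherG hsprG M' hM'
  have hLmono : StrictMono Lf :=
    Lfun_strictMono hwfF hwfG hherF hsprF hherG hsprG M M' hM' hM
  have hθM' : ∀ π, θf π ∈ Set.range M' ∧ M' π ≤ θf π := by
    intro π
    exact ⟨(theta_spec hwfG hherG hsprG M' hM' π).1, (theta_spec hwfG hherG hsprG M' hM' π).2.1⟩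
  have hnostall : ∀ π w, w ⊆ (Finset.range π).image θf → w ∈ closureFam G' →
      (∃ v ∈ closureFam G', w ⊂ v) → insert (θf π) w ∈ closureFam G' := by
    intro π w h1 h2 h3
    exact fusion_nostall hwfG hherG hsprG M' hM' π w h1 h2 h3
  have hkey : ∀ q : Finset ℕ, q.image θf ∈ closureFam G' →
      ∃ hu : q.image Lf ∈ closureFam F,
        rnkT (closureFam G') hwfG (q.image θf) ≤ rnkT (closureFam F) hwfF (q.image Lf) := by
    intro q hq
    exact key_induction hwfF hwfG hherF hsprF hherG hsprG M M' hM' hM heF base q.card q rfl hq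
  have hGneG : ∃ v ∈ closureFam G', (∅ : Finset ℕ) ⊂ v := by
    have h1 : (0 : Ordinal) + 1 ≤ rnk hwfG ⟨∅, heG⟩ := by
      rw [zero_add]
      have h2 : famOrder G' = rnk hwfG ⟨∅, heG⟩ := by rw [hGeq, rnkT_eq hwfG heG]
      rw [← h2, hordG']
      exact hξ1
    obtain ⟨v, hv, _⟩ := exists_of_rank_succ hwfG h1
    exact ⟨v.1, v.2, hv⟩
  have hFnonempty : ∀ s, s ∈ F → s.Nonempty := by
    intro s hsF
    rcases Finset.eq_empty_or_nonempty s with rfl | h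
    · exfalso
      have h1 : (0 : Ordinal) + 1 ≤ rnk hwfF ⟨∅, heF⟩ := by
        rw [zero_add]
        have h2 : famOrder F = rnk hwfF ⟨∅, heF⟩ := by rw [hFeq, rnkT_eq hwfF heF]
        rw [← h2]
        exact le_trans hξ1 hord
      obtain ⟨v, hv, _⟩ := exists_of_rank_succ hwfF h1
      have hmax := (hmaxF ∅ ⟨∅, hsF, subset_rfl⟩).mp hsF
      exact hv.ne (hmax.2 v.1 v.2 hv.subset)
    · exact h
  have hpsimem : ∀ s, s ∈ F → ↑s ⊆ Set.range Lf →
      psiF (closureFam G') θf Lf s ∈ G' ∧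
        ↑(psiF (closureFam G') θf Lf s) ⊆ Set.range M' := by
    intro s hsF hssub
    constructor
    · have hMaxIn : MaxIn (closureFam F) s := (hmaxF s ⟨s, hsF, subset_rfl⟩).mp hsF
      have hpmax := psi_max hwfF hwfG hherG θf Lf hθmono hLmono heG hnostall hkey s hMaxIn hssub
      exact (hmaxG _ hpmax.1).mpr hpmax
    · intro a ha
      obtain ⟨j, _, rfl⟩ := Finset.mem_image.mp ha
      exact (hθM' j).1
  -- the ℱ-sequence
  set x : Finset ℕ → X := fun t => φ' (psiF (closureFam G') θf Lf t) with hxdef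
  have hpsirestrict : ∀ s, s ∈ restrict F Lf → psiF (closureFam G') θf Lf s ∈ restrict G' M' := by
    intro s hs
    exact ⟨(hpsimem s hs.1 hs.2).1, (hpsimem s hs.1 hs.2).2⟩
  have hqselne : ∀ s, s ∈ restrict F Lf → s.Nonempty → (qsel (closureFam G') θf Lf s).Nonempty := by
    intro s hs hsne
    have hpne : (posL Lf s).Nonempty := by
      rw [← Finset.card_pos, posL_card hLmono hs.2, Finset.card_pos]
      exact hsne
    exact ⟨_, qsel_min_mem hherG θf Lf heG hGneG hnostall s hpne⟩
  have hnthpsi1 : ∀ s, s ∈ restrict F Lf → s.Nonempty →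
      nth (psiF (closureFam G') θf Lf s) 1 = θf (nth (posL Lf s) 1) := by
    intro s hs hsne
    have hq := hqselne s hs hsne
    have hc : 1 ≤ (qsel (closureFam G') θf Lf s).card := Finset.card_pos.mpr hq
    rw [nth_psiF hθmono (le_refl 1) hc, nth_qsel_eq hherG (le_refl 1) hc]
  have hnths1 : ∀ s, s ∈ restrict F Lf → s.Nonempty →
      nth s 1 = Lf (nth (posL Lf s) 1) := by
    intro s hs hsne
    exact nth_via_posL hLmono hs.2 (le_refl 1) (Finset.card_pos.mpr hsne)
  refine ⟨Lf, hLmono, ?_, x, δ', hδ', ?_, ?_, ?_⟩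
  · -- range Lf ⊆ range M
    rintro _ ⟨π, rfl⟩
    exact ⟨sigma hwfF hwfG hherF hsprF hherG hsprG M M' hM' π, rfl⟩
  · -- Subordinated
    refine ⟨x, ?_, fun s _ => rfl⟩
    have hψcont : Continuous (fun tt : {t : Finset ℕ // t ∈ closureFam F ∧ ↑t ⊆ Set.range Lf} =>
        psiF (closureFam G') θf Lf tt.1) :=
      continuous_of_local _ _ (psi_local (closureFam G') θf Lf hθmono hLmono)
    have hΨ : Continuous (fun tt : {t : Finset ℕ // t ∈ closureFam F ∧ ↑t ⊆ Set.range Lf} =>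
        (⟨psiF (closureFam G') θf Lf tt.1,
          psiF_mem hherG heG θf Lf tt.1, by
            intro a ha
            obtain ⟨j, _, rfl⟩ := Finset.mem_image.mp ha
            exact (hθM' j).1⟩ :
          {t : Finset ℕ // t ∈ closureFam G' ∧ ↑t ⊆ Set.range M'})) :=
      hψcont.subtype_mk _
    exact hφcont.comp hΨ
  · -- WeaklyNull
    intro f ε hε
    obtain ⟨n₀', hn₀'⟩ := hWN' f ε hε
    refine ⟨Lf n₀', ?_⟩
    intro s hs hle
    have hsne : s.Nonempty := hFnonempty s hs.1
    have hxs : x s = x' (psiF (closureFam G') θf Lf s) := by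
      simp only [hxdef]
      exact hφagree _ (hpsirestrict s hs)
    rw [hxs]
    apply hn₀' _ (hpsirestrict s hs)
    rw [hnthpsi1 s hs hsne]
    have h1 : Lf n₀' ≤ Lf (nth (posL Lf s) 1) := by
      rw [← hnths1 s hs hsne]
      exact hle
    have h2 : n₀' ≤ nth (posL Lf s) 1 := hLmono.le_iff_le.mp h1
    have h3 : M' n₀' ≤ M' (nth (posL Lf s) 1) := hM'.monotone h2
    have h4 := (hθM' (nth (posL Lf s) 1)).2
    have h5 : n₀' ≤ M' n₀' := hM'.le_apply
    omega
  · -- Generates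
    intro k l hk hkl a ha s hs hpleg hmin
    have hsubs : ∀ j < k, ↑(s j) ⊆ Set.range Lf := fun j hj => (hs j hj).2
    have hpleg' : IsPlegma k (fun j => psiF (closureFam G') θf Lf (s j)) :=
      plegma_transfer hherG hθmono hLmono heG hGneG hnostall k s hsubs hpleg
    have hmemb : ∀ j < k, psiF (closureFam G') θf Lf (s j) ∈ restrict G' M' :=
      fun j hj => hpsirestrict _ (hs j hj)
    have hs0ne : (s 0).Nonempty := hpleg.1 0 (by omega)
    have hmin' : M' l ≤ nth (psiF (closureFam G') θf Lf (s 0)) 1 := by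
      rw [hnthpsi1 _ (hs 0 (by omega)) hs0ne]
      have h1 : Lf l ≤ Lf (nth (posL Lf (s 0)) 1) := by
        rw [← hnths1 _ (hs 0 (by omega)) hs0ne]
        exact hmin
      have h2 : l ≤ nth (posL Lf (s 0)) 1 := hLmono.le_iff_le.mp h1
      have h3 : M' l ≤ M' (nth (posL Lf (s 0)) 1) := hM'.monotone h2
      have h4 := (hθM' (nth (posL Lf (s 0)) 1)).2
      omega
    have happ := hGen' k l hk hkl a ha (fun j => psiF (closureFam G') θf Lf (s j))
      hmemb hpleg' hmin'
    have hsum : ∑ j ∈ Finset.range k, a j • x (s j) =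
        ∑ j ∈ Finset.range k, a j • x' (psiF (closureFam G') θf Lf (s j)) := by
      apply Finset.sum_congr rfl
      intro j hj
      simp only [hxdef]
      rw [hφagree _ (hmemb j (Finset.mem_range.mp hj))]
    rw [hsum]
    exact happ
end

section
/- Let X be a Banach space, ℱ a regular thin family, k ∈ ℕ, and (x_s^1)_{s∈ℱ},…,(x_s^k)_{s∈ℱ} bounded ℱ-sequences in X. Then for every infinite subset M of ℕ there exists an infinite subset L of M such that the k-tuple ((x_s^i)_{s∈ℱ↾L})_{i=1}^k generates some sequence (e_n)_n (i.e., some seminorm on c00) as a joint ℱ-model with respect to some null sequence of positive reals. -/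
open Set Filter Topology

variable {X : Type*} [NormedAddCommGroup X] [NormedSpace ℝ X]

section AuxBasics

lemma nth_empty (k : ℕ) : nth (∅ : Finset ℕ) k = 0 := by
  simp [nth]

lemma sort_eq_min_cons (s : Finset ℕ) (h : s.Nonempty) :
    s.sort (· ≤ ·) = s.min' h :: ((s.erase (s.min' h)).sort (· ≤ ·)) := by
  have h1 : (s.sort (· ≤ ·)).Perm s.toList := Finset.sort_perm_toList s _
  have h2 : ((s.erase (s.min' h)).sort (· ≤ ·)).Perm (s.erase (s.min' h)).toList :=
    Finset.sort_perm_toList _ _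
  have h3 : (s.min' h :: (s.erase (s.min' h)).toList).Perm
      (insert (s.min' h) (s.erase (s.min' h))).toList :=
    (Finset.toList_insert (Finset.notMem_erase _ _)).symm
  rw [Finset.insert_erase (s.min'_mem h)] at h3
  have hperm : (s.sort (· ≤ ·)).Perm
      (s.min' h :: ((s.erase (s.min' h)).sort (· ≤ ·))) :=
    h1.trans ((h2.cons _).trans h3).symm
  have hsorted : List.Pairwise (· ≤ ·) (s.min' h :: ((s.erase (s.min' h)).sort (· ≤ ·))) := by
    rw [List.pairwise_cons]
    constructor
    · intro b hb
      exact s.min'_le b (Finset.mem_of_mem_erase ((Finset.mem_sort _).mp hb))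
    · exact Finset.pairwise_sort _ _
  exact List.Perm.eq_of_pairwise' (Finset.pairwise_sort _ _) hsorted hperm

lemma nth_one (s : Finset ℕ) (h : s.Nonempty) : nth s 1 = s.min' h := by
  unfold nth
  rw [sort_eq_min_cons s h]
  rfl

/-- remove the least element of a finite set. -/
noncomputable def peel (s : Finset ℕ) : Finset ℕ := s.erase (nth s 1)

lemma peel_empty : peel (∅ : Finset ℕ) = ∅ := by simp [peel]

lemma nth_one_mem (s : Finset ℕ) (h : s.Nonempty) : nth s 1 ∈ s := by
  rw [nth_one s h]; exact s.min'_mem h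

lemma insert_peel (s : Finset ℕ) (h : s.Nonempty) : insert (nth s 1) (peel s) = s :=
  Finset.insert_erase (nth_one_mem s h)

lemma card_peel (s : Finset ℕ) : (peel s).card = s.card - 1 := by
  rcases s.eq_empty_or_nonempty with rfl | h
  · simp [peel]
  · rw [peel, Finset.card_erase_of_mem (nth_one_mem s h)]

lemma nth_peel (s : Finset ℕ) (k : ℕ) (hk : 1 ≤ k) : nth (peel s) k = nth s (k + 1) := by
  rcases s.eq_empty_or_nonempty with rfl | h
  · rw [peel_empty, nth_empty, nth_empty]
  · have hp : peel s = s.erase (s.min' h) := by rw [peel, nth_one s h]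
    have hs := sort_eq_min_cons s h
    unfold nth
    rw [hp, hs]
    obtain ⟨m, rfl⟩ : ∃ m, k = m + 1 := ⟨k - 1, by omega⟩
    simp

lemma mem_peel {x : ℕ} {s : Finset ℕ} : x ∈ peel s ↔ x ∈ s ∧ x ≠ nth s 1 := by
  simp [peel, Finset.mem_erase, and_comm]

lemma nth_one_le (s : Finset ℕ) {y : ℕ} (hy : y ∈ s) : nth s 1 ≤ y := by
  rw [nth_one s ⟨y, hy⟩]; exact s.min'_le y hy

lemma nth_two_le (s : Finset ℕ) {y : ℕ} (hy : y ∈ s) (hne : y ≠ nth s 1) : nth s 2 ≤ y := by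
  have hy' : y ∈ peel s := mem_peel.mpr ⟨hy, hne⟩
  have := nth_one_le (peel s) hy'
  rwa [nth_peel s 1 le_rfl] at this

lemma nth_one_lt_of_mem_peel {x : ℕ} {s : Finset ℕ} (hx : x ∈ peel s) : nth s 1 < x := by
  rcases mem_peel.mp hx with ⟨hxs, hne⟩
  exact lt_of_le_of_ne (nth_one_le s hxs) (Ne.symm hne)

end AuxBasics

section AuxSeg

lemma seg_subset {s t : Finset ℕ} (h : IsInitialSegment s t) : s ⊆ t := h.1

lemma seg_empty (t : Finset ℕ) : IsInitialSegment ∅ t := by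
  constructor
  · exact Finset.empty_subset t
  · intro a ha; exact absurd ha (Finset.notMem_empty a)

lemma seg_refl (t : Finset ℕ) : IsInitialSegment t t := by
  refine ⟨subset_rfl, ?_⟩
  intro a ha b hb hnb; exact absurd hb hnb

lemma seg_trans {a b c : Finset ℕ} (h1 : IsInitialSegment a b) (h2 : IsInitialSegment b c) :
    IsInitialSegment a c := by
  refine ⟨h1.1.trans h2.1, ?_⟩
  intro y hy z hz hznotina
  by_cases hzb : z ∈ b
  · exact h1.2 y hy z hzb hznotina
  · exact h2.2 y (h1.1 hy) z hz hzb

lemma seg_unique {r r' u : Finset ℕ} (h1 : IsInitialSegment r u) (h2 : IsInitialSegment r' u)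
    (hc : r.card = r'.card) : r = r' := by
  by_cases hrr : r' ⊆ r
  · exact (Finset.eq_of_subset_of_card_le hrr (le_of_eq hc)).symm
  · obtain ⟨a, ha, hnotr⟩ := Finset.not_subset.mp hrr
    have hlt : ∀ x ∈ r, x < a := fun x hx => h1.2 x hx a (h2.1 ha) hnotr
    have hss : r ⊆ r' := by
      intro b hb
      by_contra hbn
      have h1' : a < b := h2.2 a ha b (h1.1 hb) hbn
      have h2' := hlt b hb
      omega
    have : r.card < r'.card := Finset.card_lt_card ⟨hss, fun hsub => hnotr (hsub ha)⟩
    omega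

end AuxSeg
section AuxSeg2

lemma seg_split {u u' R R' : Finset ℕ} (hu : IsInitialSegment u' u)
    (hR : IsInitialSegment R u) (hR' : IsInitialSegment R' u') (hc : R.card = R'.card) :
    R = R' ∧ IsInitialSegment (u' \ R) (u \ R) := by
  have hR'u : IsInitialSegment R' u := seg_trans hR' hu
  have hRR' : R = R' := seg_unique hR hR'u hc
  refine ⟨hRR', ?_⟩
  have hsub : u' \ R ⊆ u \ R := by
    intro z hz
    rcases Finset.mem_sdiff.mp hz with ⟨h1, h2⟩
    exact Finset.mem_sdiff.mpr ⟨hu.1 h1, h2⟩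
  refine ⟨hsub, ?_⟩
  intro a ha b hb hbn
  rcases Finset.mem_sdiff.mp ha with ⟨hau', _⟩
  rcases Finset.mem_sdiff.mp hb with ⟨hbu, hbR⟩
  have hbu' : b ∉ u' := fun hbu' => hbn (Finset.mem_sdiff.mpr ⟨hbu', hbR⟩)
  exact hu.2 a hau' b hbu hbu'

lemma seg_insert {μ : ℕ} {Xs Ys : Finset ℕ} (h : IsInitialSegment Xs Ys)
    (hμ : ∀ b ∈ Ys, μ < b) : IsInitialSegment (insert μ Xs) (insert μ Ys) := by
  refine ⟨Finset.insert_subset_insert _ h.1, ?_⟩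
  intro a ha b hb hbn
  rcases Finset.mem_insert.mp hb with rfl | hbY
  · exact absurd (Finset.mem_insert_self _ _) hbn
  · have hbX : b ∉ Xs := fun hh => hbn (Finset.mem_insert_of_mem hh)
    rcases Finset.mem_insert.mp ha with rfl | haX
    · exact hμ b hbY
    · exact h.2 a haX b hbY hbX

lemma strictMonoOn_image_eq :
    ∀ (A : Finset ℕ) (f g : ℕ → ℕ),
      (∀ i ∈ A, ∀ j ∈ A, i < j → f i < f j) →
      (∀ i ∈ A, ∀ j ∈ A, i < j → g i < g j) →
      A.image f = A.image g → ∀ i ∈ A, f i = g i := by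
  intro A
  induction A using Finset.strongInduction with
  | _ A ih =>
    intro f g hf hg him i hi
    have hA : A.Nonempty := ⟨i, hi⟩
    set a := A.min' hA with ha_def
    have haA : a ∈ A := A.min'_mem hA
    have key : ∀ (h : ℕ → ℕ), (∀ i ∈ A, ∀ j ∈ A, i < j → h i < h j) →
        ∀ b ∈ A.image h, h a ≤ b := by
      intro h hmono b hb
      rcases Finset.mem_image.mp hb with ⟨j, hj, rfl⟩
      rcases eq_or_lt_of_le (A.min'_le j hj) with heq | hlt
      · exact le_of_eq (congrArg h heq)
      · exact le_of_lt (hmono a haA j hj hlt)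
    have hfa : f a = g a := by
      have h1 : f a ≤ g a := key f hf (g a) (him ▸ Finset.mem_image_of_mem g haA)
      have h2 : g a ≤ f a := key g hg (f a) (him.symm ▸ Finset.mem_image_of_mem f haA)
      omega
    rcases eq_or_ne i a with rfl | hne
    · exact hfa
    · have hlt_a : ∀ j ∈ A.erase a, a < j := fun j hj =>
        lt_of_le_of_ne (A.min'_le j (Finset.mem_of_mem_erase hj))
          (Ne.symm (Finset.ne_of_mem_erase hj))
      have hfnotin : f a ∉ (A.erase a).image f := by
        intro hmem
        rcases Finset.mem_image.mp hmem with ⟨j, hj, hje⟩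
        have := hf a haA j (Finset.mem_of_mem_erase hj) (hlt_a j hj)
        omega
      have hgnotin : g a ∉ (A.erase a).image g := by
        intro hmem
        rcases Finset.mem_image.mp hmem with ⟨j, hj, hje⟩
        have := hg a haA j (Finset.mem_of_mem_erase hj) (hlt_a j hj)
        omega
      have e1 : A.image f = insert (f a) ((A.erase a).image f) := by
        conv_lhs => rw [← Finset.insert_erase haA]
        rw [Finset.image_insert]
      have e2 : A.image g = insert (g a) ((A.erase a).image g) := by
        conv_lhs => rw [← Finset.insert_erase haA]
        rw [Finset.image_insert]
      have hins : insert (f a) ((A.erase a).image f) = insert (f a) ((A.erase a).image g) := by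
        rw [← e1, him, e2, hfa]
      have himage : (A.erase a).image f = (A.erase a).image g := by
        have h1 := congrArg (fun S => S.erase (f a)) hins
        rw [Finset.erase_insert hfnotin] at h1
        rw [h1, hfa, Finset.erase_insert hgnotin]
      exact ih (A.erase a) (Finset.erase_ssubset haA) f g
        (fun i hi j hj hij => hf i (Finset.mem_of_mem_erase hi) j (Finset.mem_of_mem_erase hj) hij)
        (fun i hi j hj hij => hg i (Finset.mem_of_mem_erase hi) j (Finset.mem_of_mem_erase hj) hij)
        himage i (Finset.mem_erase.mpr ⟨hne, hi⟩)

/-- `u` is a (finite) initial segment of the set `X`. -/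
def PrefixOf (u : Finset ℕ) (X : Set ℕ) : Prop :=
  ↑u ⊆ X ∧ ∀ x ∈ X, x ∉ u → ∀ y ∈ u, y < x

lemma prefixOf_empty (X : Set ℕ) : PrefixOf ∅ X := by
  constructor
  · simp
  · intro x _ _ y hy; exact absurd hy (Finset.notMem_empty y)

lemma prefixOf_comparable {u u' : Finset ℕ} {X : Set ℕ} (h : PrefixOf u X) (h' : PrefixOf u' X) :
    IsInitialSegment u' u ∨ IsInitialSegment u u' := by
  by_cases hsub : u' ⊆ u
  · left
    refine ⟨hsub, ?_⟩
    intro a ha b hb hbn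
    exact h'.2 b (h.1 hb) hbn a ha
  · right
    obtain ⟨c, hc, hcn⟩ := Finset.not_subset.mp hsub
    have hsub2 : u ⊆ u' := by
      intro b hb
      by_contra hbn
      have h1 : c < b := h'.2 b (h.1 hb) hbn c hc
      have h2 : b < c := h.2 c (h'.1 hc) hcn b hb
      omega
    refine ⟨hsub2, ?_⟩
    intro a ha b hb hbn
    exact h.2 b (h'.1 hb) hbn a ha

end AuxSeg2
section Rigidity

/-- plegma conditions without the nonemptiness requirement. -/
def WP (m : ℕ) (s : ℕ → Finset ℕ) : Prop :=
  (∀ i j, i < j → j < m → ∀ k, 1 ≤ k → k ≤ min (s i).card (s j).card →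
      nth (s i) k < nth (s j) k) ∧
  (∀ i < m, ∀ j < m, ∀ k, 1 ≤ k → k ≤ min (s i).card ((s j).card - 1) →
      nth (s i) k < nth (s j) (k + 1))

lemma isPlegma_wp {m : ℕ} {s : ℕ → Finset ℕ} (h : IsPlegma m s) : WP m s := ⟨h.2.1, h.2.2⟩

lemma wp_peel {m : ℕ} {s : ℕ → Finset ℕ} (h : WP m s) : WP m (fun i => peel (s i)) := by
  constructor
  · intro i j hij hjm k hk1 hk2
    simp only [card_peel] at hk2
    rw [nth_peel _ _ hk1, nth_peel _ _ hk1]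
    exact h.1 i j hij hjm (k+1) (by omega) (by omega)
  · intro i him j hjm k hk1 hk2
    simp only [card_peel] at hk2
    rw [nth_peel _ _ hk1, nth_peel _ _ (by omega : 1 ≤ k + 1)]
    exact h.2 i him j hjm (k+1) (by omega) (by omega)

/-- indices (below `m`) of nonempty components. -/
noncomputable def Afin (m : ℕ) (s : ℕ → Finset ℕ) : Finset ℕ :=
  (Finset.range m).filter (fun i => (s i).Nonempty)

/-- first round: least elements of the nonempty components. -/
noncomputable def Rone (m : ℕ) (s : ℕ → Finset ℕ) : Finset ℕ :=
  (Afin m s).image (fun i => nth (s i) 1)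

/-- union of the components. -/
noncomputable def UU (m : ℕ) (s : ℕ → Finset ℕ) : Finset ℕ := (Finset.range m).biUnion s

lemma mem_Afin {m i : ℕ} {s : ℕ → Finset ℕ} : i ∈ Afin m s ↔ i < m ∧ (s i).Nonempty := by
  simp [Afin]

lemma mem_UU {m x : ℕ} {s : ℕ → Finset ℕ} : x ∈ UU m s ↔ ∃ j < m, x ∈ s j := by
  simp [UU]

lemma Afin_empty_eq {m i : ℕ} {s : ℕ → Finset ℕ} (hi : i < m) (h : i ∉ Afin m s) :
    s i = ∅ := by
  rw [mem_Afin] at h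
  push_neg at h
  exact h hi

lemma ra_mono {m : ℕ} {s : ℕ → Finset ℕ} (h : WP m s) :
    ∀ i ∈ Afin m s, ∀ j ∈ Afin m s, i < j → nth (s i) 1 < nth (s j) 1 := by
  intro i hi j hj hij
  rcases mem_Afin.mp hi with ⟨_, hne⟩
  rcases mem_Afin.mp hj with ⟨hjm, hne'⟩
  exact h.1 i j hij hjm 1 le_rfl (by
    have := Finset.card_pos.mpr hne
    have := Finset.card_pos.mpr hne'
    omega)

lemma rb_lt {m i j x : ℕ} {s : ℕ → Finset ℕ} (h : WP m s) (hi : i ∈ Afin m s)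
    (hjm : j < m) (hx : x ∈ s j) (hne : x ≠ nth (s j) 1) : nth (s i) 1 < x := by
  rcases mem_Afin.mp hi with ⟨him, hine⟩
  have hxp : x ∈ peel (s j) := mem_peel.mpr ⟨hx, hne⟩
  have h2 : nth (s j) 2 ≤ x := nth_two_le (s j) hx hne
  have hcardj : 2 ≤ (s j).card := by
    have h1 : (peel (s j)).Nonempty := ⟨x, hxp⟩
    have := Finset.card_pos.mpr h1
    have := card_peel (s j)
    omega
  have h3 : nth (s i) 1 < nth (s j) 2 := h.2 i him j hjm 1 le_rfl (by
    have := Finset.card_pos.mpr hine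
    omega)
  omega

lemma card_Rone {m : ℕ} {s : ℕ → Finset ℕ} (h : WP m s) : (Rone m s).card = (Afin m s).card := by
  apply Finset.card_image_of_injOn
  intro i hi j hj hij
  by_contra hne
  rcases Nat.lt_or_ge i j with hlt | hge
  · exact absurd hij (Nat.ne_of_lt (ra_mono h i hi j hj hlt))
  · have : j < i := by omega
    exact absurd hij.symm (Nat.ne_of_lt (ra_mono h j hj i hi this))

lemma seg_Rone {m : ℕ} {s : ℕ → Finset ℕ} (h : WP m s) :
    IsInitialSegment (Rone m s) (UU m s) := by
  constructor
  · intro a ha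
    rcases Finset.mem_image.mp ha with ⟨i, hi, rfl⟩
    rcases mem_Afin.mp hi with ⟨him, hine⟩
    exact mem_UU.mpr ⟨i, him, nth_one_mem _ hine⟩
  · intro a ha b hb hbn
    rcases Finset.mem_image.mp ha with ⟨i, hi, rfl⟩
    rcases mem_UU.mp hb with ⟨j, hjm, hbj⟩
    have hbne : b ≠ nth (s j) 1 := by
      intro heq
      apply hbn
      exact Finset.mem_image.mpr ⟨j, mem_Afin.mpr ⟨hjm, ⟨b, hbj⟩⟩, heq.symm⟩
    exact rb_lt h hi hjm hbj hbne

lemma UU_peel {m : ℕ} {s : ℕ → Finset ℕ} (h : WP m s) :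
    UU m (fun i => peel (s i)) = UU m s \ Rone m s := by
  ext x
  rw [mem_UU, Finset.mem_sdiff, mem_UU]
  constructor
  · rintro ⟨j, hjm, hxj⟩
    rcases mem_peel.mp hxj with ⟨hxs, hxne⟩
    refine ⟨⟨j, hjm, hxs⟩, ?_⟩
    intro hmem
    rcases Finset.mem_image.mp hmem with ⟨i, hi, hie⟩
    have := rb_lt h hi hjm hxs hxne
    omega
  · rintro ⟨⟨j, hjm, hxj⟩, hxr⟩
    refine ⟨j, hjm, mem_peel.mpr ⟨hxj, ?_⟩⟩
    intro heq
    exact hxr (Finset.mem_image.mpr ⟨j, mem_Afin.mpr ⟨hjm, ⟨x, hxj⟩⟩, heq.symm⟩)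

lemma rigid_aux (N : ℕ) : ∀ (m : ℕ) (s t : ℕ → Finset ℕ), WP m s → WP m t →
    (UU m t).card ≤ N → IsInitialSegment (UU m t) (UU m s) →
    (∀ i < m, s i = t i) ∨
      (∃ i < m, t i ≠ s i ∧ (IsInitialSegment (t i) (s i) ∨ IsInitialSegment (s i) (t i))) := by
  induction N using Nat.strong_induction_on with
  | _ N IH =>
    intro m s t hs ht hcard hseg
    by_cases hUt : UU m t = ∅
    · have htempty : ∀ i < m, t i = ∅ := by
        intro i hi
        rw [← Finset.subset_empty, ← hUt]
        intro y hy
        exact mem_UU.mpr ⟨i, hi, hy⟩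
      by_cases hsempty : ∀ i < m, s i = ∅
      · left; intro i hi; rw [hsempty i hi, htempty i hi]
      · push_neg at hsempty
        obtain ⟨i, hi, hne⟩ := hsempty
        right
        refine ⟨i, hi, ?_, Or.inl ?_⟩
        · rw [htempty i hi]; exact fun hh => Finset.nonempty_iff_ne_empty.mp hne hh.symm
        · rw [htempty i hi]; exact seg_empty _
    · by_cases hAA : Afin m s = Afin m t
      · -- peel and recurse
        have hAt_ne : (Afin m t).Nonempty := by
          rcases Finset.nonempty_iff_ne_empty.mpr hUt with ⟨x, hx⟩
          rcases mem_UU.mp hx with ⟨j, hjm, hxj⟩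
          exact ⟨j, mem_Afin.mpr ⟨hjm, ⟨x, hxj⟩⟩⟩
        have hRs := seg_Rone hs
        have hRt := seg_Rone ht
        have hcards : (Rone m s).card = (Rone m t).card := by
          rw [card_Rone hs, card_Rone ht, hAA]
        obtain ⟨hReq, hsegrest⟩ := seg_split hseg hRs hRt hcards
        have hmins : ∀ i ∈ Afin m s, nth (s i) 1 = nth (t i) 1 := by
          apply strictMonoOn_image_eq (Afin m s) _ _ (ra_mono hs)
          · intro i hi j hj hij
            exact ra_mono ht i (hAA ▸ hi) j (hAA ▸ hj) hij
          · show Rone m s = (Afin m s).image (fun i => nth (t i) 1)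
            rw [hReq]
            show Rone m t = _
            rw [Rone, hAA]
        have hs' := wp_peel hs
        have ht' := wp_peel ht
        have hUt' := UU_peel ht
        have hUs' := UU_peel hs
        have hseg' : IsInitialSegment (UU m (fun i => peel (t i))) (UU m (fun i => peel (s i))) := by
          rw [hUt', hUs']
          rw [← hReq] at *
          exact hsegrest
        have hAcard : 1 ≤ (Rone m t).card := by
          rw [card_Rone ht]
          exact Finset.card_pos.mpr hAt_ne
        have hcard' : (UU m (fun i => peel (t i))).card < N := by
          rw [hUt', Finset.card_sdiff_of_subset hRt.1]
          have h1 : 1 ≤ (UU m t).card := by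
            rcases Finset.nonempty_iff_ne_empty.mpr hUt with ⟨x, hx⟩
            exact Finset.card_pos.mpr ⟨x, hx⟩
          omega
        rcases IH _ hcard' m _ _ hs' ht' le_rfl hseg' with hall | ⟨j, hj, hne, hsegj⟩
        · left
          intro i hi
          by_cases hiA : i ∈ Afin m s
          · rcases mem_Afin.mp hiA with ⟨_, hsne⟩
            have htne : (t i).Nonempty := (mem_Afin.mp (hAA ▸ hiA)).2
            have h1 : s i = insert (nth (s i) 1) (peel (s i)) := (insert_peel _ hsne).symm
            rw [h1, hall i hi, hmins i hiA, insert_peel (t i) htne]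
          · have h1 := Afin_empty_eq hi hiA
            have h2 := Afin_empty_eq hi (hAA ▸ hiA)
            rw [h1, h2]
        · right
          have hjA : j ∈ Afin m s := by
            by_contra hjn
            have h1 := Afin_empty_eq hj hjn
            have h2 := Afin_empty_eq hj (hAA ▸ hjn)
            apply hne
            show peel (t j) = peel (s j)
            rw [h1, h2]
          rcases mem_Afin.mp hjA with ⟨_, hsne⟩
          have htne : (t j).Nonempty := (mem_Afin.mp (hAA ▸ hjA)).2
          have hμ : nth (s j) 1 = nth (t j) 1 := hmins j hjA
          refine ⟨j, hj, ?_, ?_⟩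
          · intro heq
            apply hne
            show peel (t j) = peel (s j)
            rw [heq]
          · have e1 : insert (nth (s j) 1) (peel (t j)) = t j := by
              rw [hμ]; exact insert_peel (t j) htne
            have e2 : insert (nth (s j) 1) (peel (s j)) = s j := insert_peel _ hsne
            rcases hsegj with hseg1 | hseg2
            · left
              have hres := seg_insert hseg1 (fun b hb => nth_one_lt_of_mem_peel (s := s j) hb)
              rw [e1, e2] at hres
              exact hres
            · right
              have hres := seg_insert (μ := nth (s j) 1) hseg2 (fun b hb => by
                rw [hμ]; exact nth_one_lt_of_mem_peel (s := t j) hb)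
              rw [e1, e2] at hres
              exact hres
      · -- Afin differ: immediate witness
        right
        have : ∃ i, (i ∈ Afin m s ∧ i ∉ Afin m t) ∨ (i ∈ Afin m t ∧ i ∉ Afin m s) := by
          by_contra hcon
          push_neg at hcon
          apply hAA
          ext i
          exact ⟨fun hi => (hcon i).1 hi, fun hi => (hcon i).2 hi⟩
        obtain ⟨i, hi⟩ := this
        rcases hi with ⟨his, hint⟩ | ⟨hit, hins⟩
        · rcases mem_Afin.mp his with ⟨him, hsne⟩
          have h2 := Afin_empty_eq him hint
          refine ⟨i, him, ?_, Or.inl ?_⟩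
          · rw [h2]
            intro hh
            exact Finset.nonempty_iff_ne_empty.mp hsne hh.symm
          · rw [h2]; exact seg_empty _
        · rcases mem_Afin.mp hit with ⟨him, htne⟩
          have h2 := Afin_empty_eq him hins
          refine ⟨i, him, ?_, Or.inr ?_⟩
          · rw [h2]
            exact Finset.nonempty_iff_ne_empty.mp htne
          · rw [h2]; exact seg_empty _

end Rigidity
section Galvin

lemma iterate_chain {α : Type*} (Inv : α → Prop) (Rel : α → α → Prop)
    (init : α) (hinit : Inv init) (hstep : ∀ a, Inv a → ∃ b, Inv b ∧ Rel a b) :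
    ∃ g : ℕ → α, g 0 = init ∧ (∀ n, Inv (g n)) ∧ ∀ n, Rel (g n) (g (n+1)) := by
  choose f hf1 hf2 using hstep
  let F : {a // Inv a} → {a // Inv a} := fun p => ⟨f p.1 p.2, hf1 p.1 p.2⟩
  refine ⟨fun n => (F^[n] ⟨init, hinit⟩).1, rfl, fun n => (F^[n] ⟨init, hinit⟩).2, fun n => ?_⟩
  have h : F^[n+1] ⟨init, hinit⟩ = F (F^[n] ⟨init, hinit⟩) := Function.iterate_succ_apply' F n _
  show Rel (F^[n] ⟨init, hinit⟩).1 (F^[n+1] ⟨init, hinit⟩).1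
  rw [h]
  exact hf2 _ _

lemma subset_stage {t : ℕ → Finset ℕ} (hmono : ∀ m n, m ≤ n → t m ⊆ t n) (v : Finset ℕ)
    (hv : ↑v ⊆ ⋃ n, (↑(t n) : Set ℕ)) : ∃ n, v ⊆ t n := by
  classical
  induction v using Finset.induction with
  | empty => exact ⟨0, by simp⟩
  | @insert a v ha IH =>
    obtain ⟨n, hn⟩ := IH (fun y hy => hv (by simp [hy] : y ∈ (↑(insert a v) : Set ℕ)))
    obtain ⟨m, hm⟩ : ∃ m, a ∈ t m := by
      have := hv (by simp : a ∈ (↑(insert a v) : Set ℕ))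
      simpa using this
    refine ⟨max n m, Finset.insert_subset (hmono m _ (le_max_right n m) hm)
      (hn.trans (hmono n _ (le_max_left n m)))⟩

lemma union_inf {t : ℕ → Finset ℕ} (hcard : ∀ n, n ≤ (t n).card) :
    (⋃ n, (↑(t n) : Set ℕ)).Infinite := by
  intro hfin
  have hsub : ∀ n, t n ⊆ hfin.toFinset := by
    intro n y hy
    rw [Set.Finite.mem_toFinset]
    exact Set.mem_iUnion.mpr ⟨n, hy⟩
  have h2 : ∀ n, n ≤ hfin.toFinset.card :=
    fun n => (hcard n).trans (Finset.card_le_card (hsub n))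
  exact absurd (h2 (hfin.toFinset.card + 1)) (by omega)

variable (B : Set (Finset ℕ))

/-- `A` accepts `s` (combinatorial forcing). -/
def Accepts (A : Set ℕ) (s : Finset ℕ) : Prop :=
  ∀ X : Set ℕ, X ⊆ A → X.Infinite → (∀ x ∈ X, ∀ y ∈ s, y < x) →
    ∃ u : Finset ℕ, PrefixOf u X ∧ (s ∪ u) ∈ B

/-- `A` rejects `s`. -/
def Rejects (A : Set ℕ) (s : Finset ℕ) : Prop :=
  ∀ A' : Set ℕ, A' ⊆ A → A'.Infinite → ¬ Accepts B A' s

lemma accepts_mono {A A' : Set ℕ} {s : Finset ℕ} (h : A' ⊆ A) (ha : Accepts B A s) :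
    Accepts B A' s := fun X hX => ha X (hX.trans h)

lemma rejects_mono {A A' : Set ℕ} {s : Finset ℕ} (h : A' ⊆ A) (ha : Rejects B A s) :
    Rejects B A' s := fun A'' h2 => ha A'' (h2.trans h)

lemma accepts_of_mem {A : Set ℕ} {s : Finset ℕ} (h : s ∈ B) : Accepts B A s := by
  intro X _ _ _
  exact ⟨∅, prefixOf_empty X, by rwa [Finset.union_empty]⟩

lemma decide_one (A : Set ℕ) (hA : A.Infinite) (s : Finset ℕ) :
    ∃ A', A' ⊆ A ∧ A'.Infinite ∧ (Accepts B A' s ∨ Rejects B A' s) := by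
  by_cases h : ∃ A', A' ⊆ A ∧ A'.Infinite ∧ Accepts B A' s
  · obtain ⟨A', h1, h2, h3⟩ := h
    exact ⟨A', h1, h2, Or.inl h3⟩
  · refine ⟨A, subset_rfl, hA, Or.inr ?_⟩
    intro A' h1 h2 hacc
    exact h ⟨A', h1, h2, hacc⟩

lemma decide_list (l : List (Finset ℕ)) : ∀ (A : Set ℕ), A.Infinite →
    ∃ A', A' ⊆ A ∧ A'.Infinite ∧ ∀ s ∈ l, Accepts B A' s ∨ Rejects B A' s := by
  induction l with
  | nil => intro A hA; exact ⟨A, subset_rfl, hA, by simp⟩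
  | cons s l IH =>
    intro A hA
    obtain ⟨A1, h1, h2, h3⟩ := IH A hA
    obtain ⟨A2, g1, g2, g3⟩ := decide_one B A1 h2 s
    refine ⟨A2, g1.trans h1, g2, ?_⟩
    intro v hv
    rcases List.mem_cons.mp hv with rfl | hvl
    · exact g3
    · rcases h3 v hvl with h | h
      · exact Or.inl (accepts_mono B g1 h)
      · exact Or.inr (rejects_mono B g1 h)

/-- The invariant of the fusion sequence. -/
def GInv (A : Set ℕ) (p : Finset ℕ × Set ℕ) : Prop :=
  p.2.Infinite ∧ (∀ a ∈ p.1, ∀ y ∈ p.2, a < y) ∧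
    (∀ s ⊆ p.1, Accepts B p.2 s ∨ Rejects B p.2 s) ∧ p.2 ⊆ A ∧ ↑p.1 ⊆ A

def GRel (p q : Finset ℕ × Set ℕ) : Prop :=
  q.2 ⊆ p.2 ∧ p.1 ⊆ q.1 ∧ ∃ a, a ∈ p.2 ∧ a ∉ p.1 ∧ q.1 = insert a p.1

lemma gstep (A : Set ℕ) (p : Finset ℕ × Set ℕ) (hp : GInv B A p) :
    ∃ q, GInv B A q ∧ GRel p q := by
  obtain ⟨hinf, hord, _hdec, hsubA, htA⟩ := hp
  obtain ⟨a, ha⟩ := hinf.nonempty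
  have hanot : a ∉ p.1 := fun hmem => lt_irrefl a (hord a hmem a ha)
  have hA1 : (p.2 ∩ Set.Ioi a).Infinite := by
    have : p.2 ∩ Set.Ioi a = p.2 \ Set.Iic a := by
      ext x
      simp only [Set.mem_inter_iff, Set.mem_Ioi, Set.mem_diff, Set.mem_Iic]
      constructor <;> rintro ⟨h1, h2⟩ <;> exact ⟨h1, by omega⟩
    rw [this]
    exact hinf.diff (Set.finite_Iic a)
  obtain ⟨A2, k1, k2, k3⟩ := decide_list B ((insert a p.1).powerset.toList) _ hA1
  refine ⟨(insert a p.1, A2), ⟨k2, ?_, ?_, ?_, ?_⟩, ?_, ?_, a, ha, hanot, rfl⟩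
  · intro b hb y hy
    rcases Finset.mem_insert.mp hb with rfl | hbp
    · exact (k1 hy).2
    · exact hord b hbp y (k1 hy).1
  · intro s hs
    exact k3 s (by rw [Finset.mem_toList, Finset.mem_powerset]; exact hs)
  · exact (k1.trans Set.inter_subset_left).trans hsubA
  · intro y hy
    rcases Finset.mem_insert.mp (by exact_mod_cast hy) with rfl | hyp
    · exact hsubA ha
    · exact htA hyp
  · exact k1.trans Set.inter_subset_left
  · exact Finset.subset_insert a p.1

end Galvin
section GalvinMain

theorem galvin (B : Set (Finset ℕ)) (A : Set ℕ) (hA : A.Infinite) :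
    ∃ L : Set ℕ, L ⊆ A ∧ L.Infinite ∧
      ((∀ u : Finset ℕ, ↑u ⊆ L → u ∉ B) ∨
       (∀ X : Set ℕ, X ⊆ L → X.Infinite → ∃ u ∈ B, PrefixOf u X)) := by
  classical
  obtain ⟨A0, hA0sub, hA0inf, hA0dec⟩ := decide_list B [∅] A hA
  have hinit : GInv B A (∅, A0) := by
    refine ⟨hA0inf, ?_, ?_, hA0sub, by simp⟩
    · intro a ha; exact absurd ha (Finset.notMem_empty a)
    · intro s hs
      rw [Finset.subset_empty] at hs
      subst hs
      exact hA0dec ∅ (by simp)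
  obtain ⟨g, hg0, hgInv, hgRel⟩ := iterate_chain (GInv B A) GRel (∅, A0) hinit (gstep B A)
  set t : ℕ → Finset ℕ := fun n => (g n).1 with ht
  set S : ℕ → Set ℕ := fun n => (g n).2 with hS
  have htmono : ∀ m n, m ≤ n → t m ⊆ t n := by
    intro m n hmn
    exact monotone_nat_of_le_succ (f := t) (fun n => (hgRel n).2.1) hmn
  have hSanti : ∀ m n, m ≤ n → S n ⊆ S m := by
    intro m n hmn
    exact antitone_nat_of_succ_le (f := S) (fun n => (hgRel n).1) hmn
  have hSinf : ∀ n, (S n).Infinite := fun n => (hgInv n).1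
  have horder : ∀ n, ∀ x ∈ t n, ∀ y ∈ S n, x < y := fun n => (hgInv n).2.1
  have hdec : ∀ n, ∀ s ⊆ t n, Accepts B (S n) s ∨ Rejects B (S n) s := fun n => (hgInv n).2.2.1
  have hSA : ∀ n, S n ⊆ A := fun n => (hgInv n).2.2.2.1
  have htA : ∀ n, ↑(t n) ⊆ A := fun n => (hgInv n).2.2.2.2
  have ht0 : t 0 = ∅ := by show (g 0).1 = ∅; rw [hg0]
  have hcard : ∀ n, n ≤ (t n).card := by
    intro n
    induction n with
    | zero => omega
    | succ n IH =>
      obtain ⟨_, _, a, _, hanot, heq⟩ := hgRel n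
      show n + 1 ≤ (t (n+1)).card
      have : (t (n+1)).card = (t n).card + 1 := by
        show ((g (n+1)).1).card = _
        rw [heq, Finset.card_insert_of_notMem hanot]
      omega
  set L0 : Set ℕ := ⋃ n, (↑(t n) : Set ℕ) with hL0
  have hL0inf : L0.Infinite := union_inf hcard
  have hL0A : L0 ⊆ A := by
    intro x hx
    rcases Set.mem_iUnion.mp hx with ⟨n, hn⟩
    exact htA n hn
  have htail : ∀ n, ∀ x, x ∈ L0 → x ∉ t n → x ∈ S n := by
    intro n x hxL0 hxt
    rcases Set.mem_iUnion.mp hxL0 with ⟨m, hm⟩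
    rcases le_or_gt m n with hmn | hnm
    · exact absurd (htmono m n hmn hm) hxt
    · have hle : n ≤ m := le_of_lt hnm
      clear hxL0 hnm
      induction m, hle using Nat.le_induction with
      | base => exact absurd hm hxt
      | succ m hnm IH =>
        obtain ⟨hS1, _, a, haS, _, heq⟩ := hgRel m
        have hm' : x ∈ insert a (t m) := by
          show x ∈ (insert a (g m).1 : Finset ℕ)
          rw [← heq]; exact hm
        rcases Finset.mem_insert.mp hm' with rfl | hxm
        · exact hSanti n m hnm haS
        · exact IH hxm
  have hcut : ∀ a, a ∈ L0 → ∃ m, a ∈ t m ∧ (∀ x ∈ L0, x < a → x ∈ t m) ∧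
      (∀ x ∈ L0, a < x → x ∈ S m) := by
    intro a haL0
    have hex : ∃ n, a ∈ t n := Set.mem_iUnion.mp haL0
    have ham : a ∈ t (Nat.find hex) := Nat.find_spec hex
    refine ⟨Nat.find hex, ham, ?_, ?_⟩
    · intro x hxL0 hxa
      by_contra hxt
      have hxS := htail (Nat.find hex) x hxL0 hxt
      have := horder (Nat.find hex) a ham x hxS
      omega
    · intro x hxL0 hax
      by_contra hxS
      have hxt : x ∈ t (Nat.find hex) := by
        by_contra hc
        exact hxS (htail (Nat.find hex) x hxL0 hc)
      rcases Nat.eq_zero_or_pos (Nat.find hex) with hm0 | hmpos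
      · rw [hm0, ht0] at ham; exact absurd ham (Finset.notMem_empty a)
      · have hm1 : Nat.find hex = (Nat.find hex - 1) + 1 := by omega
        obtain ⟨_, _, b, hbS, hbnot, heq⟩ := hgRel (Nat.find hex - 1)
        have ham' : a ∉ t (Nat.find hex - 1) := Nat.find_min hex (by omega)
        have hteq : t ((Nat.find hex - 1) + 1) = insert b (t (Nat.find hex - 1)) := heq
        rw [hm1] at ham hxt
        rw [hteq] at ham hxt
        have hab : a = b := by
          rcases Finset.mem_insert.mp ham with h | h
          · exact h
          · exact absurd h ham'
        rcases Finset.mem_insert.mp hxt with hxb | hxm'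
        · omega
        · have := horder (Nat.find hex - 1) x hxm' b hbS
          omega
  -- verdicts
  set AccV : Finset ℕ → Prop := fun s => ∃ n, s ⊆ t n ∧ Accepts B (S n) s with hAccV
  set RejV : Finset ℕ → Prop := fun s => ∃ n, s ⊆ t n ∧ Rejects B (S n) s with hRejV
  have htotal : ∀ s : Finset ℕ, ↑s ⊆ L0 → AccV s ∨ RejV s := by
    intro s hs
    obtain ⟨n, hn⟩ := subset_stage htmono s hs
    rcases hdec n s hn with h | h
    · exact Or.inl ⟨n, hn, h⟩
    · exact Or.inr ⟨n, hn, h⟩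
  have hcons : ∀ s : Finset ℕ, AccV s → RejV s → False := by
    rintro s ⟨n, _, hacc⟩ ⟨n', _, hrej⟩
    set N := max n n'
    have h1 : Accepts B (S N) s := accepts_mono B (hSanti n N (le_max_left _ _)) hacc
    exact hrej (S N) (hSanti n' N (le_max_right _ _)) (hSinf N) h1
  by_cases hAcc0 : AccV ∅
  · -- second alternative
    obtain ⟨n, _, hacc⟩ := hAcc0
    refine ⟨L0 \ ↑(t n), fun x hx => hL0A hx.1, hL0inf.diff (t n).finite_toSet, Or.inr ?_⟩
    intro X hXL hXinf
    have hXS : X ⊆ S n := by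
      intro x hx
      exact htail n x (hXL hx).1 (hXL hx).2
    obtain ⟨u, hu, huB⟩ := hacc X hXS hXinf
      (by intro x _ y hy; exact absurd hy (Finset.notMem_empty y))
    rw [Finset.empty_union] at huB
    exact ⟨u, huB, hu⟩
  · have hRej0 : RejV ∅ := by
      rcases htotal ∅ (by simp) with h | h
      · exact absurd h hAcc0
      · exact h
    -- key finiteness of bad sets
    have key : ∀ s : Finset ℕ, ↑s ⊆ L0 → RejV s →
        {a : ℕ | a ∈ L0 ∧ (∀ y ∈ s, y < a) ∧ AccV (insert a s)}.Finite := by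
      intro s hsL0 hrejv
      by_contra hinf
      have hinf' : {a : ℕ | a ∈ L0 ∧ (∀ y ∈ s, y < a) ∧ AccV (insert a s)}.Infinite := hinf
      obtain ⟨ns, hsn, hrej⟩ := hrejv
      set W := {a : ℕ | a ∈ L0 ∧ (∀ y ∈ s, y < a) ∧ AccV (insert a s)} with hW
      have hW2 : (W \ ↑(t ns)).Infinite := hinf'.diff (t ns).finite_toSet
      have hWsub : W \ ↑(t ns) ⊆ S ns := by
        intro a ha
        exact htail ns a ha.1.1 ha.2
      apply hrej (W \ ↑(t ns)) hWsub hW2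
      intro X hXW hXinf hXgt
      have hXne : X.Nonempty := hXinf.nonempty
      set a := sInf X with ha
      have haX : a ∈ X := Nat.sInf_mem hXne
      have haW : a ∈ W := (hXW haX).1
      obtain ⟨haL0, hsa, haccv⟩ := haW
      obtain ⟨m, ham, hbelow, habove⟩ := hcut a haL0
      have hinsm : insert a s ⊆ t m :=
        Finset.insert_subset ham (fun y hy => hbelow y (hsL0 hy) (hsa y hy))
      have haccm : Accepts B (S m) (insert a s) := by
        rcases hdec m (insert a s) hinsm with h | h
        · exact h
        · exact absurd ⟨m, hinsm, h⟩ (fun hr => hcons _ haccv hr)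
      set X' := X \ {a} with hX'
      have hX'sub : X' ⊆ S m := by
        intro z hz
        have hzX : z ∈ X := hz.1
        have hza : z ≠ a := hz.2
        have hzL0 : z ∈ L0 := (hXW hzX).1.1
        have : a < z := lt_of_le_of_ne (Nat.sInf_le hzX) (Ne.symm hza)
        exact habove z hzL0 this
      have hX'inf : X'.Infinite := hXinf.diff (Set.finite_singleton a)
      have hX'gt : ∀ z ∈ X', ∀ y ∈ insert a s, y < z := by
        intro z hz y hy
        rcases Finset.mem_insert.mp hy with rfl | hys
        · exact lt_of_le_of_ne (Nat.sInf_le hz.1) (Ne.symm hz.2)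
        · exact hXgt z hz.1 y hys
      obtain ⟨u, hu, huB⟩ := haccm X' hX'sub hX'inf hX'gt
      refine ⟨insert a u, ?_, ?_⟩
      · constructor
        · intro z hz
          rcases Finset.mem_insert.mp (by exact_mod_cast hz) with rfl | hzu
          · exact haX
          · exact (hu.1 hzu).1
        · intro z hzX hznot y hy
          have hza : z ≠ a := fun h => hznot (h ▸ Finset.mem_insert_self a u)
          have hzX' : z ∈ X' := ⟨hzX, hza⟩
          rcases Finset.mem_insert.mp hy with rfl | hyu
          · exact lt_of_le_of_ne (Nat.sInf_le hzX) (Ne.symm hza)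
          · exact hu.2 z hzX' (fun hzu => hznot (Finset.mem_insert_of_mem hzu)) y hyu
      · have heq : s ∪ insert a u = insert a s ∪ u := by
          ext z
          simp only [Finset.mem_union, Finset.mem_insert]
          tauto
        rw [heq]
        exact huB
    -- second recursion
    set Inv2 : Finset ℕ → Prop := fun u => ↑u ⊆ L0 ∧ ∀ v ⊆ u, RejV v with hInv2
    set Rel2 : Finset ℕ → Finset ℕ → Prop := fun u u' => u ⊆ u' ∧ ∃ a, a ∉ u ∧ u' = insert a u
      with hRel2
    have hinit2 : Inv2 ∅ := by
      constructor
      · simp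
      · intro v hv
        rw [Finset.subset_empty] at hv
        subst hv
        exact hRej0
    have hstep2 : ∀ u, Inv2 u → ∃ u', Inv2 u' ∧ Rel2 u u' := by
      intro u hu
      obtain ⟨huL0, hurej⟩ := hu
      set Bad : Set ℕ := ⋃ v ∈ (↑u.powerset : Set (Finset ℕ)),
        {a : ℕ | a ∈ L0 ∧ (∀ y ∈ v, y < a) ∧ AccV (insert a v)} with hBad
      have hBadFin : Bad.Finite := by
        apply Set.Finite.biUnion (u.powerset.finite_toSet)
        intro v hv
        have hvu : v ⊆ u := Finset.mem_powerset.mp (by exact_mod_cast hv)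
        exact key v ((Finset.coe_subset.mpr hvu).trans huL0) (hurej v hvu)
      set Low : Set ℕ := ⋃ y ∈ (↑u : Set ℕ), Set.Iic y with hLow
      have hLowFin : Low.Finite := Set.Finite.biUnion u.finite_toSet (fun y _ => Set.finite_Iic y)
      obtain ⟨a, haL0, hanot⟩ := (hL0inf.diff (hBadFin.union hLowFin)).nonempty
      have hagt : ∀ y ∈ u, y < a := by
        intro y hy
        by_contra hc
        exact hanot (Or.inr (Set.mem_biUnion (by exact_mod_cast hy) (by omega : a ≤ y)))
      have hau : a ∉ u := fun h => absurd (hagt a h) (lt_irrefl a)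
      refine ⟨insert a u, ⟨?_, ?_⟩, Finset.subset_insert a u, a, hau, rfl⟩
      · intro z hz
        rcases Finset.mem_insert.mp (by exact_mod_cast hz) with rfl | hzu
        · exact haL0
        · exact huL0 hzu
      · intro v hv
        by_cases hav : a ∈ v
        · set w := v.erase a with hw
          have hwu : w ⊆ u := by
            rw [hw, ← Finset.subset_insert_iff]
            exact hv
          have hveq : v = insert a w := by rw [hw, Finset.insert_erase hav]
          have hwL0 : ↑(insert a w) ⊆ L0 := by
            intro z hz
            rcases Finset.mem_insert.mp (by exact_mod_cast hz) with rfl | hzw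
            · exact haL0
            · exact huL0 (hwu hzw)
          rcases htotal (insert a w) hwL0 with hacc | hrej
          · exfalso
            apply hanot
            left
            apply Set.mem_biUnion (show w ∈ (↑u.powerset : Set (Finset ℕ)) by
              exact_mod_cast Finset.mem_powerset.mpr hwu)
            exact ⟨haL0, fun y hy => hagt y (hwu hy), hacc⟩
          · rw [hveq]
            exact hrej
        · have hvu : v ⊆ u := by
            intro z hz
            rcases Finset.mem_insert.mp (hv hz) with rfl | h
            · exact absurd hz hav
            · exact h
          exact hurej v hvu
    obtain ⟨g2, hg20, hg2Inv, hg2Rel⟩ := iterate_chain Inv2 Rel2 ∅ hinit2 hstep2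
    have hg2mono : ∀ m n, m ≤ n → g2 m ⊆ g2 n := by
      intro m n hmn
      exact monotone_nat_of_le_succ (f := g2) (fun n => (hg2Rel n).1) hmn
    have hg2card : ∀ n, n ≤ (g2 n).card := by
      intro n
      induction n with
      | zero => omega
      | succ n IH =>
        obtain ⟨_, a, hanot, heq⟩ := hg2Rel n
        rw [heq, Finset.card_insert_of_notMem hanot]
        omega
    refine ⟨⋃ n, (↑(g2 n) : Set ℕ), ?_, union_inf hg2card, Or.inl ?_⟩
    · intro z hz
      rcases Set.mem_iUnion.mp hz with ⟨n, hn⟩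
      exact hL0A ((hg2Inv n).1 hn)
    · intro v hv hvB
      obtain ⟨n, hn⟩ := subset_stage hg2mono v hv
      obtain ⟨n', _, hrej⟩ := (hg2Inv n).2 v hn
      exact hrej (S n') subset_rfl (hSinf n') (accepts_of_mem B hvB)

end GalvinMain
section PlegmaRamsey

/-- plegma `m`-tuple with components in `F` and union inside `L`. -/
def TupIn (F : Set (Finset ℕ)) (m : ℕ) (L : Set ℕ) (s : ℕ → Finset ℕ) : Prop :=
  (∀ j < m, s j ∈ F ∧ ↑(s j) ⊆ L) ∧ IsPlegma m s

lemma tupIn_mono {F m} {L L' : Set ℕ} (h : L ⊆ L') {s} (hs : TupIn F m L s) :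
    TupIn F m L' s :=
  ⟨fun j hj => ⟨(hs.1 j hj).1, ((hs.1 j hj).2).trans h⟩, hs.2⟩

lemma rigid_conclude {F : Set (Finset ℕ)} (hFa : ∀ s ∈ F, ∀ t ∈ F, s ⊆ t → s = t)
    {m : ℕ} {s t : ℕ → Finset ℕ} (hsF : ∀ j < m, s j ∈ F) (htF : ∀ j < m, t j ∈ F)
    (hsp : IsPlegma m s) (htp : IsPlegma m t)
    (hseg : IsInitialSegment (UU m t) (UU m s)) : ∀ i < m, s i = t i := by
  rcases rigid_aux (UU m t).card m s t (isPlegma_wp hsp) (isPlegma_wp htp) le_rfl hseg with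
    h | ⟨i, hi, hne, hsegi⟩
  · exact h
  · exfalso
    rcases hsegi with h1 | h1
    · exact hne (hFa (t i) (htF i hi) (s i) (hsF i hi) h1.1)
    · exact hne ((hFa (s i) (hsF i hi) (t i) (htF i hi) h1.1).symm)

lemma plegma_ramsey2 {F : Set (Finset ℕ)} (hFa : ∀ s ∈ F, ∀ t ∈ F, s ⊆ t → s = t)
    (m : ℕ) (c : (ℕ → Finset ℕ) → Prop)
    (hcinv : ∀ s s', (∀ i < m, s i = s' i) → (c s ↔ c s'))
    (A : Set ℕ) (hA : A.Infinite) :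
    ∃ L, L ⊆ A ∧ L.Infinite ∧
      ((∀ s, TupIn F m L s → c s) ∨ (∀ s, TupIn F m L s → ¬ c s)) := by
  classical
  set B : Set (Finset ℕ) :=
    {u | ∃ s, (∀ j < m, s j ∈ F) ∧ IsPlegma m s ∧ UU m s = u ∧ c s} with hB
  obtain ⟨L, hLA, hLinf, hcase⟩ := galvin B A hA
  have hUUL : ∀ s, TupIn F m L s → ↑(UU m s) ⊆ L := by
    intro s hs z hz
    rcases mem_UU.mp (by exact_mod_cast hz) with ⟨j, hj, hzj⟩
    exact (hs.1 j hj).2 hzj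
  refine ⟨L, hLA, hLinf, ?_⟩
  rcases hcase with h1 | h2
  · right
    intro s hs hcs
    exact h1 (UU m s) (hUUL s hs) ⟨s, fun j hj => (hs.1 j hj).1, hs.2, rfl, hcs⟩
  · left
    intro s hs
    have huL : ↑(UU m s) ⊆ L := hUUL s hs
    set X : Set ℕ := ↑(UU m s) ∪ {z ∈ L | ∀ y ∈ UU m s, y < z} with hX
    have hXL : X ⊆ L := by
      intro z hz
      rcases hz with hz | hz
      · exact huL hz
      · exact hz.1
    have hXinf : X.Infinite := by
      apply Set.Infinite.mono (s := L \ ⋃ y ∈ (↑(UU m s) : Set ℕ), Set.Iic y)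
      · intro z hz
        right
        refine ⟨hz.1, ?_⟩
        intro y hy
        by_contra hc
        exact hz.2 (Set.mem_biUnion (by exact_mod_cast hy) (by omega : z ≤ y))
      · exact hLinf.diff (Set.Finite.biUnion (UU m s).finite_toSet (fun y _ => Set.finite_Iic y))
    have hupre : PrefixOf (UU m s) X := by
      constructor
      · intro z hz; exact Or.inl hz
      · intro z hzX hznot y hy
        rcases hzX with hz | hz
        · exact absurd (by exact_mod_cast hz) hznot
        · exact hz.2 y hy
    obtain ⟨u'', hu''B, hu''pre⟩ := h2 X hXL hXinf
    obtain ⟨s'', hs''F, hs''pleg, hs''u, hcs''⟩ := hu''B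
    have hu''pre' : PrefixOf (UU m s'') X := hs''u ▸ hu''pre
    rcases prefixOf_comparable hu''pre' hupre with hseg | hseg
    · -- UU m s initial segment of UU m s''
      have heq := rigid_conclude hFa hs''F (fun j hj => (hs.1 j hj).1) hs''pleg hs.2 hseg
      exact (hcinv s'' s (fun i hi => heq i hi)).mp hcs''
    · have heq := rigid_conclude hFa (fun j hj => (hs.1 j hj).1) hs''F hs.2 hs''pleg hseg
      exact (hcinv s'' s (fun i hi => (heq i hi).symm)).mp hcs''

lemma plegma_ramsey_fin {F : Set (Finset ℕ)} (hFa : ∀ s ∈ F, ∀ t ∈ F, s ⊆ t → s = t)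
    (m : ℕ) :
    ∀ (r : ℕ) (c : (ℕ → Finset ℕ) → ℕ),
      (∀ s s', (∀ i < m, s i = s' i) → c s = c s') → (∀ s, c s < r) →
      ∀ (A : Set ℕ), A.Infinite →
      ∃ L, L ⊆ A ∧ L.Infinite ∧ ∃ p, ∀ s, TupIn F m L s → c s = p := by
  intro r
  induction r with
  | zero =>
    intro c _ hcb
    exact absurd (hcb (fun _ => ∅)) (Nat.not_lt_zero _)
  | succ r IH =>
    intro c hcinv hcb A hA
    obtain ⟨L1, hL1A, hL1inf, hcase⟩ := plegma_ramsey2 hFa m (fun s => c s = r)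
      (fun s s' h => by rw [hcinv s s' h]) A hA
    rcases hcase with hall | hnone
    · exact ⟨L1, hL1A, hL1inf, r, fun s hs => hall s hs⟩
    · rcases Nat.eq_zero_or_pos r with rfl | hrpos
      · refine ⟨L1, hL1A, hL1inf, 0, ?_⟩
        intro s hs
        have h1 := hcb s
        have h2 := hnone s hs
        omega
      · obtain ⟨L, hLL1, hLinf, p, hp⟩ := IH (fun s => min (c s) (r - 1))
          (fun s s' h => by rw [hcinv s s' h])
          (fun s => by omega) L1 hL1inf
        refine ⟨L, hLL1.trans hL1A, hLinf, p, ?_⟩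
        intro s hs
        have h1 := hp s hs
        have h2 := hnone s (tupIn_mono hLL1 hs)
        have h3 := hcb s
        omega

end PlegmaRamsey
section StabTools

lemma chain_shrink {α : Type*} (P : α → Set ℕ → Prop)
    (hmono : ∀ x (S S' : Set ℕ), S' ⊆ S → P x S → P x S')
    (hstep : ∀ x (A : Set ℕ), A.Infinite → ∃ L, L ⊆ A ∧ L.Infinite ∧ P x L) :
    ∀ (l : List α) (A : Set ℕ), A.Infinite →
      ∃ L, L ⊆ A ∧ L.Infinite ∧ ∀ x ∈ l, P x L := by
  intro l
  induction l with
  | nil => intro A hA; exact ⟨A, subset_rfl, hA, by simp⟩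
  | cons x l IHl =>
    intro A hA
    obtain ⟨L1, h1, h2, h3⟩ := IHl A hA
    obtain ⟨L2, g1, g2, g3⟩ := hstep x L1 h2
    refine ⟨L2, g1.trans h1, g2, ?_⟩
    intro y hy
    rcases List.mem_cons.mp hy with rfl | hyl
    · exact g3
    · exact hmono y L1 L2 g1 (h3 y hyl)

lemma stab_pair {F : Set (Finset ℕ)} (hFa : ∀ s ∈ F, ∀ t ∈ F, s ⊆ t → s = t) (m : ℕ)
    (φ : (ℕ → Finset ℕ) → ℝ) (hφinv : ∀ s s', (∀ i < m, s i = s' i) → φ s = φ s')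
    (D : ℝ) (hφ0 : ∀ s, 0 ≤ φ s) (hφD : ∀ s, φ s ≤ D)
    {ε : ℝ} (hε : 0 < ε) (A : Set ℕ) (hA : A.Infinite) :
    ∃ L, L ⊆ A ∧ L.Infinite ∧
      ∀ s s', TupIn F m L s → TupIn F m L s' → |φ s - φ s'| ≤ ε := by
  obtain ⟨L, h1, h2, p, hp⟩ := plegma_ramsey_fin hFa m (⌊D/ε⌋₊ + 1)
    (fun s => ⌊φ s / ε⌋₊)
    (fun s s' h => by rw [hφinv s s' h])
    (fun s => by
      have h3 : ⌊φ s / ε⌋₊ ≤ ⌊D / ε⌋₊ :=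
        Nat.floor_le_floor (by gcongr; exact hφD s)
      omega) A hA
  refine ⟨L, h1, h2, ?_⟩
  intro s s' hs hs'
  have key : ∀ u, TupIn F m L u → (p : ℝ) * ε ≤ φ u ∧ φ u < ((p : ℝ) + 1) * ε := by
    intro u hu
    have e1 := hp u hu
    constructor
    · have := Nat.floor_le (div_nonneg (hφ0 u) (le_of_lt hε))
      rw [e1] at this
      exact (le_div_iff₀ hε).mp this
    · have := Nat.lt_floor_add_one (φ u / ε)
      rw [e1] at this
      have h4 := (div_lt_iff₀ hε).mp this
      exact_mod_cast h4
  obtain ⟨a1, a2⟩ := key s hs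
  obtain ⟨b1, b2⟩ := key s' hs'
  rw [abs_le]
  constructor <;> nlinarith

end StabTools

section Values

variable {X : Type*} [NormedAddCommGroup X] [NormedSpace ℝ X]

/-- value of an `m`-tuple under coefficients `a`. -/
noncomputable def val (k : ℕ) (x : ℕ → Finset ℕ → X) (m : ℕ) (a : ℕ → ℝ)
    (s : ℕ → Finset ℕ) : ℝ :=
  ‖∑ j ∈ Finset.range m, a j • x (j % k) (s j)‖

lemma val_inv (k : ℕ) (x : ℕ → Finset ℕ → X) (m : ℕ) (a : ℕ → ℝ) (s s' : ℕ → Finset ℕ)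
    (h : ∀ i < m, s i = s' i) : val k x m a s = val k x m a s' := by
  unfold val
  congr 1
  apply Finset.sum_congr rfl
  intro j hj
  rw [h j (Finset.mem_range.mp hj)]

lemma val_nonneg (k : ℕ) (x : ℕ → Finset ℕ → X) (m : ℕ) (a : ℕ → ℝ) (s : ℕ → Finset ℕ) :
    0 ≤ val k x m a s := norm_nonneg _

lemma val_le {k : ℕ} {x : ℕ → Finset ℕ → X} {Cx : ℝ} (hx : ∀ j t, ‖x (j % k) t‖ ≤ Cx)
    (m : ℕ) {a : ℕ → ℝ} (ha : ∀ j, |a j| ≤ 1) (s : ℕ → Finset ℕ) :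
    val k x m a s ≤ m * Cx := by
  unfold val
  calc ‖∑ j ∈ Finset.range m, a j • x (j % k) (s j)‖
      ≤ ∑ j ∈ Finset.range m, ‖a j • x (j % k) (s j)‖ := norm_sum_le _ _
    _ ≤ ∑ _j ∈ Finset.range m, Cx := by
        apply Finset.sum_le_sum
        intro j _
        rw [norm_smul]
        have h1 : ‖a j‖ ≤ 1 := by rw [Real.norm_eq_abs]; exact ha j
        have h2 := hx j (s j)
        have h0 : (0:ℝ) ≤ ‖x (j % k) (s j)‖ := norm_nonneg _
        nlinarith [norm_nonneg (a j)]
    _ = m * Cx := by rw [Finset.sum_const, Finset.card_range]; simp [nsmul_eq_mul]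

lemma val_lipschitz {k : ℕ} {x : ℕ → Finset ℕ → X} {Cx : ℝ} (hx : ∀ j t, ‖x (j % k) t‖ ≤ Cx)
    (m : ℕ) (a b : ℕ → ℝ) (s : ℕ → Finset ℕ) :
    |val k x m a s - val k x m b s| ≤ ∑ j ∈ Finset.range m, |a j - b j| * Cx := by
  unfold val
  have h1 := abs_norm_sub_norm_le (∑ j ∈ Finset.range m, a j • x (j % k) (s j))
    (∑ j ∈ Finset.range m, b j • x (j % k) (s j))
  rw [← Finset.sum_sub_distrib] at h1
  refine h1.trans ?_
  calc ‖∑ j ∈ Finset.range m, (a j • x (j % k) (s j) - b j • x (j % k) (s j))‖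
      ≤ ∑ j ∈ Finset.range m, ‖a j • x (j % k) (s j) - b j • x (j % k) (s j)‖ := norm_sum_le _ _
    _ ≤ ∑ j ∈ Finset.range m, |a j - b j| * Cx := by
        apply Finset.sum_le_sum
        intro j _
        rw [← sub_smul, norm_smul, Real.norm_eq_abs]
        have h2 := hx j (s j)
        have h0 : (0:ℝ) ≤ ‖x (j % k) (s j)‖ := norm_nonneg _
        have h3 : (0:ℝ) ≤ |a j - b j| := abs_nonneg _
        nlinarith

end Values

section Grid

/-- finite grid of coefficient vectors. -/
noncomputable def grid (m K : ℕ) : List (ℕ → ℝ) :=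
  ((Finset.univ : Finset (Fin m → Fin (2*K+1))).toList).map
    (fun f => fun i : ℕ => if h : i < m then ((f ⟨i, h⟩ : ℕ) : ℝ) / K - 1 else 0)

lemma grid_bounded {m K : ℕ} (hK : 1 ≤ K) {b : ℕ → ℝ} (hb : b ∈ grid m K) :
    ∀ j, |b j| ≤ 1 := by
  rcases List.mem_map.mp hb with ⟨f, _, rfl⟩
  intro j
  by_cases h : j < m
  · simp only [dif_pos h]
    have h1 : ((f ⟨j, h⟩ : ℕ) : ℝ) ≤ 2*K := by
      have := (f ⟨j, h⟩).2
      have h2 : ((f ⟨j, h⟩ : ℕ) : ℝ) ≤ ((2*K : ℕ) : ℝ) := by exact_mod_cast Nat.lt_succ_iff.mp this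
      simpa using h2
    have h0 : (0:ℝ) ≤ ((f ⟨j, h⟩ : ℕ) : ℝ) := Nat.cast_nonneg _
    have hKpos : (0:ℝ) < K := by exact_mod_cast hK
    rw [abs_le]
    constructor
    · have : (0:ℝ) ≤ ((f ⟨j, h⟩ : ℕ) : ℝ) / K := div_nonneg h0 (le_of_lt hKpos)
      linarith
    · have : ((f ⟨j, h⟩ : ℕ) : ℝ) / K ≤ 2 := by
        rw [div_le_iff₀ hKpos]
        linarith
      linarith
  · simp only [dif_neg h]
    norm_num

lemma grid_round {m K : ℕ} (hK : 1 ≤ K) (a : ℕ → ℝ) (ha : ∀ j, |a j| ≤ 1) :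
    ∃ b ∈ grid m K, (∀ j < m, |a j - b j| ≤ 1/K) ∧ (∀ j, ¬ j < m → b j = 0) := by
  have hKpos : (0:ℝ) < K := by exact_mod_cast hK
  set f : Fin m → Fin (2*K+1) := fun i => ⟨min ⌊(a i + 1) * K⌋₊ (2*K), by omega⟩ with hf
  refine ⟨_, List.mem_map.mpr ⟨f, by simp [Finset.mem_toList], rfl⟩, ?_, ?_⟩
  · intro j hj
    simp only [dif_pos hj, hf]
    have ha1 := (abs_le.mp (ha j)).1
    have ha2 := (abs_le.mp (ha j)).2
    set c : ℝ := (a j + 1) * K with hc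
    have hc0 : 0 ≤ c := by
      apply mul_nonneg _ (le_of_lt hKpos)
      linarith
    have hc2K : c ≤ 2*K := by
      rw [hc]
      nlinarith
    have hfloorle : ⌊c⌋₊ ≤ 2*K := by
      have h1 : ⌊c⌋₊ ≤ ⌊((2*K : ℕ) : ℝ)⌋₊ := Nat.floor_le_floor (by push_cast; linarith)
      rwa [Nat.floor_natCast] at h1
    have hmin : min ⌊c⌋₊ (2*K) = ⌊c⌋₊ := min_eq_left hfloorle
    rw [hmin]
    have hfl : (⌊c⌋₊ : ℝ) ≤ c := Nat.floor_le hc0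
    have hfl2 : c < ⌊c⌋₊ + 1 := Nat.lt_floor_add_one c
    have heq : a j - ((⌊c⌋₊ : ℝ) / K - 1) = (c - ⌊c⌋₊) / K := by
      field_simp [hc]
      ring
    rw [heq, abs_le]
    constructor
    · apply le_trans (by norm_num [le_of_lt hKpos] : -(1/(K:ℝ)) ≤ 0)
      exact div_nonneg (by linarith) (le_of_lt hKpos)
    · have hnum : c - (⌊c⌋₊ : ℝ) ≤ 1 := by linarith
      calc (c - (⌊c⌋₊:ℝ)) / K ≤ 1 / K := by gcongr
        _ = 1/K := rfl
  · intro j hj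
    simp only [dif_neg hj]

end Grid
section IterStab

variable {X : Type*} [NormedAddCommGroup X] [NormedSpace ℝ X]

lemma val_bound_gen {k : ℕ} {x : ℕ → Finset ℕ → X} {Cx : ℝ}
    (hx : ∀ j t, ‖x (j % k) t‖ ≤ Cx) (m : ℕ) (b : ℕ → ℝ) (s : ℕ → Finset ℕ) :
    val k x m b s ≤ (∑ i ∈ Finset.range m, |b i|) * Cx := by
  have h0 : val k x m (fun _ => (0:ℝ)) s = 0 := by
    unfold val
    simp
  have h1 := val_lipschitz hx m b (fun _ => (0:ℝ)) s
  rw [h0] at h1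
  have h2 : |val k x m b s - 0| = val k x m b s := by
    rw [sub_zero, abs_of_nonneg (val_nonneg _ _ _ _ _)]
  rw [h2] at h1
  refine h1.trans (le_of_eq ?_)
  rw [Finset.sum_mul]
  apply Finset.sum_congr rfl
  intro i _
  rw [sub_zero]

lemma iter_stab {F : Set (Finset ℕ)} (hFa : ∀ s ∈ F, ∀ t ∈ F, s ⊆ t → s = t)
    (k : ℕ) (x : ℕ → Finset ℕ → X) {Cx : ℝ} (hx : ∀ j t, ‖x (j % k) t‖ ≤ Cx)
    (hCx : 0 ≤ Cx) (j : ℕ) (A : Set ℕ) (hA : A.Infinite) :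
    ∃ L, L ⊆ A ∧ L.Infinite ∧ ∀ m, 1 ≤ m → m ≤ j → ∀ a : ℕ → ℝ, (∀ i, |a i| ≤ 1) →
      ∀ s s', TupIn F m L s → TupIn F m L s' →
        |val k x m a s - val k x m a s'| ≤ 3/(j+1) := by
  classical
  set K := (j+1)*(j+1)*(⌈Cx⌉₊+1) with hK
  have hK1 : 1 ≤ K := by
    rw [hK]
    have h1 : 1 ≤ j + 1 := by omega
    have h2 : 1 ≤ ⌈Cx⌉₊ + 1 := by omega
    calc 1 = 1*1*1 := by ring
      _ ≤ (j+1)*(j+1)*(⌈Cx⌉₊+1) := by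
          apply Nat.mul_le_mul (Nat.mul_le_mul h1 h1) h2
  set l : List (ℕ × (ℕ → ℝ)) :=
    (List.range (j+1)).flatMap (fun m => (grid m K).map (fun b => (m, b))) with hl
  set P : (ℕ × (ℕ → ℝ)) → Set ℕ → Prop := fun q S =>
    ∀ s s', TupIn F q.1 S s → TupIn F q.1 S s' →
      |val k x q.1 q.2 s - val k x q.1 q.2 s'| ≤ 1/(j+1) with hP
  have hmono : ∀ q (S S' : Set ℕ), S' ⊆ S → P q S → P q S' := by
    intro q S S' hsub hp s s' hs hs'
    exact hp s s' (tupIn_mono hsub hs) (tupIn_mono hsub hs')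
  have hstep : ∀ q (A' : Set ℕ), A'.Infinite → ∃ L, L ⊆ A' ∧ L.Infinite ∧ P q L := by
    intro q A' hA'
    have hεpos : (0:ℝ) < 1/(j+1) := by positivity
    obtain ⟨L, h1, h2, h3⟩ := stab_pair hFa q.1 (val k x q.1 q.2)
      (fun s s' h => val_inv k x q.1 q.2 s s' h)
      ((∑ i ∈ Finset.range q.1, |q.2 i|) * Cx)
      (fun s => val_nonneg _ _ _ _ _)
      (fun s => val_bound_gen hx q.1 q.2 s) hεpos A' hA'
    exact ⟨L, h1, h2, h3⟩
  obtain ⟨L, hLA, hLinf, hall⟩ := chain_shrink P hmono hstep l A hA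
  refine ⟨L, hLA, hLinf, ?_⟩
  intro m hm1 hmj a ha s s' hs hs'
  obtain ⟨b, hbmem, hbround, hbzero⟩ := grid_round (m := m) (K := K) hK1 a ha
  have hqmem : (m, b) ∈ l := by
    rw [hl]
    exact List.mem_flatMap.mpr ⟨m, List.mem_range.mpr (by omega),
      List.mem_map.mpr ⟨b, hbmem, rfl⟩⟩
  have hPb := hall (m, b) hqmem s s' hs hs'
  have hKpos : (0:ℝ) < (K:ℕ) := by exact_mod_cast hK1
  have hCr : Cx ≤ (⌈Cx⌉₊ : ℝ) + 1 := by
    have := Nat.le_ceil Cx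
    linarith
  have hKr : ((K:ℕ) : ℝ) = ((j:ℝ)+1)*(((j:ℝ)+1)*((⌈Cx⌉₊ : ℝ)+1)) := by
    rw [hK]
    push_cast
    ring
  have hfinal : (m:ℝ) * (1/(K:ℕ) * Cx) ≤ 1/((j:ℝ)+1) := by
    have h2 : (m:ℝ)*Cx ≤ ((j:ℝ)+1)*((⌈Cx⌉₊ : ℝ)+1) := by
      apply mul_le_mul _ hCr hCx (by positivity)
      have : (m:ℝ) ≤ (j:ℝ) := by exact_mod_cast hmj
      linarith
    have heq : (m:ℝ) * (1/(K:ℕ) * Cx) = ((m:ℝ)*Cx)/(K:ℕ) := by ring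
    rw [heq, div_le_iff₀ hKpos, hKr]
    calc (m:ℝ)*Cx ≤ ((j:ℝ)+1)*((⌈Cx⌉₊ : ℝ)+1) := h2
      _ = 1/((j:ℝ)+1) * (((j:ℝ)+1)*(((j:ℝ)+1)*((⌈Cx⌉₊ : ℝ)+1))) := by
          field_simp
  have hround : ∀ u, |val k x m a u - val k x m b u| ≤ 1/((j:ℝ)+1) := by
    intro u
    refine (val_lipschitz hx m a b u).trans ?_
    calc ∑ i ∈ Finset.range m, |a i - b i| * Cx
        ≤ ∑ _i ∈ Finset.range m, (1/(K:ℕ)) * Cx := by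
          apply Finset.sum_le_sum
          intro i hi
          exact mul_le_mul_of_nonneg_right (hbround i (Finset.mem_range.mp hi)) hCx
      _ = (m:ℝ) * (1/(K:ℕ) * Cx) := by
          rw [Finset.sum_const, Finset.card_range]
          simp [nsmul_eq_mul]
      _ ≤ 1/((j:ℝ)+1) := hfinal
  have hchain1 := abs_sub_le (val k x m a s) (val k x m b s) (val k x m a s')
  have hchain2 := abs_sub_le (val k x m b s) (val k x m b s') (val k x m a s')
  have hlast : |val k x m b s' - val k x m a s'| = |val k x m a s' - val k x m b s'| :=
    abs_sub_comm _ _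
  have h1 := hround s
  have h2 := hround s'
  have h3 : (3:ℝ)/((j:ℝ)+1) = 1/((j:ℝ)+1) + 1/((j:ℝ)+1) + 1/((j:ℝ)+1) := by ring
  have hgoal : |val k x m a s - val k x m a s'| ≤ 3/((j:ℝ)+1) := by
    rw [h3]
    rw [hlast] at hchain2
    linarith
  exact_mod_cast hgoal
end IterStab
section AssemblyTools

variable {X : Type*} [NormedAddCommGroup X] [NormedSpace ℝ X]

lemma val_zero (k : ℕ) (x : ℕ → Finset ℕ → X) (m : ℕ) (s : ℕ → Finset ℕ) :
    val k x m (fun _ => (0:ℝ)) s = 0 := by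
  unfold val; simp

lemma val_add_le (k : ℕ) (x : ℕ → Finset ℕ → X) (m : ℕ) (a b : ℕ → ℝ) (s : ℕ → Finset ℕ) :
    val k x m (fun j => a j + b j) s ≤ val k x m a s + val k x m b s := by
  unfold val
  have h : ∑ j ∈ Finset.range m, (a j + b j) • x (j % k) (s j)
      = (∑ j ∈ Finset.range m, a j • x (j % k) (s j))
        + ∑ j ∈ Finset.range m, b j • x (j % k) (s j) := by
    rw [← Finset.sum_add_distrib]
    apply Finset.sum_congr rfl
    intro j _
    rw [add_smul]
  rw [h]
  exact norm_add_le _ _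

lemma val_neg (k : ℕ) (x : ℕ → Finset ℕ → X) (m : ℕ) (a : ℕ → ℝ) (s : ℕ → Finset ℕ) :
    val k x m (fun j => -(a j)) s = val k x m a s := by
  unfold val
  have h : ∑ j ∈ Finset.range m, (-(a j)) • x (j % k) (s j)
      = -(∑ j ∈ Finset.range m, a j • x (j % k) (s j)) := by
    rw [← Finset.sum_neg_distrib]
    apply Finset.sum_congr rfl
    intro j _
    rw [neg_smul]
  rw [h, norm_neg]

lemma val_smul (k : ℕ) (x : ℕ → Finset ℕ → X) (m : ℕ) (c : ℝ) (a : ℕ → ℝ)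
    (s : ℕ → Finset ℕ) : val k x m (fun j => c * a j) s = |c| * val k x m a s := by
  unfold val
  have h : ∑ j ∈ Finset.range m, (c * a j) • x (j % k) (s j)
      = c • (∑ j ∈ Finset.range m, a j • x (j % k) (s j)) := by
    rw [Finset.smul_sum]
    apply Finset.sum_congr rfl
    intro j _
    rw [smul_smul]
  rw [h, norm_smul, Real.norm_eq_abs]

/-- build a seminorm out of tuple-values converging pointwise. -/
lemma seminorm_of_limits (k : ℕ) (x : ℕ → Finset ℕ → X) (len : ℕ → ℕ)
    (T : ℕ → ℕ → Finset ℕ)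
    (hconv : ∀ v : ℕ →₀ ℝ, CauchySeq (fun r => val k x (len r) (fun j => v j) (T r))) :
    ∃ ρ : Seminorm ℝ (ℕ →₀ ℝ), ∀ v : ℕ →₀ ℝ,
      Filter.Tendsto (fun r => val k x (len r) (fun j => v j) (T r))
        Filter.atTop (nhds (ρ v)) := by
  classical
  have hlim : ∀ v : ℕ →₀ ℝ, ∃ c : ℝ,
      Filter.Tendsto (fun r => val k x (len r) (fun j => v j) (T r)) Filter.atTop (nhds c) :=
    fun v => cauchySeq_tendsto_of_complete (hconv v)
  choose ρf hρf using hlim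
  have hzero : ρf 0 = 0 := by
    apply tendsto_nhds_unique (hρf 0)
    have : (fun r => val k x (len r) (fun j => (0 : ℕ →₀ ℝ) j) (T r)) = fun _ => (0:ℝ) := by
      funext r
      have : (fun j => (0 : ℕ →₀ ℝ) j) = fun _ => (0:ℝ) := by funext j; simp
      rw [this, val_zero]
    rw [this]
    exact tendsto_const_nhds
  have hadd : ∀ u v : ℕ →₀ ℝ, ρf (u + v) ≤ ρf u + ρf v := by
    intro u v
    apply le_of_tendsto_of_tendsto' (hρf (u+v)) ((hρf u).add (hρf v))
    intro r
    have he : (fun j => (u + v) j) = fun j => u j + v j := by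
      funext j; simp
    rw [he]
    exact val_add_le k x (len r) (fun j => u j) (fun j => v j) (T r)
  have hneg : ∀ v : ℕ →₀ ℝ, ρf (-v) = ρf v := by
    intro v
    apply tendsto_nhds_unique (hρf (-v))
    have he : (fun r => val k x (len r) (fun j => (-v) j) (T r))
        = fun r => val k x (len r) (fun j => v j) (T r) := by
      funext r
      have h2 : (fun j => (-v) j) = fun j => -(v j) := by funext j; simp
      rw [h2]
      exact val_neg k x (len r) (fun j => v j) (T r)
    rw [he]
    exact hρf v
  have hsmul : ∀ (c : ℝ) (v : ℕ →₀ ℝ), ρf (c • v) = ‖c‖ * ρf v := by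
    intro c v
    apply tendsto_nhds_unique (hρf (c • v))
    have he : (fun r => val k x (len r) (fun j => (c • v) j) (T r))
        = fun r => ‖c‖ * val k x (len r) (fun j => v j) (T r) := by
      funext r
      have h2 : (fun j => (c • v) j) = fun j => c * v j := by
        funext j; simp
      rw [h2, val_smul, Real.norm_eq_abs]
    rw [he]
    exact (hρf v).const_mul ‖c‖
  exact ⟨{ toFun := ρf, map_zero' := hzero, add_le' := hadd, neg' := hneg, smul' := hsmul },
    hρf⟩

lemma isPlegma_mono {l l' : ℕ} {s : ℕ → Finset ℕ} (h : l' ≤ l) (hp : IsPlegma l s) :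
    IsPlegma l' s := by
  refine ⟨fun i hi => hp.1 i (lt_of_lt_of_le hi h), ?_, ?_⟩
  · intro i j hij hj
    exact hp.2.1 i j hij (lt_of_lt_of_le hj h)
  · intro i hi j hj
    exact hp.2.2 i (lt_of_lt_of_le hi h) j (lt_of_lt_of_le hj h)

lemma nth_singleton (a : ℕ) : nth ({a} : Finset ℕ) 1 = a := by
  rw [nth_one ({a} : Finset ℕ) ⟨a, Finset.mem_singleton_self a⟩]
  simp

lemma comb_apply (a : ℕ → ℝ) (m j : ℕ) : (comb a m) j = if j < m then a j else 0 := by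
  unfold comb
  rw [Finsupp.finset_sum_apply]
  by_cases h : j < m
  · rw [if_pos h, Finset.sum_eq_single j]
    · rw [Finsupp.single_apply, if_pos rfl]
    · intro i _ hij
      rw [Finsupp.single_apply, if_neg hij]
    · intro hj
      exact absurd (Finset.mem_range.mpr h) hj
  · rw [if_neg h]
    apply Finset.sum_eq_zero
    intro i hi
    rw [Finsupp.single_apply, if_neg]
    intro he
    rw [Finset.mem_range] at hi
    omega

lemma tendsto_c_div (c : ℝ) : Filter.Tendsto (fun n : ℕ => c/((n:ℝ)+1))
    Filter.atTop (nhds 0) := by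
  apply Filter.Tendsto.div_atTop (tendsto_const_nhds)
  have h1 : Filter.Tendsto (fun n : ℕ => ((n:ℝ))) Filter.atTop Filter.atTop :=
    tendsto_natCast_atTop_atTop
  exact Filter.tendsto_atTop_add_const_right _ 1 h1

lemma mem_restrict {F : Set (Finset ℕ)} {L : ℕ → ℕ} {s : Finset ℕ} :
    s ∈ restrict F L ↔ s ∈ F ∧ ↑s ⊆ Set.range L := Iff.rfl

end AssemblyTools
/-- Theorem 12: existence of joint ℱ-models. -/
theorem statement4 {X : Type*} [NormedAddCommGroup X] [NormedSpace ℝ X] [CompleteSpace X]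
    (F : Set (Finset ℕ)) (hF : RegularThin F)
    (k : ℕ) (hk : 1 ≤ k) (x : ℕ → Finset ℕ → X)
    (hbdd : ∃ C : ℝ, ∀ i < k, ∀ s : Finset ℕ, ‖x i s‖ ≤ C)
    (M : ℕ → ℕ) (hM : StrictMono M) :
    ∃ L : ℕ → ℕ, StrictMono L ∧ Set.range L ⊆ Set.range M ∧
      ∃ ρ : Seminorm ℝ (ℕ →₀ ℝ), ∃ δ : ℕ → ℝ, NullPos δ ∧
        JointGenerates F k x L δ ρ := by
  classical
  obtain ⟨R, hReg, hFdef⟩ := hF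
  have hFa : ∀ s ∈ F, ∀ t ∈ F, s ⊆ t → s = t := by
    intro s hs t ht hst
    rw [hFdef] at hs ht
    exact hs.2 t ht.1 hst
  obtain ⟨C, hC⟩ := hbdd
  set Cx := max C 0 with hCxdef
  have hCx : (0:ℝ) ≤ Cx := le_max_right C 0
  have hx : ∀ j t, ‖x (j % k) t‖ ≤ Cx := by
    intro j t
    exact (hC (j % k) (Nat.mod_lt j (by omega)) t).trans (le_max_left C 0)
  have hMinf : (Set.range M).Infinite := Set.infinite_range_of_injective hM.injective
  -- stages
  set Inv1 : ℕ × Set ℕ → Prop := fun p => p.2.Infinite ∧ p.2 ⊆ Set.range M ∧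
    (∀ m, 1 ≤ m → m ≤ p.1 → ∀ a : ℕ → ℝ, (∀ i, |a i| ≤ 1) →
      ∀ s s', TupIn F m p.2 s → TupIn F m p.2 s' →
        |val k x m a s - val k x m a s'| ≤ 3/((p.1:ℝ)+1)) with hInv1
  set Rel1 : ℕ × Set ℕ → ℕ × Set ℕ → Prop := fun p q => q.1 = p.1 + 1 ∧ q.2 ⊆ p.2 with hRel1
  obtain ⟨S0, hS0sub, hS0inf, hS0stab⟩ := iter_stab hFa k x hx hCx 0 (Set.range M) hMinf
  have hinit1 : Inv1 (0, S0) := ⟨hS0inf, hS0sub, by exact_mod_cast hS0stab⟩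
  have hstep1 : ∀ p, Inv1 p → ∃ q, Inv1 q ∧ Rel1 p q := by
    intro p hp
    obtain ⟨L, h1, h2, h3⟩ := iter_stab hFa k x hx hCx (p.1+1) p.2 hp.1
    refine ⟨(p.1+1, L), ⟨h2, h1.trans hp.2.1, ?_⟩, rfl, h1⟩
    exact_mod_cast h3
  obtain ⟨g1, hg10, hg1Inv, hg1Rel⟩ := iterate_chain Inv1 Rel1 (0, S0) hinit1 hstep1
  have hfst : ∀ n, (g1 n).1 = n := by
    intro n
    induction n with
    | zero => rw [hg10]
    | succ n IH => rw [(hg1Rel n).1, IH]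
  set S : ℕ → Set ℕ := fun n => (g1 n).2 with hSdef
  have hSinf : ∀ n, (S n).Infinite := fun n => (hg1Inv n).1
  have hSsubM : ∀ n, S n ⊆ Set.range M := fun n => (hg1Inv n).2.1
  have hSdown : ∀ m n, m ≤ n → S n ⊆ S m := fun m n h =>
    antitone_nat_of_succ_le (f := S) (fun r => (hg1Rel r).2) h
  have hkey : ∀ n, ∀ m, 1 ≤ m → m ≤ n → ∀ a : ℕ → ℝ, (∀ i, |a i| ≤ 1) →
      ∀ s s', TupIn F m (S n) s → TupIn F m (S n) s' →
        |val k x m a s - val k x m a s'| ≤ 3/((n:ℝ)+1) := by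
    intro n
    have h := (hg1Inv n).2.2
    rw [hfst n] at h
    exact h
  -- the diagonal sequence ℓ
  set Inv2 : ℕ × ℕ → Prop := fun p => p.2 ∈ S p.1 with hInv2
  set Rel2 : ℕ × ℕ → ℕ × ℕ → Prop := fun p q => q.1 = p.1 + 1 ∧ p.2 < q.2 with hRel2
  obtain ⟨v0, hv0⟩ := (hSinf 0).nonempty
  have hstep2 : ∀ p, Inv2 p → ∃ q, Inv2 q ∧ Rel2 p q := by
    intro p _
    obtain ⟨v', hv'S, hv'gt⟩ := (hSinf (p.1+1)).exists_gt p.2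
    exact ⟨(p.1+1, v'), hv'S, rfl, hv'gt⟩
  obtain ⟨g2, hg20, hg2Inv, hg2Rel⟩ := iterate_chain Inv2 Rel2 (0, v0) hv0 hstep2
  have hfst2 : ∀ n, (g2 n).1 = n := by
    intro n
    induction n with
    | zero => rw [hg20]
    | succ n IH => rw [(hg2Rel n).1, IH]
  set ℓ : ℕ → ℕ := fun n => (g2 n).2 with hℓdef
  have hℓmono : StrictMono ℓ := strictMono_nat_of_lt_succ (fun n => (hg2Rel n).2)
  have hℓS : ∀ n, ℓ n ∈ S n := by
    intro n
    have h := hg2Inv n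
    rw [hInv2] at h
    rw [hfst2 n] at h
    exact h
  have hrange : Set.range ℓ ⊆ Set.range M := by
    intro y hy
    obtain ⟨n, hn⟩ := hy
    exact hSsubM n (hn ▸ hℓS n)
  refine ⟨ℓ, hℓmono, hrange, ?_⟩
  -- a deep tuple has all its components inside stage S n
  have hdeep : ∀ n m (s : ℕ → Finset ℕ), 1 ≤ m → (∀ j < m, s j ∈ restrict F ℓ) →
      IsPlegma m s → ℓ n ≤ nth (s 0) 1 → TupIn F m (S n) s := by
    intro n m s hm hcomps hpleg hdepth
    refine ⟨?_, hpleg⟩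
    intro j hj
    refine ⟨(hcomps j hj).1, ?_⟩
    intro y hy
    have hy' : y ∈ s j := hy
    obtain ⟨r, hr⟩ := (hcomps j hj).2 hy
    have hne0 : (s 0).Nonempty := hpleg.1 0 (by omega)
    have hnej : (s j).Nonempty := hpleg.1 j hj
    have h1 : nth (s j) 1 ≤ y := nth_one_le _ hy'
    have h2 : nth (s 0) 1 ≤ nth (s j) 1 := by
      rcases Nat.eq_zero_or_pos j with rfl | hjpos
      · exact le_rfl
      · refine le_of_lt (hpleg.2.1 0 j hjpos hj 1 le_rfl ?_)
        have := Finset.card_pos.mpr hne0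
        have := Finset.card_pos.mpr hnej
        omega
    have hyge : ℓ n ≤ y := by omega
    have hrn : n ≤ r := by
      by_contra hc
      have := hℓmono (show r < n by omega)
      omega
    rw [← hr]
    exact hSdown n r hrn (hℓS r)
  set DeepOK : ℕ → Prop := fun m => ∀ n, ∃ s : ℕ → Finset ℕ,
    (∀ j < m, s j ∈ restrict F ℓ) ∧ IsPlegma m s ∧ ℓ n ≤ nth (s 0) 1 with hDeepOK
  have hcombsup : ∀ (a : ℕ → ℝ) (m : ℕ), ∀ i ∈ (comb a m).support, i < m := by
    intro a m i hi
    by_contra hc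
    rw [Finsupp.mem_support_iff] at hi
    exact hi (by rw [comb_apply, if_neg hc])
  have hcbound : ∀ (a : ℕ → ℝ), (∀ j, |a j| ≤ 1) → ∀ (m : ℕ) (j : ℕ),
      |(comb a m) j| ≤ 1 := by
    intro a ha m j
    rw [comb_apply]
    split
    · exact ha j
    · simp
  have hcombfn : ∀ (a : ℕ → ℝ) (m : ℕ) (s' : ℕ → Finset ℕ),
      val k x m (fun j => (comb a m) j) s' = val k x m a s' := by
    intro a m s'
    unfold val
    congr 1
    apply Finset.sum_congr rfl
    intro j hj
    show (comb a m) j • x (j % k) (s' j) = a j • x (j % k) (s' j)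
    rw [comb_apply, if_pos (Finset.mem_range.mp hj)]
  -- truncation of values to the support
  have htrunc : ∀ (v : ℕ →₀ ℝ) (m m' : ℕ), m ≤ m' → (∀ i ∈ v.support, i < m) →
      ∀ s' : ℕ → Finset ℕ,
        val k x m' (fun j => v j) s' = val k x m (fun j => v j) s' := by
    intro v m m' hmm' hsup s'
    unfold val
    congr 1
    refine (Finset.sum_subset (by intro i hi; rw [Finset.mem_range] at *; omega) ?_).symm
    intro j _ hj2
    have hv0 : v j = 0 := by
      by_contra hc
      exact hj2 (Finset.mem_range.mpr (hsup j (Finsupp.mem_support_iff.mpr hc)))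
    show (v j : ℝ) • x (j % k) (s' j) = 0
    rw [hv0, zero_smul]
  -- scaling facts
  have hscale : ∀ v : ℕ →₀ ℝ, ∃ c : ℝ, 0 < c ∧ (∀ j, |v j / c| ≤ 1) ∧
      (fun j : ℕ => (v j : ℝ)) = (fun j => c * (v j / c)) := by
    intro v
    set c : ℝ := 1 + ∑ i ∈ v.support, |v i| with hc
    have hsum0 : (0:ℝ) ≤ ∑ i ∈ v.support, |v i| :=
      Finset.sum_nonneg (fun i _ => abs_nonneg _)
    have hcpos : 0 < c := by rw [hc]; linarith
    refine ⟨c, hcpos, ?_, ?_⟩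
    · intro j
      rw [abs_div, div_le_one (by rwa [abs_of_pos hcpos])]
      rw [abs_of_pos hcpos]
      by_cases hj : j ∈ v.support
      · have := Finset.single_le_sum (f := fun i => |v i|) (fun i _ => abs_nonneg _) hj
        linarith
      · rw [Finsupp.notMem_support_iff.mp hj]
        simp
        linarith
    · funext j
      field_simp
  by_cases hall : ∀ m, DeepOK m
  · -- Case A: witnesses of every length
    have hwit : ∀ r : ℕ, ∃ s : ℕ → Finset ℕ, (∀ j < r+1, s j ∈ restrict F ℓ) ∧
        IsPlegma (r+1) s ∧ ℓ (r+1) ≤ nth (s 0) 1 := fun r => hall (r+1) (r+1)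
    choose T hT1 hT2 hT3 using hwit
    have hTmem : ∀ m n r, 1 ≤ m → m ≤ n → n ≤ r → TupIn F m (S n) (T r) := by
      intro m n r hm hmn hnr
      apply hdeep n m (T r) hm (fun j hj => hT1 r j (by omega))
        (isPlegma_mono (by omega) (hT2 r))
      calc ℓ n ≤ ℓ (r+1) := hℓmono.monotone (by omega)
        _ ≤ nth (T r 0) 1 := hT3 r
    have hVcauchy : ∀ v : ℕ →₀ ℝ,
        CauchySeq (fun r => val k x (r+1) (fun j => v j) (T r)) := by
      intro v
      rw [Metric.cauchySeq_iff]
      intro ε hε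
      obtain ⟨c, hcpos, hvc, hveq⟩ := hscale v
      set m : ℕ := (v.support.sup id) + 1 with hmdef
      have hm1 : 1 ≤ m := by omega
      have hsupm : ∀ i ∈ v.support, i < m := by
        intro i hi
        have h5 : i ≤ v.support.sup id := Finset.le_sup (f := id) hi
        omega
      obtain ⟨N0, hN0⟩ := exists_nat_gt (3*c/ε)
      set N := max m N0 with hNdef
      have hNbound : 3*c/((N:ℝ)+1) < ε := by
        rw [div_lt_iff₀ (by positivity)]
        have h1 : (3*c)/ε < (N:ℝ)+1 := by
          have : (N0:ℝ) ≤ N := by exact_mod_cast le_max_right m N0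
          linarith
        calc 3*c = ((3*c)/ε) * ε := by field_simp
          _ < ((N:ℝ)+1) * ε := by
              apply mul_lt_mul_of_pos_right h1 hε
          _ = ε * ((N:ℝ)+1) := by ring
      refine ⟨N, ?_⟩
      intro r hr r' hr'
      rw [Real.dist_eq]
      have hset : ∀ rr : ℕ, N ≤ rr →
          val k x (rr+1) (fun j => v j) (T rr) = c * val k x m (fun j => v j / c) (T rr) := by
        intro rr hrr
        rw [htrunc v m (rr+1) (by omega) hsupm (T rr)]
        conv_lhs => rw [hveq]
        rw [val_smul, abs_of_pos hcpos]
      rw [hset r hr, hset r' hr']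
      have hd := hkey N m hm1 (by omega) (fun j => v j / c) hvc (T r) (T r')
        (hTmem m N r hm1 (by omega) hr) (hTmem m N r' hm1 (by omega) hr')
      calc |c * val k x m (fun j => v j / c) (T r) - c * val k x m (fun j => v j / c) (T r')|
          = c * |val k x m (fun j => v j / c) (T r) - val k x m (fun j => v j / c) (T r')| := by
            rw [← mul_sub, abs_mul, abs_of_pos hcpos]
        _ ≤ c * (3/((N:ℝ)+1)) := by
            apply mul_le_mul_of_nonneg_left hd (le_of_lt hcpos)
        _ = 3*c/((N:ℝ)+1) := by ring
        _ < ε := hNbound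
    obtain ⟨ρ, hρ⟩ := seminorm_of_limits k x (fun r => r+1) T hVcauchy
    refine ⟨ρ, fun n => 4/((n:ℝ)+1), ⟨fun n => by positivity, tendsto_c_div 4⟩, ?_⟩
    intro m n hm hmn a ha s hcomps hpleg hdepth
    show |val k x m a s - ρ (comb a m)| ≤ 4/((n:ℝ)+1)
    have hsTup : TupIn F m (S n) s := hdeep n m s hm hcomps hpleg hdepth
    have hbound : ∀ r, n ≤ r →
        |val k x m a s - val k x (r+1) (fun j => (comb a m) j) (T r)| ≤ 3/((n:ℝ)+1) := by
      intro r hnr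
      rw [htrunc (comb a m) m (r+1) (by omega) (hcombsup a m) (T r), hcombfn a m (T r)]
      exact hkey n m hm hmn a ha s (T r) hsTup (hTmem m n r hm hmn hnr)
    have hlim2 : Filter.Tendsto
        (fun r => |val k x m a s - val k x (r+1) (fun j => (comb a m) j) (T r)|)
        Filter.atTop (nhds |val k x m a s - ρ (comb a m)|) :=
      (tendsto_const_nhds.sub (hρ (comb a m))).abs
    have hfinal := le_of_tendsto hlim2 (Filter.eventually_atTop.mpr ⟨n, hbound⟩)
    have h4 : (0:ℝ) < (n:ℝ)+1 := by positivity
    have : 3/((n:ℝ)+1) ≤ 4/((n:ℝ)+1) := by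
      gcongr
      norm_num
    linarith
  · -- Case B
    have hex : ∃ m, ¬ DeepOK m := not_forall.mp hall
    have hD0 : DeepOK 0 := by
      intro n
      refine ⟨fun _ => {ℓ n}, ?_, ?_, ?_⟩
      · intro j hj; exact absurd hj (Nat.not_lt_zero j)
      · exact ⟨fun i hi => absurd hi (Nat.not_lt_zero i),
          fun i j hij hj => absurd hj (Nat.not_lt_zero j),
          fun i hi => absurd hi (Nat.not_lt_zero i)⟩
      · rw [nth_singleton]
    have hm0pos : 1 ≤ Nat.find hex := by
      rcases Nat.eq_zero_or_pos (Nat.find hex) with h0 | hpos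
      · exact absurd hD0 (h0 ▸ Nat.find_spec hex)
      · exact hpos
    set mstar := Nat.find hex - 1 with hmstar
    have hdeepstar : DeepOK mstar := by
      by_contra hc
      exact Nat.find_min hex (by omega) hc
    have hnd : ¬ DeepOK (Nat.find hex) := Nat.find_spec hex
    obtain ⟨n₀, hn₀⟩ : ∃ n₀ : ℕ, ∀ s : ℕ → Finset ℕ,
        ¬((∀ j < Nat.find hex, s j ∈ restrict F ℓ) ∧ IsPlegma (Nat.find hex) s ∧
          ℓ n₀ ≤ nth (s 0) 1) := by
      by_contra hc
      push_neg at hc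
      exact hnd (fun n => hc n)
    choose T hT1 hT2 hT3 using hdeepstar
    have hTmem : ∀ m n r, 1 ≤ m → m ≤ mstar → m ≤ n → n ≤ r → TupIn F m (S n) (T r) := by
      intro m n r hm hms hmn hnr
      apply hdeep n m (T r) hm (fun j hj => hT1 r j (by omega))
        (isPlegma_mono hms (hT2 r))
      calc ℓ n ≤ ℓ r := hℓmono.monotone hnr
        _ ≤ nth (T r 0) 1 := hT3 r
    have hVcauchy : ∀ v : ℕ →₀ ℝ,
        CauchySeq (fun r => val k x mstar (fun j => v j) (T r)) := by
      intro v
      rcases Nat.eq_zero_or_pos mstar with h0 | hms1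
      · have hzero : (fun r => val k x mstar (fun j => v j) (T r)) = fun _ => (0:ℝ) := by
          funext r
          rw [h0]
          unfold val
          simp
        rw [hzero]
        exact cauchySeq_const 0
      · rw [Metric.cauchySeq_iff]
        intro ε hε
        obtain ⟨c, hcpos, hvc, hveq⟩ := hscale v
        obtain ⟨N0, hN0⟩ := exists_nat_gt (3*c/ε)
        set N := max mstar N0 with hNdef
        have hNbound : 3*c/((N:ℝ)+1) < ε := by
          rw [div_lt_iff₀ (by positivity)]
          have h1 : (3*c)/ε < (N:ℝ)+1 := by
            have : (N0:ℝ) ≤ N := by exact_mod_cast le_max_right mstar N0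
            linarith
          calc 3*c = ((3*c)/ε) * ε := by field_simp
            _ < ((N:ℝ)+1) * ε := mul_lt_mul_of_pos_right h1 hε
            _ = ε * ((N:ℝ)+1) := by ring
        refine ⟨N, ?_⟩
        intro r hr r' hr'
        rw [Real.dist_eq]
        have hset : ∀ rr : ℕ,
            val k x mstar (fun j => v j) (T rr)
              = c * val k x mstar (fun j => v j / c) (T rr) := by
          intro rr
          conv_lhs => rw [hveq]
          rw [val_smul, abs_of_pos hcpos]
        rw [hset r, hset r']
        have hd := hkey N mstar hms1 (by omega) (fun j => v j / c) hvc (T r) (T r')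
          (hTmem mstar N r hms1 le_rfl (by omega) hr)
          (hTmem mstar N r' hms1 le_rfl (by omega) hr')
        calc |c * val k x mstar (fun j => v j / c) (T r)
              - c * val k x mstar (fun j => v j / c) (T r')|
            = c * |val k x mstar (fun j => v j / c) (T r)
              - val k x mstar (fun j => v j / c) (T r')| := by
              rw [← mul_sub, abs_mul, abs_of_pos hcpos]
          _ ≤ c * (3/((N:ℝ)+1)) := mul_le_mul_of_nonneg_left hd (le_of_lt hcpos)
          _ = 3*c/((N:ℝ)+1) := by ring
          _ < ε := hNbound
    obtain ⟨ρ, hρ⟩ := seminorm_of_limits k x (fun _ => mstar) T hVcauchy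
    refine ⟨ρ, fun n => if n < n₀ then ((n:ℝ) + (mstar:ℝ))*Cx + 7 else 4/((n:ℝ)+1),
      ⟨?_, ?_⟩, ?_⟩
    · intro n
      show (0:ℝ) < if n < n₀ then ((n:ℝ) + (mstar:ℝ))*Cx + 7 else 4/((n:ℝ)+1)
      by_cases h : n < n₀
      · rw [if_pos h]
        have h3 : (0:ℝ) ≤ ((n:ℝ) + (mstar:ℝ))*Cx := by positivity
        linarith
      · rw [if_neg h]; positivity
    · apply Filter.Tendsto.congr' ?_ (tendsto_c_div 4)
      filter_upwards [Filter.eventually_ge_atTop n₀] with n hn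
      show (4:ℝ)/((n:ℝ)+1) = if n < n₀ then ((n:ℝ) + (mstar:ℝ))*Cx + 7 else 4/((n:ℝ)+1)
      rw [if_neg (by omega)]
    · intro m n hm hmn a ha s hcomps hpleg hdepth
      show |val k x m a s - ρ (comb a m)| ≤
        if n < n₀ then ((n:ℝ) + (mstar:ℝ))*Cx + 7 else 4/((n:ℝ)+1)
      have hsTup : TupIn F m (S n) s := hdeep n m s hm hcomps hpleg hdepth
      rcases le_or_gt m mstar with hmle | hmgt
      · have hgood : |val k x m a s - ρ (comb a m)| ≤ 3/((n:ℝ)+1) := by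
          have hbound : ∀ r, n ≤ r →
              |val k x m a s - val k x mstar (fun j => (comb a m) j) (T r)|
                ≤ 3/((n:ℝ)+1) := by
            intro r hnr
            rw [htrunc (comb a m) m mstar hmle (hcombsup a m) (T r), hcombfn a m (T r)]
            exact hkey n m hm hmn a ha s (T r) hsTup (hTmem m n r hm hmle hmn hnr)
          have hlim2 : Filter.Tendsto
              (fun r => |val k x m a s - val k x mstar (fun j => (comb a m) j) (T r)|)
              Filter.atTop (nhds |val k x m a s - ρ (comb a m)|) :=
            (tendsto_const_nhds.sub (hρ (comb a m))).abs
          exact le_of_tendsto hlim2 (Filter.eventually_atTop.mpr ⟨n, hbound⟩)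
        by_cases h : n < n₀
        · rw [if_pos h]
          have h1 : (0:ℝ) < (n:ℝ)+1 := by positivity
          have h2 : 3/((n:ℝ)+1) ≤ 3 := by
            rw [div_le_iff₀ h1]; nlinarith
          have h3 : (0:ℝ) ≤ ((n:ℝ) + (mstar:ℝ))*Cx := by positivity
          linarith
        · rw [if_neg h]
          have h5 : 3/((n:ℝ)+1) ≤ 4/((n:ℝ)+1) := by gcongr; norm_num
          linarith
      · have hnlt : n < n₀ := by
          by_contra hc
          apply hn₀ s
          refine ⟨fun j hj => hcomps j (by omega), isPlegma_mono (by omega) hpleg, ?_⟩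
          calc ℓ n₀ ≤ ℓ n := hℓmono.monotone (by omega)
            _ ≤ nth (s 0) 1 := hdepth
        rw [if_pos hnlt]
        have hvals : val k x m a s ≤ (m:ℝ)*Cx := val_le hx m ha s
        have hρ0 : 0 ≤ ρ (comb a m) :=
          ge_of_tendsto' (hρ (comb a m)) (fun r => val_nonneg _ _ _ _ _)
        have hρub : ρ (comb a m) ≤ (mstar:ℝ)*Cx := by
          apply le_of_tendsto' (hρ (comb a m))
          intro r
          exact val_le hx mstar (hcbound a ha m) (T r)
        have hmn' : (m:ℝ) ≤ (n:ℝ) := by exact_mod_cast hmn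
        have h0 : 0 ≤ val k x m a s := val_nonneg _ _ _ _ _
        have hmCx : (m:ℝ)*Cx ≤ (n:ℝ)*Cx := mul_le_mul_of_nonneg_right hmn' hCx
        have hdist : ((n:ℝ)+(mstar:ℝ))*Cx = (n:ℝ)*Cx + (mstar:ℝ)*Cx := by ring
        have hms0 : (0:ℝ) ≤ (mstar:ℝ)*Cx := by positivity
        have hn0 : (0:ℝ) ≤ (n:ℝ)*Cx := by positivity
        rw [abs_le]
        constructor
        · linarith
        · linarith
end
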